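/- arXiv:2309.06437 — 4 statements merged into one kernel-verified Lean document; each statement's English description precedes it below -/
import Mathlib

section
/- Let d ≥ 1, let Λ ⊂ ℤ^d be finite, let ρ : ℤ^{d+1} → {−1,1} be a configuration with no overhangs, and let η : E(ℤ^{d+1}) → [0,∞) be a coupling field that is constant on E^⊥(ℤ^{d+1}). Then for each interfacial configuration σ ∈ Ω^{Λ×ℤ,ρ} there exists a configuration σ' ∈ Ω^{Λ×ℤ,ρ} with no overhangs such that H^η(σ') ≤ H^η(σ) (σ and σ' each differ from ρ, hence from each other, in finitely many points, so the energy difference is defined), and such that whenever x ∈ ℤ^{d+1} satisfies σ'_x = −1 and σ'_{x+e_{d+1}} = 1, also σ_x = −1 and σ_{x+e_{d+1}} = 1. -/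
open MeasureTheory ProbabilityTheory
open scoped ENNReal NNReal

namespace DF

/-- The base lattice `ℤ^d`. -/
abbrev Base (d : ℕ) := Fin d → ℤ

/-- The lattice `ℤ^D` with `D = d+1`, written as pairs `(v, k)`. -/
abbrev V (d : ℕ) := Base d × ℤ

/-- ℓ¹ distance on the base lattice. -/
def dist1 {d : ℕ} (u v : Base d) : ℤ := ∑ i, |u i - v i|

/-- Nearest-neighbour adjacency on the base lattice. -/
def baseAdj {d : ℕ} (u v : Base d) : Prop := dist1 u v = 1

/-- ℓ¹ distance on `ℤ^{d+1}`. -/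
def vdist {d : ℕ} (x y : V d) : ℤ := dist1 x.1 y.1 + |x.2 - y.2|

/-- Nearest-neighbour adjacency on `ℤ^{d+1}`. -/
def vAdj {d : ℕ} (x y : V d) : Prop := vdist x y = 1

/-- Edges of `ℤ^{d+1}`: unordered pairs of adjacent points. -/
def IsEdge {d : ℕ} (e : Sym2 (V d)) : Prop := ∃ x y : V d, vAdj x y ∧ e = s(x, y)

/-- Parallel edges: those in the direction of the last coordinate. -/
def IsParallel {d : ℕ} (e : Sym2 (V d)) : Prop :=
  ∃ (v : Base d) (k : ℤ), e = s((v, k), (v, k + 1))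

/-- Perpendicular edges. -/
def IsPerp {d : ℕ} (e : Sym2 (V d)) : Prop := IsEdge e ∧ ¬ IsParallel e

/-- The product `σ_x σ_y` over an unordered pair `{x,y}`. -/
def pairProd {d : ℕ} (σ : V d → ℤ) : Sym2 (V d) → ℤ :=
  Sym2.lift ⟨fun x y => σ x * σ y, fun _ _ => mul_comm _ _⟩

/-- A spin configuration takes values in `{-1, 1}`. -/
def IsConfig {d : ℕ} (σ : V d → ℤ) : Prop := ∀ x, σ x = 1 ∨ σ x = -1

/-- The energy difference `H^η(σ) − H^η(σ')`, a finite sum when `σ, σ'`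
differ in finitely many points. -/
noncomputable def energyDiff {d : ℕ} (η : Sym2 (V d) → ℝ) (σ σ' : V d → ℤ) : ℝ :=
  -∑ᶠ e ∈ {e : Sym2 (V d) | IsEdge e}, η e * ((pairProd σ e - pairProd σ' e : ℤ) : ℝ)

/-- `σ` is a ground configuration for the coupling field `η`. -/
def IsGround {d : ℕ} (η : Sym2 (V d) → ℝ) (σ : V d → ℤ) : Prop :=
  IsConfig σ ∧ ∀ σ' : V d → ℤ, IsConfig σ' → {x | σ' x ≠ σ x}.Finite →
    energyDiff η σ σ' ≤ 0

/-- `σ` is a ground configuration in `Ω^{Δ,ρ}` for the coupling field `η`. -/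
def IsGroundIn {d : ℕ} (η : Sym2 (V d) → ℝ) (Δ : Set (V d)) (ρ σ : V d → ℤ) : Prop :=
  IsConfig σ ∧ (∀ x ∉ Δ, σ x = ρ x) ∧
    ∀ σ' : V d → ℤ, IsConfig σ' → (∀ x ∉ Δ, σ' x = ρ x) → {x | σ' x ≠ σ x}.Finite →
      energyDiff η σ σ' ≤ 0

/-- Dobrushin boundary conditions. -/
def rhoDob {d : ℕ} (x : V d) : ℤ := if 1 ≤ x.2 then 1 else -1

/-- `diam` of a measure on ℝ: the least length of a compact interval of full
measure (`∞` if none exists). -/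
noncomputable def mdiam (ν : Measure ℝ) : ℝ≥0∞ :=
  sInf {w | ∃ a b : ℝ, a ≤ b ∧ ν (Set.Icc a b) = 1 ∧ w = ENNReal.ofReal (b - a)}

/-- `lip` of a measure on ℝ: the least Lipschitz constant of a nonnegative Lipschitz
map pushing the standard Gaussian forward to `ν` (`∞` if none exists). -/
noncomputable def mlip (ν : Measure ℝ) : ℝ≥0∞ :=
  sInf {w | ∃ (f : ℝ → ℝ) (K : ℝ≥0), (∀ x, 0 ≤ f x) ∧ LipschitzWith K f ∧
    (gaussianReal 0 1).map f = ν ∧ w = (K : ℝ≥0∞)}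

/-- The width of a measure on ℝ. -/
noncomputable def mwid (ν : Measure ℝ) : ℝ≥0∞ := min (mdiam ν) (mlip ν)

/-- The smallest point of the support: `max {α : ν([α,∞)) = 1}`. -/
noncomputable def minSupp (ν : Measure ℝ) : ℝ := sSup {a : ℝ | ν (Set.Ici a) = 1}

/-- The index type of edges of `ℤ^{d+1}`. -/
def EdgeT (d : ℕ) := {e : Sym2 (V d) // IsEdge e}

/-- The standard assumptions (⋆) on the pair of disorder distributions. -/
def StdAssump (νpar νperp : Measure ℝ) : Prop :=
  0 < minSupp νpar ∧ mwid νpar ≠ ⊤ ∧ (∀ x : ℝ, νpar {x} = 0) ∧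
    0 < minSupp νperp ∧ mwid νperp ≠ ⊤

/-- The quantity `κ(ν∥, ν⊥, d)`. -/
noncomputable def kappa (d : ℕ) (νpar νperp : Measure ℝ) : ℝ :=
  (1 / (minSupp νpar * minSupp νperp) + 1 / (d * (minSupp νperp) ^ 2)) *
      (mwid νpar).toReal ^ 2
    + (1 / (minSupp νperp) ^ 2) * (mwid νperp).toReal ^ 2

end DF

namespace DF

/-- A configuration is interfacial if every column is eventually `-1` below and
eventually `1` above. -/
def Interfacial {d : ℕ} (σ : V d → ℤ) : Prop :=
  ∀ v : Base d, (∃ K : ℤ, ∀ k ≤ K, σ (v, k) = -1) ∧ (∃ K : ℤ, ∀ k, K ≤ k → σ (v, k) = 1)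

/-- A configuration has no overhangs if it is interfacial and each column has a
unique sign change. -/
def NoOverhangs {d : ℕ} (σ : V d → ℤ) : Prop :=
  Interfacial σ ∧ ∀ v : Base d, ∃! k : ℤ, σ (v, k) = -σ (v, k + 1)

end DF

open DF

namespace NOV
open DF Finset

variable {d : ℕ}

/-- The `i`-th unit vector in the base lattice. -/
def unit (d : ℕ) (i : Fin d) : Base d := fun j => if j = i then 1 else 0

/-- Perpendicular shift of a vertex. -/
def psh (x : V d) (i : Fin d) : V d := (x.1 + unit d i, x.2)

lemma dist1_self (u : Base d) : dist1 u u = 0 := by simp [dist1]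

lemma dist1_eq_zero {u w : Base d} (h : dist1 u w = 0) : u = w := by
  have h0 : ∀ j ∈ Finset.univ (α := Fin d), (0:ℤ) ≤ |u j - w j| := fun j _ => abs_nonneg _
  funext j
  have := (Finset.sum_eq_zero_iff_of_nonneg h0).1 h j (Finset.mem_univ j)
  have := abs_eq_zero.1 this
  linarith

lemma dist1_unit (u : Base d) (i : Fin d) : dist1 u (u + unit d i) = 1 := by
  unfold dist1
  have : ∀ j : Fin d, |u j - (u + unit d i) j| = if j = i then 1 else 0 := by
    intro j
    by_cases h : j = i <;> simp [h, unit, Pi.add_apply]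
  rw [Finset.sum_congr rfl (fun j _ => this j)]
  simp

lemma vAdj_par (v : Base d) (k : ℤ) : vAdj (v, k) (v, k + 1) := by
  unfold vAdj vdist
  simp [dist1_self]

lemma vAdj_perp (x : V d) (i : Fin d) : vAdj x (psh x i) := by
  unfold vAdj vdist psh
  simp [dist1_unit]

lemma dist1_one {u w : Base d} (h : dist1 u w = 1) :
    ∃ i, w = u + unit d i ∨ u = w + unit d i := by
  classical
  have hne : ∃ i, u i ≠ w i := by
    by_contra hc
    push_neg at hc
    have : u = w := funext hc
    rw [this, dist1_self] at h; exact absurd h (by norm_num)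
  obtain ⟨i, hi⟩ := hne
  have h1 : (1:ℤ) ≤ |u i - w i| := Int.one_le_abs (sub_ne_zero.2 hi)
  have hsplit : ∑ j ∈ Finset.univ.erase i, |u j - w j| + |u i - w i| = 1 := by
    rw [Finset.sum_erase_add Finset.univ _ (Finset.mem_univ i)]; exact h
  have hrest0 : ∑ j ∈ Finset.univ.erase i, |u j - w j| = 0 := by
    have hnn : (0:ℤ) ≤ ∑ j ∈ Finset.univ.erase i, |u j - w j| :=
      Finset.sum_nonneg fun j _ => abs_nonneg _
    omega
  have habs1 : |u i - w i| = 1 := by omega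
  have hrest : ∀ j, j ≠ i → u j = w j := by
    intro j hj
    have := (Finset.sum_eq_zero_iff_of_nonneg
      (fun j _ => abs_nonneg (u j - w j))).1 hrest0 j (Finset.mem_erase.2 ⟨hj, Finset.mem_univ j⟩)
    have := abs_eq_zero.1 this; linarith
  rcases abs_eq (by norm_num : (0:ℤ) ≤ 1) |>.1 habs1 with hc | hc
  · -- u i - w i = 1, so u = w + unit i
    refine ⟨i, Or.inr ?_⟩
    funext j
    by_cases hj : j = i
    · subst hj; simp [unit, Pi.add_apply]; omega
    · simp [unit, Pi.add_apply, hj, hrest j hj]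
  · refine ⟨i, Or.inl ?_⟩
    funext j
    by_cases hj : j = i
    · subst hj; simp [unit, Pi.add_apply]; omega
    · simp [unit, Pi.add_apply, hj, hrest j hj]

/-- decomposition of an adjacency into parallel / perpendicular shape -/
lemma adj_shape {x y : V d} (h : vAdj x y) :
    (x.1 = y.1 ∧ (y.2 = x.2 + 1 ∨ x.2 = y.2 + 1)) ∨
      (x.2 = y.2 ∧ (∃ i, y = psh x i ∨ x = psh y i)) := by
  unfold vAdj vdist at h
  have hd1 : (0:ℤ) ≤ dist1 x.1 y.1 := Finset.sum_nonneg fun j _ => abs_nonneg _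
  have habs : (0:ℤ) ≤ |x.2 - y.2| := abs_nonneg _
  rcases (by omega : dist1 x.1 y.1 = 0 ∧ |x.2 - y.2| = 1 ∨ dist1 x.1 y.1 = 1 ∧ |x.2 - y.2| = 0)
    with ⟨h0, h1⟩ | ⟨h1, h0⟩
  · left
    refine ⟨dist1_eq_zero h0, ?_⟩
    rcases (abs_eq (by norm_num : (0:ℤ) ≤ 1)).1 h1 with hc | hc
    · right; omega
    · left; omega
  · right
    have h2 : x.2 = y.2 := by have := abs_eq_zero.1 h0; omega
    refine ⟨h2, ?_⟩
    obtain ⟨i, hi | hi⟩ := dist1_one h1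
    · exact ⟨i, Or.inl (by unfold psh; rw [← hi, h2])⟩
    · exact ⟨i, Or.inr (by unfold psh; rw [← hi, ← h2])⟩

end NOV
namespace NOV
open DF Finset

variable {d : ℕ}

/-- In a ±1 column which is −1 low and +1 high, there is an upward sign change above any −1. -/
lemma exists_up_above (c : ℤ → ℤ) (hcfg : ∀ k, c k = 1 ∨ c k = -1) (K₂ : ℤ)
    (h2 : ∀ k, K₂ ≤ k → c k = 1) {j : ℤ} (hj : c j = -1) :
    ∃ s, j ≤ s ∧ c s = -1 ∧ c (s + 1) = 1 := by
  classical
  have hjK : j < K₂ := by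
    by_contra hc
    push_neg at hc
    have := h2 j hc
    omega
  set T : Finset ℤ := (Finset.Icc j K₂).filter (fun k => c k = -1) with hT
  have hjT : j ∈ T := by
    simp [hT, Finset.mem_filter, Finset.mem_Icc, hj]
    omega
  have hTne : T.Nonempty := ⟨j, hjT⟩
  set s := T.max' hTne with hs
  have hsT : s ∈ T := T.max'_mem hTne
  have hsc : c s = -1 := (Finset.mem_filter.1 hsT).2
  have hsIcc := Finset.mem_Icc.1 (Finset.mem_filter.1 hsT).1
  refine ⟨s, hsIcc.1, hsc, ?_⟩
  rcases hcfg (s + 1) with h | h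
  · exact h
  · exfalso
    have hsK : s + 1 ≤ K₂ := by
      by_contra hc
      push_neg at hc
      have hK : K₂ ≤ s := by omega
      have := h2 s hK
      omega
    have : s + 1 ∈ T := by
      simp [hT, Finset.mem_filter, Finset.mem_Icc, h]
      omega
    have := T.le_max' _ this
    omega

/-- Between an up-change and a −1 above it there is a downward change. -/
lemma exists_down_between (c : ℤ → ℤ) (hcfg : ∀ k, c k = 1 ∨ c k = -1)
    {k₁ k₂ : ℤ} (h12 : k₁ < k₂) (hu1 : c (k₁ + 1) = 1) (hu2 : c k₂ = -1) :
    ∃ m, c m = 1 ∧ c (m + 1) = -1 := by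
  classical
  set T : Finset ℤ := (Finset.Icc (k₁ + 1) k₂).filter (fun k => c k = 1) with hT
  have h1T : k₁ + 1 ∈ T := by
    simp [hT, Finset.mem_filter, Finset.mem_Icc, hu1]
    omega
  have hTne : T.Nonempty := ⟨_, h1T⟩
  set m := T.max' hTne with hm
  have hmT : m ∈ T := T.max'_mem hTne
  have hmc : c m = 1 := (Finset.mem_filter.1 hmT).2
  have hmIcc := Finset.mem_Icc.1 (Finset.mem_filter.1 hmT).1
  refine ⟨m, hmc, ?_⟩
  rcases hcfg (m + 1) with h | h
  · exfalso
    have hmk : m < k₂ := by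
      rcases lt_or_eq_of_le hmIcc.2 with hlt | heq
      · exact hlt
      · rw [heq] at hmc; omega
    have : m + 1 ∈ T := by
      simp [hT, Finset.mem_filter, Finset.mem_Icc, h]
      omega
    have := T.le_max' _ this
    omega
  · exact h

/-- A column with no downward change and interfacial bounds has a unique sign change. -/
lemma unique_change (c : ℤ → ℤ) (hcfg : ∀ k, c k = 1 ∨ c k = -1)
    (K₁ K₂ : ℤ) (h1 : ∀ k ≤ K₁, c k = -1) (h2 : ∀ k, K₂ ≤ k → c k = 1)
    (hnd : ∀ k, ¬(c k = 1 ∧ c (k + 1) = -1)) :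
    ∃! k : ℤ, c k = -c (k + 1) := by
  obtain ⟨s, _, hs1, hs2⟩ := exists_up_above c hcfg K₂ h2 (h1 K₁ le_rfl)
  have hup : ∀ k, c k = -c (k + 1) → c k = -1 ∧ c (k + 1) = 1 := by
    intro k hk
    rcases hcfg k with h | h
    · exfalso
      rcases hcfg (k + 1) with h' | h'
      · rw [h, h'] at hk; omega
      · exact hnd k ⟨h, h'⟩
    · rcases hcfg (k + 1) with h' | h'
      · exact ⟨h, h'⟩
      · rw [h, h'] at hk; omega
  refine ⟨s, by show c s = -c (s + 1); rw [hs1, hs2], ?_⟩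
  intro k hk
  obtain ⟨hk1, hk2⟩ := hup k hk
  by_contra hne
  rcases lt_or_gt_of_ne hne with hlt | hgt
  · obtain ⟨m, hm1, hm2⟩ := exists_down_between c hcfg hlt hk2 hs1
    exact hnd m ⟨hm1, hm2⟩
  · obtain ⟨m, hm1, hm2⟩ := exists_down_between c hcfg hgt hs2 hk1
    exact hnd m ⟨hm1, hm2⟩

end NOV
namespace NOV
open DF Finset

variable {d : ℕ}

/-- The finite box where configurations may be modified. -/
noncomputable def Dbox (Λ : Finset (Base d)) (a b : ℤ) : Finset (V d) := Λ ×ˢ Finset.Icc (a + 1) b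

/-- Window of base points for perpendicular edges in direction `i`. -/
noncomputable def ΛS (Λ : Finset (Base d)) (i : Fin d) : Finset (Base d) :=
  Λ ∪ Λ.image (fun w => w - unit d i)

/-- Window of vertices for perpendicular edges in direction `i`. -/
noncomputable def Wi (Λ : Finset (Base d)) (a b : ℤ) (i : Fin d) : Finset (V d) :=
  ΛS Λ i ×ˢ Finset.Icc (a + 1) b

/-- Disagreement indicator across the perpendicular edge at `x` in direction `i`. -/
noncomputable def dis (τ : V d → ℤ) (x : V d) (i : Fin d) : ℕ :=
  if τ x = τ (psh x i) then 0 else 1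

/-- Windowed perpendicular interface size. -/
noncomputable def Eperp (Λ : Finset (Base d)) (a b : ℤ) (τ : V d → ℤ) : ℕ :=
  ∑ i : Fin d, ∑ x ∈ Wi Λ a b i, dis τ x i

/-- Number of minus spins in the box. -/
noncomputable def vol (Λ : Finset (Base d)) (a b : ℤ) (τ : V d → ℤ) : ℕ :=
  ∑ x ∈ Dbox Λ a b, if τ x = -1 then 1 else 0

noncomputable def meas (Λ : Finset (Base d)) (a b : ℤ) (τ : V d → ℤ) : ℕ :=
  Eperp Λ a b τ * ((Dbox Λ a b).card + 1) + vol Λ a b τ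

lemma vol_le_card (Λ : Finset (Base d)) (a b : ℤ) (τ : V d → ℤ) :
    vol Λ a b τ ≤ (Dbox Λ a b).card := by
  unfold vol
  calc ∑ x ∈ Dbox Λ a b, (if τ x = -1 then 1 else 0)
      ≤ ∑ _x ∈ Dbox Λ a b, 1 := Finset.sum_le_sum (fun x _ => by split <;> omega)
    _ = (Dbox Λ a b).card := by simp

/-- The admissible class of configurations relative to `σ`. -/
def GoodCfg (Λ : Finset (Base d)) (a b : ℤ) (σ τ : V d → ℤ) : Prop :=
  IsConfig τ ∧ (∀ x : V d, x ∉ Dbox Λ a b → τ x = σ x) ∧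
    (∀ (v : Base d) (k : ℤ), τ (v, k) = -1 → τ (v, k + 1) = 1 →
      σ (v, k) = -1 ∧ σ (v, k + 1) = 1)

section Main

variable (Λ : Finset (Base d)) (a b : ℤ) (σ : V d → ℤ)

/-- Class members are −1 below the box on Λ-columns. -/
lemma good_low (H1 : ∀ v ∈ Λ, ∀ k ≤ a, σ (v, k) = -1)
    {τ : V d → ℤ} (hτ : GoodCfg Λ a b σ τ) {v : Base d} (hv : v ∈ Λ)
    {k : ℤ} (hk : k ≤ a) : τ (v, k) = -1 := by
  have : ((v, k) : V d) ∉ Dbox Λ a b := by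
    simp [Dbox, Finset.mem_product, Finset.mem_Icc]
    intro; omega
  rw [hτ.2.1 _ this]
  exact H1 v hv k hk

lemma good_high (H2 : ∀ v ∈ Λ, ∀ k : ℤ, b ≤ k → σ (v, k) = 1)
    {τ : V d → ℤ} (hτ : GoodCfg Λ a b σ τ) {v : Base d} (hv : v ∈ Λ)
    {k : ℤ} (hk : b < k) : τ (v, k) = 1 := by
  have : ((v, k) : V d) ∉ Dbox Λ a b := by
    simp [Dbox, Finset.mem_product, Finset.mem_Icc]
    intro; omega
  rw [hτ.2.1 _ this]
  exact H2 v hv k (le_of_lt hk)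

lemma good_out {τ : V d → ℤ} (hτ : GoodCfg Λ a b σ τ) {v : Base d} (hv : v ∉ Λ)
    (k : ℤ) : τ (v, k) = σ (v, k) := by
  apply hτ.2.1
  simp [Dbox, Finset.mem_product]
  intro h; exact absurd h hv

/-- The bottom cell of any downward change of a class member lies in the box,
    one row below the box top. -/
lemma down_in_box (H1 : ∀ v ∈ Λ, ∀ k ≤ a, σ (v, k) = -1)
    (H2 : ∀ v ∈ Λ, ∀ k : ℤ, b ≤ k → σ (v, k) = 1)
    (H3 : ∀ (v : Base d), v ∉ Λ → ∀ k : ℤ, ¬(σ (v, k) = 1 ∧ σ (v, k + 1) = -1))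
    {τ : V d → ℤ} (hτ : GoodCfg Λ a b σ τ) {v : Base d} {k : ℤ}
    (h1 : τ (v, k) = 1) (h2 : τ (v, k + 1) = -1) :
    v ∈ Λ ∧ a + 1 ≤ k ∧ k + 1 ≤ b := by
  have hvΛ : v ∈ Λ := by
    by_contra hv
    refine H3 v hv k ⟨?_, ?_⟩
    · rw [← good_out Λ a b σ hτ hv k]; exact h1
    · rw [← good_out Λ a b σ hτ hv (k+1)]; exact h2
  refine ⟨hvΛ, ?_, ?_⟩
  · by_contra hc
    push_neg at hc
    have := good_low Λ a b σ H1 hτ hvΛ (show k ≤ a by omega)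
    omega
  · by_contra hc
    push_neg at hc
    have := good_high Λ a b σ H2 hτ hvΛ (show b < k + 1 by omega)
    omega

end Main

end NOV
namespace NOV
open DF Finset

variable {d : ℕ}

/-- Flip the minus cells of `Y` at level `c` to plus. -/
noncomputable def flipZ (Y : Finset (Base d)) (c : ℤ) (τ : V d → ℤ) : V d → ℤ :=
  fun x => if x.1 ∈ Y ∧ x.2 = c then 1 else τ x

/-- Flip the plus cells of `Y` at level `c - 1` to minus. -/
noncomputable def flipW (Y : Finset (Base d)) (c : ℤ) (τ : V d → ℤ) : V d → ℤ :=
  fun x => if x.1 ∈ Y ∧ x.2 = c - 1 then -1 else τ x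

lemma flipZ_ne (Y : Finset (Base d)) (c : ℤ) (τ : V d → ℤ) {x : V d} (h : x.2 ≠ c) :
    flipZ Y c τ x = τ x := by simp [flipZ, h]

lemma flipW_ne (Y : Finset (Base d)) (c : ℤ) (τ : V d → ℤ) {x : V d} (h : x.2 ≠ c - 1) :
    flipW Y c τ x = τ x := by simp [flipW, h]

lemma sum_box_delta (A : Finset (Base d)) (lo hi c : ℤ) (hc : c ∈ Finset.Icc lo hi)
    (f g : V d → ℤ) (hfg : ∀ v k, k ≠ c → f (v, k) = g (v, k)) :
    ∑ x ∈ A ×ˢ Finset.Icc lo hi, f x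
      = (∑ x ∈ A ×ˢ Finset.Icc lo hi, g x) + ∑ v ∈ A, (f (v, c) - g (v, c)) := by
  rw [Finset.sum_product, Finset.sum_product, ← Finset.sum_add_distrib]
  refine Finset.sum_congr rfl ?_
  intro v _
  have h1 : f (v, c) + ∑ k ∈ (Finset.Icc lo hi).erase c, f (v, k)
      = ∑ k ∈ Finset.Icc lo hi, f (v, k) := Finset.add_sum_erase _ (fun k => f (v, k)) hc
  have h2 : g (v, c) + ∑ k ∈ (Finset.Icc lo hi).erase c, g (v, k)
      = ∑ k ∈ Finset.Icc lo hi, g (v, k) := Finset.add_sum_erase _ (fun k => g (v, k)) hc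
  have h3 : ∑ k ∈ (Finset.Icc lo hi).erase c, f (v, k)
      = ∑ k ∈ (Finset.Icc lo hi).erase c, g (v, k) := by
    refine Finset.sum_congr rfl ?_
    intro k hk
    exact hfg v k (Finset.ne_of_mem_erase hk)
  rw [← h1, ← h2, h3]
  ring

/-- The key pointwise inequality between the two flip moves. -/
lemma quad_ineq (τ : V d → ℤ) (hcfg : IsConfig τ) (Y : Finset (Base d)) (c : ℤ)
    (hY : ∀ u ∈ Y, τ (u, c) = -1 ∧ τ (u, c - 1) = 1)
    (hK : ∀ z, z ∉ Y → τ (z, c) = -1 → τ (z, c - 1) = -1)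
    (i : Fin d) (v : Base d) :
    ((dis (flipW Y c τ) (v, c - 1) i : ℤ) - dis τ (v, c - 1) i)
      ≤ -((dis (flipZ Y c τ) (v, c) i : ℤ) - dis τ (v, c) i) := by
  set q : Base d := v + unit d i with hq
  have hpsh1 : psh ((v, c - 1) : V d) i = (q, c - 1) := rfl
  have hpsh2 : psh ((v, c) : V d) i = (q, c) := rfl
  by_cases hv : v ∈ Y <;> by_cases hqY : q ∈ Y
  · -- both flipped
    obtain ⟨hv1, hv0⟩ := hY v hv
    obtain ⟨hq1, hq0⟩ := hY q hqY
    simp [dis, flipZ, flipW, hpsh1, hpsh2, hv, hqY, hv1, hv0, hq1, hq0]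
  · -- v flipped, q not
    obtain ⟨hv1, hv0⟩ := hY v hv
    rcases hcfg (q, c) with hB1 | hB1
    · -- B1 = 1
      rcases hcfg (q, c - 1) with hB0 | hB0 <;>
        simp [dis, flipZ, flipW, hpsh1, hpsh2, hv, hqY, hv1, hv0, hB1, hB0]
    · -- B1 = -1, then B0 = -1
      have hB0 := hK q hqY hB1
      simp [dis, flipZ, flipW, hpsh1, hpsh2, hv, hqY, hv1, hv0, hB1, hB0]
  · -- q flipped, v not
    obtain ⟨hq1, hq0⟩ := hY q hqY
    rcases hcfg (v, c) with hB1 | hB1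
    · rcases hcfg (v, c - 1) with hB0 | hB0 <;>
        simp [dis, flipZ, flipW, hpsh1, hpsh2, hv, hqY, hq1, hq0, hB1, hB0]
    · have hB0 := hK v hv hB1
      simp [dis, flipZ, flipW, hpsh1, hpsh2, hv, hqY, hq1, hq0, hB1, hB0]
  · -- neither flipped
    simp [dis, flipZ, flipW, hpsh1, hpsh2, hv, hqY]

end NOV
namespace NOV
open DF Finset

variable {d : ℕ}

lemma eperp_delta (Λ : Finset (Base d)) (a b : ℤ) (τ τ' : V d → ℤ) (c : ℤ)
    (hc : c ∈ Finset.Icc (a + 1) b) (hne : ∀ x : V d, x.2 ≠ c → τ' x = τ x) :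
    (Eperp Λ a b τ' : ℤ)
      = Eperp Λ a b τ + ∑ i : Fin d, ∑ v ∈ ΛS Λ i,
          ((dis τ' (v, c) i : ℤ) - dis τ (v, c) i) := by
  unfold Eperp
  push_cast
  rw [← Finset.sum_add_distrib]
  refine Finset.sum_congr rfl ?_
  intro i _
  have := sum_box_delta (ΛS Λ i) (a + 1) b c hc
    (fun x => (dis τ' x i : ℤ)) (fun x => (dis τ x i : ℤ))
    (fun v k hk => by
      show (dis τ' (v, k) i : ℤ) = dis τ (v, k) i
      unfold dis
      rw [show τ' (v, k) = τ (v, k) from hne (v, k) hk,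
        show τ' (psh (v, k) i) = τ (psh (v, k) i) from hne (psh (v, k) i) hk])
  exact this

/-- flipZ keeps the class. -/
lemma good_flipZ (Λ : Finset (Base d)) (a b : ℤ) (σ τ : V d → ℤ)
    (hτ : GoodCfg Λ a b σ τ) (Y : Finset (Base d)) (c : ℤ)
    (hY : ∀ u ∈ Y, τ (u, c) = -1 ∧ τ (u, c - 1) = 1)
    (hYbox : ∀ u ∈ Y, ((u, c) : V d) ∈ Dbox Λ a b) :
    GoodCfg Λ a b σ (flipZ Y c τ) := by
  refine ⟨?_, ?_, ?_⟩
  · intro x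
    unfold flipZ
    split
    · left; rfl
    · exact hτ.1 x
  · intro x hx
    unfold flipZ
    split
    · rename_i h
      exact absurd (by
        have : x = ((x.1, c) : V d) := by
          rw [← h.2]
        rw [this]
        exact hYbox _ h.1) hx
    · exact hτ.2.1 x hx
  · intro v k h1 h2
    by_cases hv : v ∈ Y
    · by_cases hk : k = c
      · exfalso
        rw [hk] at h1
        simp [flipZ, hv] at h1
      · by_cases hk1 : k + 1 = c
        · exfalso
          have hkc : k = c - 1 := by omega
          rw [flipZ_ne Y c τ (by simpa using hk)] at h1
          rw [hkc] at h1
          rw [(hY v hv).2] at h1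
          norm_num at h1
        · rw [flipZ_ne Y c τ (by simpa using hk)] at h1
          rw [flipZ_ne Y c τ (by simpa using hk1)] at h2
          exact hτ.2.2 v k h1 h2
    · have e1 : flipZ Y c τ (v, k) = τ (v, k) := by simp [flipZ, hv]
      have e2 : flipZ Y c τ (v, k + 1) = τ (v, k + 1) := by simp [flipZ, hv]
      rw [e1] at h1; rw [e2] at h2
      exact hτ.2.2 v k h1 h2

/-- flipW keeps the class. -/
lemma good_flipW (Λ : Finset (Base d)) (a b : ℤ) (σ τ : V d → ℤ)
    (hτ : GoodCfg Λ a b σ τ) (Y : Finset (Base d)) (c : ℤ)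
    (hY : ∀ u ∈ Y, τ (u, c) = -1 ∧ τ (u, c - 1) = 1)
    (hYbox : ∀ u ∈ Y, ((u, c - 1) : V d) ∈ Dbox Λ a b) :
    GoodCfg Λ a b σ (flipW Y c τ) := by
  refine ⟨?_, ?_, ?_⟩
  · intro x
    unfold flipW
    split
    · right; rfl
    · exact hτ.1 x
  · intro x hx
    unfold flipW
    split
    · rename_i h
      exact absurd (by
        have : x = ((x.1, c - 1) : V d) := by rw [← h.2]
        rw [this]
        exact hYbox _ h.1) hx
    · exact hτ.2.1 x hx
  · intro v k h1 h2
    by_cases hv : v ∈ Y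
    · by_cases hk1 : k + 1 = c - 1
      · exfalso
        rw [show ((v, k+1) : V d) = ((v, c-1) : V d) by rw [hk1]] at h2
        simp [flipW, hv] at h2
      · by_cases hk : k = c - 1
        · exfalso
          rw [flipW_ne Y c τ (by simpa using hk1)] at h2
          have : k + 1 = c := by omega
          rw [this] at h2
          rw [(hY v hv).1] at h2
          norm_num at h2
        · rw [flipW_ne Y c τ (by simpa using hk)] at h1
          rw [flipW_ne Y c τ (by simpa using hk1)] at h2
          exact hτ.2.2 v k h1 h2
    · have e1 : flipW Y c τ (v, k) = τ (v, k) := by simp [flipW, hv]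
      have e2 : flipW Y c τ (v, k + 1) = τ (v, k + 1) := by simp [flipW, hv]
      rw [e1] at h1; rw [e2] at h2
      exact hτ.2.2 v k h1 h2

end NOV
namespace NOV
open DF Finset

variable {d : ℕ}

/-- One descent step: if a class member has a downward change, there is a class member with
no larger perpendicular energy and strictly smaller measure. -/
lemma descent_step (Λ : Finset (Base d)) (a b : ℤ) (σ : V d → ℤ)
    (H1 : ∀ v ∈ Λ, ∀ k ≤ a, σ (v, k) = -1)
    (H2 : ∀ v ∈ Λ, ∀ k : ℤ, b ≤ k → σ (v, k) = 1)
    (H3 : ∀ (v : Base d), v ∉ Λ → ∀ k : ℤ, ¬(σ (v, k) = 1 ∧ σ (v, k + 1) = -1))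
    (τ : V d → ℤ) (hτ : GoodCfg Λ a b σ τ)
    (hdown : ∃ (v : Base d) (k : ℤ), τ (v, k) = 1 ∧ τ (v, k + 1) = -1) :
    ∃ τ', GoodCfg Λ a b σ τ' ∧ Eperp Λ a b τ' ≤ Eperp Λ a b τ ∧
      meas Λ a b τ' < meas Λ a b τ := by
  classical
  obtain ⟨v₀, k₀, hk1, hk2⟩ := hdown
  obtain ⟨hv₀Λ, hlo, hhi⟩ := down_in_box Λ a b σ H1 H2 H3 hτ hk1 hk2
  set c : ℤ := k₀ + 1 with hcdef
  have hτv₀c : τ (v₀, c) = -1 := hk2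
  have hτv₀c' : τ (v₀, c - 1) = 1 := by
    have : c - 1 = k₀ := by omega
    rw [this]; exact hk1
  have hcIcc : c ∈ Finset.Icc (a + 1) b := Finset.mem_Icc.2 ⟨by omega, by omega⟩
  have hc1Icc : c - 1 ∈ Finset.Icc (a + 1) b := Finset.mem_Icc.2 ⟨by omega, by omega⟩
  set Y : Finset (Base d) :=
    Λ.filter (fun u => τ (u, c) = -1 ∧ τ (u, c - 1) = 1) with hYdef
  have hv₀Y : v₀ ∈ Y := by
    rw [hYdef]; exact Finset.mem_filter.2 ⟨hv₀Λ, hτv₀c, hτv₀c'⟩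
  have hY : ∀ u ∈ Y, τ (u, c) = -1 ∧ τ (u, c - 1) = 1 := by
    intro u hu
    rw [hYdef] at hu
    exact (Finset.mem_filter.1 hu).2
  have hYΛ : ∀ u ∈ Y, u ∈ Λ := by
    intro u hu
    rw [hYdef] at hu
    exact (Finset.mem_filter.1 hu).1
  have hK : ∀ z, z ∉ Y → τ (z, c) = -1 → τ (z, c - 1) = -1 := by
    intro z hz h1
    by_cases hzΛ : z ∈ Λ
    · rcases hτ.1 (z, c - 1) with h | h
      · exfalso
        exact hz (by rw [hYdef]; exact Finset.mem_filter.2 ⟨hzΛ, h1, h⟩)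
      · exact h
    · have e1 : τ (z, c - 1) = σ (z, c - 1) := good_out Λ a b σ hτ hzΛ _
      have e2 : τ (z, c) = σ (z, c) := good_out Λ a b σ hτ hzΛ _
      rcases hτ.1 (z, c - 1) with h | h
      · exfalso
        refine H3 z hzΛ (c - 1) ⟨by rw [← e1]; exact h, ?_⟩
        have : c - 1 + 1 = c := by omega
        rw [this, ← e2]; exact h1
      · exact h
  have hYbox1 : ∀ u ∈ Y, ((u, c) : V d) ∈ Dbox Λ a b := by
    intro u hu
    unfold Dbox
    exact Finset.mem_product.2 ⟨hYΛ u hu, hcIcc⟩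
  have hYbox2 : ∀ u ∈ Y, ((u, c - 1) : V d) ∈ Dbox Λ a b := by
    intro u hu
    unfold Dbox
    exact Finset.mem_product.2 ⟨hYΛ u hu, hc1Icc⟩
  -- the two deltas
  set DZ : ℤ := ∑ i : Fin d, ∑ v ∈ ΛS Λ i,
    ((dis (flipZ Y c τ) (v, c) i : ℤ) - dis τ (v, c) i) with hDZdef
  set DW : ℤ := ∑ i : Fin d, ∑ v ∈ ΛS Λ i,
    ((dis (flipW Y c τ) (v, c - 1) i : ℤ) - dis τ (v, c - 1) i) with hDWdef
  have hEZ : (Eperp Λ a b (flipZ Y c τ) : ℤ) = Eperp Λ a b τ + DZ :=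
    eperp_delta Λ a b τ _ c hcIcc (fun x hx => flipZ_ne Y c τ hx)
  have hEW : (Eperp Λ a b (flipW Y c τ) : ℤ) = Eperp Λ a b τ + DW :=
    eperp_delta Λ a b τ _ (c - 1) hc1Icc (fun x hx => flipW_ne Y c τ hx)
  have hDWZ : DW ≤ -DZ := by
    rw [hDZdef, hDWdef, ← Finset.sum_neg_distrib]
    refine Finset.sum_le_sum ?_
    intro i _
    rw [← Finset.sum_neg_distrib]
    refine Finset.sum_le_sum ?_
    intro v _
    exact quad_ineq τ hτ.1 Y c hY hK i v
  by_cases hDZ0 : DZ ≤ 0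
  · -- use flipZ
    refine ⟨flipZ Y c τ, good_flipZ Λ a b σ τ hτ Y c hY hYbox1, ?_, ?_⟩
    · have : (Eperp Λ a b (flipZ Y c τ) : ℤ) ≤ Eperp Λ a b τ := by omega
      exact_mod_cast this
    · have hE : Eperp Λ a b (flipZ Y c τ) ≤ Eperp Λ a b τ := by
        have : (Eperp Λ a b (flipZ Y c τ) : ℤ) ≤ Eperp Λ a b τ := by omega
        exact_mod_cast this
      have hvol : vol Λ a b (flipZ Y c τ) < vol Λ a b τ := by
        unfold vol
        refine Finset.sum_lt_sum ?_ ⟨(v₀, c), hYbox1 v₀ hv₀Y, ?_⟩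
        · intro x hx
          by_cases hxf : x.1 ∈ Y ∧ x.2 = c
          · have : flipZ Y c τ x = 1 := by simp [flipZ, hxf]
            simp [this]
          · have : flipZ Y c τ x = τ x := by simp only [flipZ, if_neg hxf]
            simp [this]
        · have h1 : flipZ Y c τ (v₀, c) = 1 := by simp [flipZ, hv₀Y]
          simp [h1, hτv₀c]
      unfold meas
      exact Nat.add_lt_add_of_le_of_lt
        (Nat.mul_le_mul_right _ hE) hvol
  · -- use flipW
    push_neg at hDZ0
    have hEWle : Eperp Λ a b (flipW Y c τ) + 1 ≤ Eperp Λ a b τ := by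
      have : (Eperp Λ a b (flipW Y c τ) : ℤ) + 1 ≤ Eperp Λ a b τ := by omega
      exact_mod_cast this
    refine ⟨flipW Y c τ, good_flipW Λ a b σ τ hτ Y c hY hYbox2, by omega, ?_⟩
    unfold meas
    set E' := Eperp Λ a b (flipW Y c τ) with hE'
    set E := Eperp Λ a b τ with hE
    set C := (Dbox Λ a b).card with hC
    have hvle : vol Λ a b (flipW Y c τ) ≤ C := vol_le_card Λ a b _
    have hvle2 : (0:ℕ) ≤ vol Λ a b τ := Nat.zero_le _
    calc E' * (C + 1) + vol Λ a b (flipW Y c τ)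
        ≤ E' * (C + 1) + C := by omega
      _ < (E' + 1) * (C + 1) := by nlinarith
      _ ≤ E * (C + 1) := Nat.mul_le_mul_right _ hEWle
      _ ≤ E * (C + 1) + vol Λ a b τ := Nat.le_add_right _ _

/-- Iterating the descent: some class member has no downward change at all. -/
lemma descend_all (Λ : Finset (Base d)) (a b : ℤ) (σ : V d → ℤ)
    (H1 : ∀ v ∈ Λ, ∀ k ≤ a, σ (v, k) = -1)
    (H2 : ∀ v ∈ Λ, ∀ k : ℤ, b ≤ k → σ (v, k) = 1)
    (H3 : ∀ (v : Base d), v ∉ Λ → ∀ k : ℤ, ¬(σ (v, k) = 1 ∧ σ (v, k + 1) = -1)) :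
    ∀ (n : ℕ) (τ : V d → ℤ), GoodCfg Λ a b σ τ → meas Λ a b τ ≤ n →
      ∃ τ', GoodCfg Λ a b σ τ' ∧ Eperp Λ a b τ' ≤ Eperp Λ a b τ ∧
        (∀ (v : Base d) (k : ℤ), ¬(τ' (v, k) = 1 ∧ τ' (v, k + 1) = -1)) := by
  intro n
  induction n with
  | zero =>
    intro τ hτ hm
    by_cases hdown : ∃ (v : Base d) (k : ℤ), τ (v, k) = 1 ∧ τ (v, k + 1) = -1
    · obtain ⟨τ', _, _, hm'⟩ := descent_step Λ a b σ H1 H2 H3 τ hτ hdown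
      omega
    · push_neg at hdown
      exact ⟨τ, hτ, le_rfl, fun v k h => by
        have := hdown v k h.1
        exact this h.2⟩
  | succ n ih =>
    intro τ hτ hm
    by_cases hdown : ∃ (v : Base d) (k : ℤ), τ (v, k) = 1 ∧ τ (v, k + 1) = -1
    · obtain ⟨τ', hτ', hE', hm'⟩ := descent_step Λ a b σ H1 H2 H3 τ hτ hdown
      obtain ⟨τ'', hτ'', hE'', hnd⟩ := ih τ' hτ' (by omega)
      exact ⟨τ'', hτ'', le_trans hE'' hE', hnd⟩
    · push_neg at hdown
      exact ⟨τ, hτ, le_rfl, fun v k h => by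
        have := hdown v k h.1
        exact this h.2⟩

end NOV
namespace NOV
open DF Finset

variable {d : ℕ}

lemma pairProd_mk (σ : V d → ℤ) (x y : V d) : pairProd σ s(x, y) = σ x * σ y := by
  simp [pairProd]

/-- Parallel edge finset. -/
noncomputable def Fpar (Λ : Finset (Base d)) (a b : ℤ) : Finset (Sym2 (V d)) :=
  (Λ ×ˢ Finset.Icc a b).image (fun x : V d => s(x, (x.1, x.2 + 1)))

/-- Perpendicular edge finsets. -/
noncomputable def FpI (Λ : Finset (Base d)) (a b : ℤ) (i : Fin d) : Finset (Sym2 (V d)) :=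
  (Wi Λ a b i).image (fun x : V d => s(x, psh x i))

noncomputable def Fperp (Λ : Finset (Base d)) (a b : ℤ) : Finset (Sym2 (V d)) :=
  Finset.univ.biUnion (FpI Λ a b)

lemma psh_snd (x : V d) (i : Fin d) : (psh x i).2 = x.2 := rfl

lemma psh_ne (x : V d) (i : Fin d) : psh x i ≠ x := by
  intro h
  have h1 : (psh x i).1 = x.1 := by rw [h]
  have := congrFun h1 i
  simp [psh, unit, Pi.add_apply] at this

lemma perp_not_parallel (x : V d) (i : Fin d) : ¬ IsParallel (s(x, psh x i)) := by
  rintro ⟨v, k, hk⟩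
  rcases Sym2.eq_iff.1 hk with ⟨h1, h2⟩ | ⟨h1, h2⟩
  · have e1 : x.2 = k := by rw [h1]
    have e2 : (psh x i).2 = k + 1 := by rw [h2]
    rw [psh_snd] at e2
    omega
  · have e1 : x.2 = k + 1 := by rw [h1]
    have e2 : (psh x i).2 = k := by rw [h2]
    rw [psh_snd] at e2
    omega

lemma isPerp_perp (x : V d) (i : Fin d) : IsPerp (s(x, psh x i)) :=
  ⟨⟨x, psh x i, vAdj_perp x i, rfl⟩, perp_not_parallel x i⟩

lemma par_isParallel (x : V d) : IsParallel (s(x, ((x.1, x.2 + 1) : V d))) := by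
  refine ⟨x.1, x.2, ?_⟩
  congr

lemma mem_Fpar_parallel (Λ : Finset (Base d)) (a b : ℤ) {e : Sym2 (V d)}
    (he : e ∈ Fpar Λ a b) : IsParallel e := by
  obtain ⟨x, _, rfl⟩ := Finset.mem_image.1 he
  exact par_isParallel x

lemma mem_Fpar_edge (Λ : Finset (Base d)) (a b : ℤ) {e : Sym2 (V d)}
    (he : e ∈ Fpar Λ a b) : IsEdge e := by
  obtain ⟨x, _, rfl⟩ := Finset.mem_image.1 he
  exact ⟨x, (x.1, x.2 + 1), by simpa using vAdj_par x.1 x.2, rfl⟩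

lemma mem_Fperp_perp (Λ : Finset (Base d)) (a b : ℤ) {e : Sym2 (V d)}
    (he : e ∈ Fperp Λ a b) : IsPerp e := by
  obtain ⟨i, _, hi⟩ := Finset.mem_biUnion.1 he
  obtain ⟨x, _, rfl⟩ := Finset.mem_image.1 hi
  exact isPerp_perp x i

lemma Fpar_Fperp_disjoint (Λ : Finset (Base d)) (a b : ℤ) :
    Disjoint (Fpar Λ a b) (Fperp Λ a b) := by
  rw [Finset.disjoint_left]
  intro e he he'
  exact (mem_Fperp_perp Λ a b he').2 (mem_Fpar_parallel Λ a b he)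

/-- Sum over the perpendicular edges as an indexed double sum. -/
lemma unit_eval_self (i : Fin d) : unit d i i = 1 := by simp [unit]

lemma unit_inj {i j : Fin d} (h : unit d i = unit d j) : i = j := by
  by_contra hij
  have := congrFun h i
  simp [unit, hij] at this

lemma sum_Fperp (Λ : Finset (Base d)) (a b : ℤ) (F : Sym2 (V d) → ℤ) :
    ∑ e ∈ Fperp Λ a b, F e = ∑ i : Fin d, ∑ x ∈ Wi Λ a b i, F (s(x, psh x i)) := by
  unfold Fperp
  rw [Finset.sum_biUnion]
  · refine Finset.sum_congr rfl ?_
    intro i _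
    unfold FpI
    rw [Finset.sum_image]
    intro x _ y _ hxy
    rcases Sym2.eq_iff.1 hxy with ⟨h1, _⟩ | ⟨h1, h2⟩
    · exact h1
    · exfalso
      have hx1 : x.1 = y.1 + unit d i := congrArg Prod.fst h1
      have hy1 : x.1 + unit d i = y.1 := congrArg Prod.fst h2
      have hh : x.1 = x.1 + unit d i + unit d i := by
        rw [hy1]; exact hx1
      have := congrFun hh i
      simp [unit, Pi.add_apply] at this
      omega
  · intro i _ j _ hij
    simp only [Finset.disjoint_left]
    intro e hei hej
    obtain ⟨x, _, hx⟩ := Finset.mem_image.1 hei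
    obtain ⟨y, _, hy⟩ := Finset.mem_image.1 hej
    rw [← hy] at hx
    rcases Sym2.eq_iff.1 hx with ⟨h1, h2⟩ | ⟨h1, h2⟩
    · have hx1 : x.1 = y.1 := congrArg Prod.fst h1
      have hx2 : x.1 + unit d i = y.1 + unit d j := congrArg Prod.fst h2
      rw [hx1] at hx2
      exact hij (unit_inj (add_left_cancel hx2))
    · have hx1 : x.1 = y.1 + unit d j := congrArg Prod.fst h1
      have hx2 : x.1 + unit d i = y.1 := congrArg Prod.fst h2
      have hh : y.1 + unit d j + unit d i = y.1 := by rw [← hx1]; exact hx2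
      have h3 := congrFun hh i
      have hji : unit d j i = 0 := by simp [unit, hij]
      have h4 : y.1 i + unit d j i + unit d i i = y.1 i := h3
      rw [hji, unit_eval_self] at h4
      omega

end NOV
namespace NOV
open DF Finset

variable {d : ℕ}

lemma mem_Dbox {Λ : Finset (Base d)} {a b : ℤ} {x : V d} :
    x ∈ Dbox Λ a b ↔ x.1 ∈ Λ ∧ a + 1 ≤ x.2 ∧ x.2 ≤ b := by
  unfold Dbox
  rw [Finset.mem_product, Finset.mem_Icc]

lemma edge_covered (Λ : Finset (Base d)) (a b : ℤ) (x y : V d) (hadj : vAdj x y)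
    (hD : x ∈ Dbox Λ a b ∨ y ∈ Dbox Λ a b) :
    s(x, y) ∈ Fpar Λ a b ∪ Fperp Λ a b := by
  rcases adj_shape hadj with ⟨h1, h2 | h2⟩ | ⟨h1, i, h2 | h2⟩
  · -- parallel, y above x
    apply Finset.mem_union_left
    unfold Fpar
    apply Finset.mem_image.2
    refine ⟨x, ?_, ?_⟩
    · rw [Finset.mem_product, Finset.mem_Icc]
      rcases hD with hD | hD <;> rw [mem_Dbox] at hD
      · exact ⟨hD.1, by omega, by omega⟩
      · rw [h1]
        exact ⟨hD.1, by omega, by omega⟩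
    · have : ((x.1, x.2 + 1) : V d) = y := by
        apply Prod.ext
        · exact h1
        · exact h2.symm
      rw [this]
  · -- parallel, x above y
    apply Finset.mem_union_left
    unfold Fpar
    apply Finset.mem_image.2
    refine ⟨y, ?_, ?_⟩
    · rw [Finset.mem_product, Finset.mem_Icc]
      rcases hD with hD | hD <;> rw [mem_Dbox] at hD
      · rw [← h1]
        exact ⟨hD.1, by omega, by omega⟩
      · exact ⟨hD.1, by omega, by omega⟩
    · have : ((y.1, y.2 + 1) : V d) = x := by
        apply Prod.ext
        · exact h1.symm
        · exact h2.symm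
      rw [this, Sym2.eq_swap]
  · -- perpendicular, y = psh x i
    apply Finset.mem_union_right
    unfold Fperp
    apply Finset.mem_biUnion.2
    refine ⟨i, Finset.mem_univ i, ?_⟩
    unfold FpI
    apply Finset.mem_image.2
    refine ⟨x, ?_, by rw [← h2]⟩
    unfold Wi
    rw [Finset.mem_product, Finset.mem_Icc]
    rcases hD with hD | hD <;> rw [mem_Dbox] at hD
    · exact ⟨Finset.mem_union_left _ hD.1, by omega, by omega⟩
    · refine ⟨Finset.mem_union_right _ ?_, by omega, by omega⟩
      apply Finset.mem_image.2
      refine ⟨y.1, hD.1, ?_⟩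
      rw [h2]
      show (psh x i).1 - unit d i = x.1
      unfold psh
      simp
  · -- perpendicular, x = psh y i
    apply Finset.mem_union_right
    unfold Fperp
    apply Finset.mem_biUnion.2
    refine ⟨i, Finset.mem_univ i, ?_⟩
    unfold FpI
    apply Finset.mem_image.2
    refine ⟨y, ?_, by rw [← h2, Sym2.eq_swap]⟩
    unfold Wi
    rw [Finset.mem_product, Finset.mem_Icc]
    rcases hD with hD | hD <;> rw [mem_Dbox] at hD
    · refine ⟨Finset.mem_union_right _ ?_, by omega, by omega⟩
      apply Finset.mem_image.2
      refine ⟨x.1, hD.1, ?_⟩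
      rw [h2]
      show (psh y i).1 - unit d i = y.1
      unfold psh
      simp
    · exact ⟨Finset.mem_union_left _ hD.1, by omega, by omega⟩

lemma spin_prod (τ : V d → ℤ) (hτ : IsConfig τ) (x : V d) (i : Fin d) :
    (τ x * τ (psh x i) : ℤ) = 1 - 2 * (dis τ x i : ℤ) := by
  rcases hτ x with h | h <;> rcases hτ (psh x i) with h' | h' <;>
      simp [dis, h, h']

lemma par_le (σ σ' : V d → ℤ) (hσ : IsConfig σ) (hσ' : IsConfig σ')
    (hnd : ∀ (v : Base d) (k : ℤ), ¬(σ' (v, k) = 1 ∧ σ' (v, k + 1) = -1))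
    (hup : ∀ (v : Base d) (k : ℤ), σ' (v, k) = -1 → σ' (v, k + 1) = 1 →
      σ (v, k) = -1 ∧ σ (v, k + 1) = 1)
    (x : V d) :
    σ x * σ (x.1, x.2 + 1) ≤ σ' x * σ' (x.1, x.2 + 1) := by
  have hx : ((x.1, x.2) : V d) = x := rfl
  have hle1 : σ x * σ (x.1, x.2 + 1) ≤ 1 := by
    rcases hσ x with h | h <;> rcases hσ (x.1, x.2 + 1) with h' | h' <;>
      rw [h, h'] <;> norm_num
  rcases hσ' x with h | h <;> rcases hσ' (x.1, x.2 + 1) with h' | h'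
  · rw [h, h']; simpa using hle1
  · exfalso
    exact hnd x.1 x.2 ⟨by rw [hx]; exact h, h'⟩
  · obtain ⟨e1, e2⟩ := hup x.1 x.2 (by rw [hx]; exact h) h'
    rw [h, h', hx] at *
    rw [e1, e2]
  · rw [h, h']; simpa using hle1

end NOV
namespace NOV
open DF Finset

variable {d : ℕ}

/-- No-overhang configurations have no downward change. -/
lemma noOverhangs_nodown {ρ : V d → ℤ} (hρc : IsConfig ρ) (hρ : NoOverhangs ρ)
    (v : Base d) (k : ℤ) : ¬(ρ (v, k) = 1 ∧ ρ (v, k + 1) = -1) := by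
  rintro ⟨h1, h2⟩
  obtain ⟨⟨Ka, hKa⟩, ⟨Kb, hKb⟩⟩ := hρ.1 v
  obtain ⟨s, _, hs1, hs2⟩ := exists_up_above (fun j => ρ (v, j)) (fun j => hρc (v, j))
    Kb hKb (hKa Ka le_rfl)
  obtain ⟨k₀, _, huniq⟩ := hρ.2 v
  have e1 : k = k₀ := huniq k (by show ρ (v, k) = -ρ (v, k + 1); rw [h1, h2]; norm_num)
  have e2 : s = k₀ := huniq s (by show ρ (v, s) = -ρ (v, s + 1); rw [hs1, hs2])
  rw [← e2] at e1
  rw [e1] at h1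
  rw [h1] at hs1
  norm_num at hs1

end NOV
open NOV

set_option maxHeartbeats 1000000 in
theorem no_overhangs_of_constant_perpendicular_field'
    (d : ℕ) (hd : 1 ≤ d) (Λ : Finset (Base d))
    (ρ : V d → ℤ) (hρc : IsConfig ρ) (hρ : NoOverhangs ρ)
    (η : Sym2 (V d) → ℝ) (hη : ∀ e, 0 ≤ η e)
    (hconst : ∀ e e' : Sym2 (V d), IsPerp e → IsPerp e' → η e = η e')
    (σ : V d → ℤ) (hσc : IsConfig σ) (hσb : ∀ x : V d, x.1 ∉ Λ → σ x = ρ x)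
    (hσi : Interfacial σ) :
    ∃ σ' : V d → ℤ, IsConfig σ' ∧ (∀ x : V d, x.1 ∉ Λ → σ' x = ρ x) ∧
      NoOverhangs σ' ∧
      energyDiff η σ' σ ≤ 0 ∧
      ∀ x : V d, σ' x = -1 → σ' (x.1, x.2 + 1) = 1 →
        σ x = -1 ∧ σ (x.1, x.2 + 1) = 1 := by
  classical
  rcases Λ.eq_empty_or_nonempty with hΛe | hΛne
  · -- trivial case Λ = ∅
    have hσρ : σ = ρ := funext fun x => hσb x (by rw [hΛe]; exact Finset.notMem_empty _)
    subst hσρ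
    refine ⟨σ, hσc, fun x _ => rfl, hρ, ?_, fun x h1 h2 => ⟨h1, h2⟩⟩
    have : energyDiff η σ σ = 0 := by
      unfold energyDiff
      have hz : ∀ e ∈ {e : Sym2 (V d) | IsEdge e},
          η e * ((pairProd σ e - pairProd σ e : ℤ) : ℝ) = 0 := by
        intro e _
        simp
      rw [finsum_mem_congr rfl hz]
      simp
    rw [this]
  · -- main case
    set K₁ : Base d → ℤ := fun v => Classical.choose (hσi v).1 with hK₁
    set K₂ : Base d → ℤ := fun v => Classical.choose (hσi v).2 with hK₂
    set a : ℤ := Λ.inf' hΛne K₁ with ha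
    set b : ℤ := Λ.sup' hΛne K₂ with hb
    have H1 : ∀ v ∈ Λ, ∀ k ≤ a, σ (v, k) = -1 := by
      intro v hv k hk
      exact Classical.choose_spec (hσi v).1 k (le_trans hk (Finset.inf'_le K₁ hv))
    have H2 : ∀ v ∈ Λ, ∀ k : ℤ, b ≤ k → σ (v, k) = 1 := by
      intro v hv k hk
      exact Classical.choose_spec (hσi v).2 k (le_trans (Finset.le_sup' K₂ hv) hk)
    have H3 : ∀ (v : Base d), v ∉ Λ → ∀ k : ℤ, ¬(σ (v, k) = 1 ∧ σ (v, k + 1) = -1) := by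
      intro v hv k hk
      have e1 : σ (v, k) = ρ (v, k) := hσb (v, k) hv
      have e2 : σ (v, k + 1) = ρ (v, k + 1) := hσb (v, k + 1) hv
      exact noOverhangs_nodown hρc hρ v k ⟨by rw [← e1]; exact hk.1, by rw [← e2]; exact hk.2⟩
    have Hgood : GoodCfg Λ a b σ σ := ⟨hσc, fun x _ => rfl, fun v k h1 h2 => ⟨h1, h2⟩⟩
    obtain ⟨τ, hτ, hE, hnd⟩ :=
      descend_all Λ a b σ H1 H2 H3 (meas Λ a b σ) σ Hgood le_rfl
    have hτc : IsConfig τ := hτ.1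
    have hbdry : ∀ x : V d, x.1 ∉ Λ → τ x = ρ x := by
      intro x hx
      have h1 : τ x = σ x := by
        apply hτ.2.1
        rw [mem_Dbox]
        intro hc
        exact absurd hc.1 hx
      rw [h1]
      exact hσb x hx
    -- no overhangs for τ
    have hno : NoOverhangs τ := by
      constructor
      · intro v
        by_cases hv : v ∈ Λ
        · exact ⟨⟨a, fun k hk => good_low Λ a b σ H1 hτ hv hk⟩,
            ⟨b + 1, fun k hk => good_high Λ a b σ H2 hτ hv (by omega)⟩⟩
        · obtain ⟨⟨Ka, hKa⟩, ⟨Kb, hKb⟩⟩ := hρ.1 v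
          refine ⟨⟨Ka, fun k hk => ?_⟩, ⟨Kb, fun k hk => ?_⟩⟩
          · rw [hbdry (v, k) hv]; exact hKa k hk
          · rw [hbdry (v, k) hv]; exact hKb k hk
      · intro v
        by_cases hv : v ∈ Λ
        · exact unique_change (fun k => τ (v, k)) (fun k => hτc (v, k)) a (b + 1)
            (fun k hk => good_low Λ a b σ H1 hτ hv hk)
            (fun k hk => good_high Λ a b σ H2 hτ hv (by omega))
            (fun k => hnd v k)
        · obtain ⟨⟨Ka, hKa⟩, ⟨Kb, hKb⟩⟩ := hρ.1 v
          exact unique_change (fun k => τ (v, k)) (fun k => hτc (v, k)) Ka Kb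
            (fun k hk => by show τ (v, k) = -1; rw [hbdry (v, k) hv]; exact hKa k hk)
            (fun k hk => by show τ (v, k) = 1; rw [hbdry (v, k) hv]; exact hKb k hk)
            (fun k => hnd v k)
    -- energy comparison
    have henergy : energyDiff η τ σ ≤ 0 := by
      set g : Sym2 (V d) → ℝ :=
        fun e => η e * ((pairProd τ e - pairProd σ e : ℤ) : ℝ) with hg
      have hcover : {e : Sym2 (V d) | IsEdge e} ∩ Function.support g
          = ↑(Fpar Λ a b ∪ Fperp Λ a b) ∩ Function.support g := by
        ext e
        simp only [Set.mem_inter_iff, Function.mem_support, Set.mem_setOf_eq, Finset.mem_coe]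
        constructor
        · rintro ⟨⟨x, y, hadj, rfl⟩, hne⟩
          refine ⟨?_, hne⟩
          have hdiff : pairProd τ s(x, y) ≠ pairProd σ s(x, y) := by
            intro h
            apply hne
            rw [hg]
            simp [h]
          have hD : x ∈ Dbox Λ a b ∨ y ∈ Dbox Λ a b := by
            by_contra hc
            push_neg at hc
            apply hdiff
            rw [pairProd_mk, pairProd_mk, hτ.2.1 x hc.1, hτ.2.1 y hc.2]
          exact edge_covered Λ a b x y hadj hD
        · rintro ⟨he, hne⟩
          refine ⟨?_, hne⟩
          rcases Finset.mem_union.1 he with h | h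
          · exact mem_Fpar_edge Λ a b h
          · exact (mem_Fperp_perp Λ a b h).1
      have hsum : energyDiff η τ σ = -∑ e ∈ Fpar Λ a b ∪ Fperp Λ a b, g e := by
        unfold energyDiff
        rw [finsum_mem_eq_sum_of_inter_support_eq g hcover]
      rw [hsum, Finset.sum_union (Fpar_Fperp_disjoint Λ a b)]
      have hSpar : 0 ≤ ∑ e ∈ Fpar Λ a b, g e := by
        refine Finset.sum_nonneg ?_
        intro e he
        obtain ⟨x, _, rfl⟩ := Finset.mem_image.1 he
        rw [hg]
        simp only []
        rw [pairProd_mk, pairProd_mk]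
        refine mul_nonneg (hη _) ?_
        have := par_le σ τ hσc hτc hnd (fun v k => hτ.2.2 v k) x
        exact_mod_cast sub_nonneg.2 this
      have hSperp : 0 ≤ ∑ e ∈ Fperp Λ a b, g e := by
        set i₀ : Fin d := ⟨0, hd⟩ with hi₀
        set e₀ : Sym2 (V d) := s(((0 : Base d), (0 : ℤ)), psh ((0 : Base d), (0 : ℤ)) i₀)
          with he₀
        have hperp₀ : IsPerp e₀ := isPerp_perp _ i₀
        have hrw : ∑ e ∈ Fperp Λ a b, g e
            = η e₀ * ((∑ e ∈ Fperp Λ a b, (pairProd τ e - pairProd σ e) : ℤ) : ℝ) := by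
          push_cast
          rw [Finset.mul_sum]
          refine Finset.sum_congr rfl ?_
          intro e he
          rw [hg]
          simp only []
          rw [hconst e e₀ (mem_Fperp_perp Λ a b he) hperp₀]
          push_cast
          ring
        rw [hrw]
        refine mul_nonneg (hη _) ?_
        have hZ : ∑ e ∈ Fperp Λ a b, (pairProd τ e - pairProd σ e)
            = 2 * ((Eperp Λ a b σ : ℤ) - (Eperp Λ a b τ : ℤ)) := by
          rw [sum_Fperp]
          have hterm : ∀ i : Fin d, ∀ x ∈ Wi Λ a b i,
              (pairProd τ (s(x, psh x i)) - pairProd σ (s(x, psh x i)))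
                = 2 * (dis σ x i : ℤ) - 2 * (dis τ x i : ℤ) := by
            intro i x _
            rw [pairProd_mk, pairProd_mk, spin_prod τ hτc x i, spin_prod σ hσc x i]
            ring
          rw [Finset.sum_congr rfl (fun i _ => Finset.sum_congr rfl (hterm i))]
          unfold Eperp
          push_cast
          simp only [Finset.sum_sub_distrib, Finset.mul_sum]
          rw [mul_sub]
          simp only [Finset.mul_sum]
        rw [hZ]
        have : (Eperp Λ a b τ : ℤ) ≤ (Eperp Λ a b σ : ℤ) := by exact_mod_cast hE
        have h2 : (0 : ℤ) ≤ 2 * ((Eperp Λ a b σ : ℤ) - (Eperp Λ a b τ : ℤ)) := by omega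
        exact_mod_cast h2
      have := add_nonneg hSpar hSperp
      linarith
    exact ⟨τ, hτc, hbdry, hno, henergy, fun x h1 h2 => hτ.2.2 x.1 x.2 h1 h2⟩

/-- If the coupling field is constant on perpendicular edges, then for
every interfacial configuration `σ ∈ Ω^{Λ×ℤ,ρ}` (with `ρ` having no overhangs) there
is a configuration `σ' ∈ Ω^{Λ×ℤ,ρ}` with no overhangs, of no larger energy, whose
upward sign changes are upward sign changes of `σ`. -/
theorem no_overhangs_of_constant_perpendicular_field
    (d : ℕ) (hd : 1 ≤ d) (Λ : Finset (Base d))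
    (ρ : V d → ℤ) (hρc : IsConfig ρ) (hρ : NoOverhangs ρ)
    (η : Sym2 (V d) → ℝ) (hη : ∀ e, 0 ≤ η e)
    (hconst : ∀ e e' : Sym2 (V d), IsPerp e → IsPerp e' → η e = η e')
    (σ : V d → ℤ) (hσc : IsConfig σ) (hσb : ∀ x : V d, x.1 ∉ Λ → σ x = ρ x)
    (hσi : Interfacial σ) :
    ∃ σ' : V d → ℤ, IsConfig σ' ∧ (∀ x : V d, x.1 ∉ Λ → σ' x = ρ x) ∧
      NoOverhangs σ' ∧
      energyDiff η σ' σ ≤ 0 ∧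
      ∀ x : V d, σ' x = -1 → σ' (x.1, x.2 + 1) = 1 →
        σ x = -1 ∧ σ (x.1, x.2 + 1) = 1 := by
  exact no_overhangs_of_constant_perpendicular_field' d hd Λ ρ hρc hρ η hη hconst σ hσc hσb hσi
end

section
/- Let d ≥ 1, let Λ ⊂ ℤ^d be finite, let ρ : ℤ^{d+1} → {−1,1} be a configuration with no overhangs, and let σ ∈ Ω^{Λ×ℤ,ρ} be interfacial. Then there exists an interfacial configuration σ' ∈ Ω^{Λ×ℤ,ρ} with no overhangs such that: (i) whenever σ'_{(v,k)} = −1 and σ'_{(v,k+1)} = 1, also σ_{(v,k)} = −1 and σ_{(v,k+1)} = 1; and (ii) the number of edges {x,y} ∈ E^⊥(ℤ^{d+1}) with {x,y} ∩ (Λ×ℤ) ≠ ∅ and σ'_x ≠ σ'_y is at most the number of edges {x,y} ∈ E^⊥(ℤ^{d+1}) with {x,y} ∩ (Λ×ℤ) ≠ ∅ and σ_x ≠ σ_y (both numbers being finite). -/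
open MeasureTheory ProbabilityTheory
open scoped ENNReal NNReal

namespace DF

/-- The set of perpendicular edges meeting `Λ × ℤ` across which `σ` disagrees. -/
def perpDis {d : ℕ} (Λ : Finset (Base d)) (σ : V d → ℤ) : Set (Sym2 (V d)) :=
  {e | IsPerp e ∧ (∃ x ∈ e, x.1 ∈ Λ) ∧ ∃ x y : V d, e = s(x, y) ∧ σ x ≠ σ y}

end DF

open DF


namespace DFAux
open DF

variable {d : ℕ}

/-! ### Column lemmas -/

def MonoC (c : ℤ → ℤ) : Prop := ∀ k, c k = 1 → c (k + 1) = 1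

lemma monoC_ge {c : ℤ → ℤ} (h : MonoC c) {k j : ℤ} (hk : c k = 1) (hj : k ≤ j) : c j = 1 :=
  Int.le_induction (motive := fun n _ => c n = 1) hk (fun n _ ih => h n ih) j hj

lemma exists_top {c : ℤ → ℤ} (hpm : ∀ k, c k = 1 ∨ c k = -1)
    (hlo : ∃ K : ℤ, ∀ k ≤ K, c k = -1) (hhi : ∃ K : ℤ, ∀ k, K ≤ k → c k = 1) :
    ∃ t, c t = -1 ∧ c (t + 1) = 1 ∧ ∀ j, c j = -1 → j ≤ t := by
  obtain ⟨Kl, hKl⟩ := hlo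
  obtain ⟨Kh, hKh⟩ := hhi
  obtain ⟨t, ht, htmax⟩ := Int.exists_greatest_of_bdd (P := fun k => c k = -1)
    ⟨Kh, fun z hz => by by_contra hzb; push_neg at hzb; have := hKh z (by omega); omega⟩
    ⟨Kl, hKl Kl le_rfl⟩
  refine ⟨t, ht, ?_, htmax⟩
  rcases hpm (t + 1) with h | h
  · exact h
  · have := htmax (t + 1) h; omega

lemma step_exists_unique {c : ℤ → ℤ} (hpm : ∀ k, c k = 1 ∨ c k = -1)
    (hlo : ∃ K : ℤ, ∀ k ≤ K, c k = -1) (hhi : ∃ K : ℤ, ∀ k, K ≤ k → c k = 1)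
    (hm : MonoC c) : ∃! k : ℤ, c k = -c (k + 1) := by
  obtain ⟨t, ht1, ht2, htmax⟩ := exists_top hpm hlo hhi
  refine ⟨t, by omega, ?_⟩
  intro y hy
  rcases hpm y with h1 | h1
  · have := hm y h1; omega
  · have h2 : c (y + 1) = 1 := by omega
    have hle : y ≤ t := htmax y h1
    rcases eq_or_lt_of_le hle with h | h
    · exact h
    · have : c t = 1 := monoC_ge hm h2 (by omega)
      omega

lemma mono_transfer {τ ρ : V d → ℤ} {v : Base d}
    (hcol : ∀ k, τ (v, k) = ρ (v, k)) (hm : MonoC fun k => ρ (v, k)) :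
    MonoC fun k => τ (v, k) := by
  intro k hk
  show τ (v, k + 1) = 1
  rw [hcol]
  exact hm k (show ρ (v, k) = 1 by rw [← hcol]; exact hk)

lemma noOverhangs_mono {ρ : V d → ℤ} (hc : IsConfig ρ) (h : NoOverhangs ρ) (v : Base d) :
    MonoC fun k => ρ (v, k) := by
  intro k hk
  by_contra hk1
  have hk1' : ρ (v, k + 1) = -1 := (hc (v, k + 1)).resolve_left hk1
  obtain ⟨hint, huniq⟩ := h
  obtain ⟨hlo, hhi⟩ := hint v
  have hpm : ∀ j : ℤ, ρ (v, j) = 1 ∨ ρ (v, j) = -1 := fun j => hc (v, j)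
  obtain ⟨t1, h11, h12, h13⟩ := exists_top hpm hlo hhi
  have ht1k : k + 1 ≤ t1 := h13 _ hk1'
  obtain ⟨Kl, hKl⟩ := hlo
  obtain ⟨t2, ht2, ht2max⟩ := Int.exists_greatest_of_bdd
      (P := fun j => j < k ∧ ρ (v, j) = -1)
      ⟨k, fun z hz => le_of_lt hz.1⟩
      ⟨min Kl (k - 1), ⟨by omega, hKl _ (min_le_left _ _)⟩⟩
  have ht2' : ρ (v, t2 + 1) = 1 := by
    rcases eq_or_lt_of_le (show t2 + 1 ≤ k by omega) with h | h
    · rw [h]; exact hk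
    · rcases hpm (t2 + 1) with h' | h'
      · exact h'
      · have := ht2max (t2 + 1) ⟨by omega, h'⟩; omega
  obtain ⟨u, hu, huu⟩ := huniq v
  have e1 : t1 = u := huu t1 (by omega)
  have e2 : t2 = u := huu t2 (by omega)
  omega

/-! ### dist1 lemmas -/

lemma dist1_nonneg (u w : Base d) : 0 ≤ dist1 u w :=
  Finset.sum_nonneg fun _ _ => abs_nonneg _

lemma dist1_comm (u w : Base d) : dist1 u w = dist1 w u :=
  Finset.sum_congr rfl fun i _ => abs_sub_comm _ _

lemma dist1_eq_zero {u w : Base d} (h : dist1 u w = 0) : u = w := by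
  funext i
  have h0 : ∀ j ∈ Finset.univ, (0 : ℤ) ≤ |u j - w j| := fun _ _ => abs_nonneg _
  have := (Finset.sum_eq_zero_iff_of_nonneg h0).1 h i (Finset.mem_univ i)
  have := abs_eq_zero.mp this
  omega

lemma baseAdj_ne {u w : Base d} (h : baseAdj u w) : u ≠ w := by
  intro he
  subst he
  have : dist1 u u = 0 := by
    unfold dist1; apply Finset.sum_eq_zero; intro i _; simp
  unfold baseAdj at h; omega

lemma baseAdj_coord_le {u w : Base d} (h : baseAdj u w) (i : Fin d) : |u i - w i| ≤ 1 := by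
  have hle := Finset.single_le_sum (f := fun j => |u j - w j|) (fun j _ => abs_nonneg _)
    (Finset.mem_univ i)
  unfold baseAdj dist1 at h
  omega

lemma nbr_finite (u : Base d) : {w : Base d | baseAdj u w}.Finite := by
  apply Set.Finite.subset (Set.Finite.pi (fun i => Set.finite_Icc (u i - 1) (u i + 1)))
  intro w hw
  simp only [Set.mem_pi, Set.mem_univ, forall_true_left, Set.mem_Icc]
  intro i
  have h := baseAdj_coord_le hw i
  have h2 := abs_le.mp h
  constructor <;> omega

lemma nbr_finite' (u : Base d) : {w : Base d | baseAdj w u}.Finite := by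
  have he : {w : Base d | baseAdj w u} = {w : Base d | baseAdj u w} := by
    ext w
    simp only [Set.mem_setOf_eq]
    unfold baseAdj
    rw [dist1_comm]
  rw [he]; exact nbr_finite u

end DFAux
namespace DFAux
open DF

variable {d : ℕ}

/-! ### Ordered counting of perpendicular disagreement edges -/

noncomputable def enc : Base d → ℕ := Encodable.encode

lemma enc_inj : Function.Injective (enc (d := d)) := Encodable.encode_injective

def Pairs (Λ : Finset (Base d)) : Set (Base d × Base d) :=
  {p | baseAdj p.1 p.2 ∧ (p.1 ∈ Λ ∨ p.2 ∈ Λ) ∧ enc p.1 < enc p.2}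

lemma pairs_finite (Λ : Finset (Base d)) : (Pairs Λ).Finite := by
  apply Set.Finite.subset
    (((Λ.finite_toSet.biUnion fun u _ => (Set.finite_singleton u).prod (nbr_finite u))).union
      (Λ.finite_toSet.biUnion fun w _ => (nbr_finite' w).prod (Set.finite_singleton w)))
  rintro ⟨a, b⟩ ⟨hadj, hmem, _⟩
  rcases hmem with h | h
  · left
    exact Set.mem_biUnion h ⟨rfl, hadj⟩
  · right
    exact Set.mem_biUnion h ⟨hadj, rfl⟩

def OD (Λ : Finset (Base d)) (τ : V d → ℤ) : Set (Base d × Base d × ℤ) :=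
  {x | (x.1, x.2.1) ∈ Pairs Λ ∧ τ (x.1, x.2.2) ≠ τ (x.2.1, x.2.2)}

lemma dis_finite {τ : V d → ℤ} (hτ : Interfacial τ) (u w : Base d) :
    {k : ℤ | τ (u, k) ≠ τ (w, k)}.Finite := by
  obtain ⟨⟨K1, h1⟩, ⟨K3, h3⟩⟩ := hτ u
  obtain ⟨⟨K2, h2⟩, ⟨K4, h4⟩⟩ := hτ w
  apply Set.Finite.subset (Set.finite_Icc (min K1 K2) (max K3 K4))
  intro k hk
  simp only [Set.mem_setOf_eq] at hk
  simp only [Set.mem_Icc]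
  by_contra hc
  push_neg at hc
  rcases le_or_gt (min K1 K2) k with h | h
  · have hk2 := hc h
    have := h3 k (by omega)
    have := h4 k (by omega)
    omega
  · have := h1 k (by omega)
    have := h2 k (by omega)
    omega

lemma OD_finite (Λ : Finset (Base d)) {τ : V d → ℤ} (hτ : Interfacial τ) :
    (OD Λ τ).Finite := by
  apply Set.Finite.subset ((pairs_finite Λ).biUnion fun p _ =>
    ((Set.finite_singleton p.1).prod ((Set.finite_singleton p.2).prod (dis_finite hτ p.1 p.2))))
  rintro ⟨u, w, k⟩ ⟨h1, h2⟩
  exact Set.mem_biUnion h1 ⟨rfl, rfl, h2⟩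

noncomputable def NN (Λ : Finset (Base d)) (τ : V d → ℤ) : ℕ := (OD Λ τ).ncard

def Phi : Base d × Base d × ℤ → Sym2 (V d) := fun x => s((x.1, x.2.2), (x.2.1, x.2.2))

lemma phi_injOn (Λ : Finset (Base d)) (τ : V d → ℤ) :
    Set.InjOn (Phi (d := d)) (OD Λ τ) := by
  rintro ⟨u, w, k⟩ ⟨h1, _⟩ ⟨u', w', k'⟩ ⟨h1', _⟩ he
  have ho := h1.2.2
  have ho' := h1'.2.2
  dsimp only at ho ho' he
  rcases Sym2.eq_iff.mp he with ⟨ha, hb⟩ | ⟨ha, hb⟩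
  · have e1 : u = u' := congrArg Prod.fst ha
    have e2 : k = k' := congrArg Prod.snd ha
    have e3 : w = w' := congrArg Prod.fst hb
    rw [e1, e2, e3]
  · have e1 : u = w' := congrArg Prod.fst ha
    have e2 : w = u' := congrArg Prod.fst hb
    rw [← e1, ← e2] at ho'
    omega

lemma vAdj_perp {x y : V d} (hadj : vAdj x y) (hnp : ¬ IsParallel (s(x, y))) :
    baseAdj x.1 y.1 ∧ x.2 = y.2 := by
  have h1 : 0 ≤ dist1 x.1 y.1 := dist1_nonneg _ _
  have h2 : 0 ≤ |x.2 - y.2| := abs_nonneg _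
  have hadj' : dist1 x.1 y.1 + |x.2 - y.2| = 1 := hadj
  by_cases hb : dist1 x.1 y.1 = 0
  · exfalso
    have hxy : x.1 = y.1 := dist1_eq_zero hb
    have habs : |x.2 - y.2| = 1 := by rw [hb, zero_add] at hadj'; exact hadj'
    rcases (abs_eq (by norm_num : (0:ℤ) ≤ 1)).mp habs with h | h
    · refine hnp ⟨y.1, y.2, ?_⟩
      rw [Sym2.eq_swap]
      have hy : y = (y.1, y.2) := rfl
      have hx : x = (y.1, y.2 + 1) := Prod.ext hxy (by omega)
      rw [← hy, ← hx]
    · refine hnp ⟨x.1, x.2, ?_⟩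
      have hx : x = (x.1, x.2) := rfl
      have hy : y = (x.1, x.2 + 1) := Prod.ext hxy.symm (by omega)
      rw [← hx, ← hy]
  · have hle : dist1 x.1 y.1 ≤ 1 := by linarith
    have hb1 : dist1 x.1 y.1 = 1 := le_antisymm hle (by omega)
    have habs : |x.2 - y.2| = 0 := by rw [hb1] at hadj'; linarith
    exact ⟨hb1, by have := abs_eq_zero.mp habs; omega⟩

lemma perpDis_eq (Λ : Finset (Base d)) (τ : V d → ℤ) :
    perpDis Λ τ = Phi '' OD Λ τ := by
  ext e
  constructor
  · rintro ⟨⟨⟨x, y, hadj, rfl⟩, hnp⟩, ⟨z, hz, hzΛ⟩, a, b, hab, hne⟩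
    obtain ⟨hbadj, hht⟩ := vAdj_perp hadj hnp
    have hdis : τ x ≠ τ y := by
      rcases Sym2.eq_iff.mp hab with ⟨ha, hb⟩ | ⟨ha, hb⟩
      · rw [ha, hb]; exact hne
      · rw [ha, hb]; exact fun hcon => hne hcon.symm
    have hmeet : x.1 ∈ Λ ∨ y.1 ∈ Λ := by
      rcases Sym2.mem_iff.mp hz with h | h
      · left; rw [← h]; exact hzΛ
      · right; rw [← h]; exact hzΛ
    have hne1 : x.1 ≠ y.1 := baseAdj_ne hbadj
    have hxe : x = (x.1, x.2) := rfl
    have hye : y = (y.1, x.2) := Prod.ext rfl hht.symm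
    rcases lt_trichotomy (enc x.1) (enc y.1) with h | h | h
    · refine ⟨(x.1, y.1, x.2), ⟨⟨hbadj, hmeet, h⟩, ?_⟩, ?_⟩
      · show τ (x.1, x.2) ≠ τ (y.1, x.2)
        rw [← hxe, ← hye]; exact hdis
      · show s((x.1, x.2), (y.1, x.2)) = s(x, y)
        rw [← hxe, ← hye]
    · exact absurd (enc_inj h) hne1
    · refine ⟨(y.1, x.1, x.2), ⟨⟨?_, hmeet.symm, h⟩, ?_⟩, ?_⟩
      · unfold baseAdj at hbadj ⊢; rw [dist1_comm]; exact hbadj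
      · show τ (y.1, x.2) ≠ τ (x.1, x.2)
        rw [← hxe, ← hye]; exact fun hcon => hdis hcon.symm
      · show s((y.1, x.2), (x.1, x.2)) = s(x, y)
        rw [← hxe, ← hye, Sym2.eq_swap]
  · rintro ⟨⟨u, w, k⟩, ⟨⟨hadj, hmeet, ho⟩, hne⟩, rfl⟩
    dsimp only at hadj hmeet ho hne
    have hnuw : u ≠ w := fun he => by rw [he] at ho; omega
    refine ⟨⟨⟨(u, k), (w, k), ?_, rfl⟩, ?_⟩, ?_, (u, k), (w, k), rfl, hne⟩
    · show dist1 u w + |k - k| = 1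
      simp only [sub_self, abs_zero, add_zero]
      exact hadj
    · rintro ⟨v, j, hej⟩
      rcases Sym2.eq_iff.mp hej with ⟨ha, hb⟩ | ⟨ha, hb⟩
      · have e1 : u = v := congrArg Prod.fst ha
        have e2 : w = v := congrArg Prod.fst hb
        exact hnuw (e1.trans e2.symm)
      · have e1 : u = v := congrArg Prod.fst ha
        have e2 : w = v := congrArg Prod.fst hb
        exact hnuw (e1.trans e2.symm)
    · rcases hmeet with h | h
      · exact ⟨(u, k), Sym2.mem_iff.mpr (Or.inl rfl), h⟩
      · exact ⟨(w, k), Sym2.mem_iff.mpr (Or.inr rfl), h⟩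

lemma perpDis_finite (Λ : Finset (Base d)) {τ : V d → ℤ} (hτ : Interfacial τ) :
    (perpDis Λ τ).Finite := by
  rw [perpDis_eq]
  exact (OD_finite Λ hτ).image _

lemma perpDis_ncard (Λ : Finset (Base d)) (τ : V d → ℤ) :
    (perpDis Λ τ).ncard = NN Λ τ := by
  rw [perpDis_eq]
  exact Set.ncard_image_of_injOn (phi_injOn Λ τ)

end DFAux
namespace DFAux
open DF

variable {d : ℕ}

/-! ### The two local moves -/

def fillK (K : ℤ) (τ : V d → ℤ) : V d → ℤ :=
  fun x => if x.2 = K then min (τ (x.1, K)) (τ (x.1, K + 1)) else τ x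

def delK (K : ℤ) (τ : V d → ℤ) : V d → ℤ :=
  fun x => if x.2 = K + 1 then max (τ (x.1, K)) (τ (x.1, K + 1)) else τ x

lemma fill_at (K : ℤ) (τ : V d → ℤ) (v : Base d) :
    fillK K τ (v, K) = min (τ (v, K)) (τ (v, K + 1)) := if_pos rfl

lemma fill_ne (K : ℤ) (τ : V d → ℤ) (v : Base d) {k : ℤ} (h : k ≠ K) :
    fillK K τ (v, k) = τ (v, k) := if_neg h

lemma del_at (K : ℤ) (τ : V d → ℤ) (v : Base d) :
    delK K τ (v, K + 1) = max (τ (v, K)) (τ (v, K + 1)) := if_pos rfl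

lemma del_ne (K : ℤ) (τ : V d → ℤ) (v : Base d) {k : ℤ} (h : k ≠ K + 1) :
    delK K τ (v, k) = τ (v, k) := if_neg h

lemma fill_config {τ : V d → ℤ} (hc : IsConfig τ) (K : ℤ) : IsConfig (fillK K τ) := by
  intro x
  unfold fillK
  split
  · have := hc (x.1, K); have := hc (x.1, K + 1); omega
  · exact hc x

lemma del_config {τ : V d → ℤ} (hc : IsConfig τ) (K : ℤ) : IsConfig (delK K τ) := by
  intro x
  unfold delK
  split
  · have := hc (x.1, K); have := hc (x.1, K + 1); omega
  · exact hc x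

lemma fill_of_mono {τ : V d → ℤ} (hc : IsConfig τ) (K : ℤ) (x : V d)
    (hm : MonoC fun k => τ (x.1, k)) : fillK K τ x = τ x := by
  unfold fillK
  split
  · next h =>
    have hx : τ x = τ (x.1, K) := by rw [show x = (x.1, x.2) from rfl, h]
    rcases hc (x.1, K) with h1 | h1
    · have h2 : τ (x.1, K + 1) = 1 := hm K h1
      rw [hx, h1, h2]; simp
    · have := hc (x.1, K + 1)
      rw [hx]; omega
  · rfl

lemma del_of_mono {τ : V d → ℤ} (hc : IsConfig τ) (K : ℤ) (x : V d)
    (hm : MonoC fun k => τ (x.1, k)) : delK K τ x = τ x := by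
  unfold delK
  split
  · next h =>
    have hx : τ x = τ (x.1, K + 1) := by rw [show x = (x.1, x.2) from rfl, h]
    rcases hc (x.1, K) with h1 | h1
    · have h2 : τ (x.1, K + 1) = 1 := hm K h1
      rw [hx, h2, h1]; simp
    · have := hc (x.1, K + 1)
      rw [hx, h1]; omega
  · rfl

lemma fill_outside {τ ρ : V d → ℤ} {Λ : Finset (Base d)} (hc : IsConfig τ) (K : ℤ)
    (h2 : ∀ x : V d, x.1 ∉ Λ → τ x = ρ x) (hρmono : ∀ v, MonoC fun k => ρ (v, k)) :
    ∀ x : V d, x.1 ∉ Λ → fillK K τ x = ρ x := by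
  intro x hx
  rw [fill_of_mono hc K x (mono_transfer (fun k => h2 (x.1, k) hx) (hρmono x.1))]
  exact h2 x hx

lemma del_outside {τ ρ : V d → ℤ} {Λ : Finset (Base d)} (hc : IsConfig τ) (K : ℤ)
    (h2 : ∀ x : V d, x.1 ∉ Λ → τ x = ρ x) (hρmono : ∀ v, MonoC fun k => ρ (v, k)) :
    ∀ x : V d, x.1 ∉ Λ → delK K τ x = ρ x := by
  intro x hx
  rw [del_of_mono hc K x (mono_transfer (fun k => h2 (x.1, k) hx) (hρmono x.1))]
  exact h2 x hx

lemma fill_interfacial {τ : V d → ℤ} (hτ : Interfacial τ) (hc : IsConfig τ) (K : ℤ) :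
    Interfacial (fillK K τ) := by
  intro v
  obtain ⟨⟨K1, h1⟩, ⟨K2, h2⟩⟩ := hτ v
  constructor
  · refine ⟨K1, fun k hk => ?_⟩
    by_cases h : k = K
    · subst h
      rw [fill_at]
      have := h1 k hk
      have := hc (v, k + 1)
      omega
    · rw [fill_ne K τ v h]; exact h1 k hk
  · refine ⟨max K2 (K + 1), fun k hk => ?_⟩
    rw [fill_ne K τ v (by omega)]
    exact h2 k (by omega)

lemma del_interfacial {τ : V d → ℤ} (hτ : Interfacial τ) (hc : IsConfig τ) (K : ℤ) :
    Interfacial (delK K τ) := by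
  intro v
  obtain ⟨⟨K1, h1⟩, ⟨K2, h2⟩⟩ := hτ v
  constructor
  · refine ⟨min K1 K, fun k hk => ?_⟩
    rw [del_ne K τ v (by omega)]
    exact h1 k (by omega)
  · refine ⟨max K2 (K + 1), fun k hk => ?_⟩
    by_cases h : k = K + 1
    · rw [show ((v, k) : V d) = (v, K + 1) by rw [h], del_at]
      have := h2 (K + 1) (by omega)
      have := hc (v, K)
      omega
    · rw [del_ne K τ v h]; exact h2 k (by omega)

lemma fill_up {τ : V d → ℤ} (hc : IsConfig τ) (K : ℤ) {v : Base d} {k : ℤ}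
    (h1 : fillK K τ (v, k) = -1) (h2 : fillK K τ (v, k + 1) = 1) :
    τ (v, k) = -1 ∧ τ (v, k + 1) = 1 := by
  by_cases hk : k = K
  · rw [show ((v, k) : V d) = (v, K) by rw [hk], fill_at] at h1
    rw [fill_ne K τ v (show k + 1 ≠ K by omega)] at h2
    rw [show ((v, k + 1) : V d) = (v, K + 1) by rw [hk]] at h2
    have := hc (v, K); have := hc (v, K + 1)
    refine ⟨?_, by rw [show ((v, k + 1) : V d) = (v, K + 1) by rw [hk]]; exact h2⟩
    rw [show ((v, k) : V d) = (v, K) by rw [hk]]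
    omega
  · by_cases hk1 : k + 1 = K
    · rw [fill_ne K τ v hk] at h1
      rw [show ((v, k + 1) : V d) = (v, K) by rw [hk1], fill_at] at h2
      have := hc (v, K); have := hc (v, K + 1)
      refine ⟨h1, ?_⟩
      rw [show ((v, k + 1) : V d) = (v, K) by rw [hk1]]
      omega
    · rw [fill_ne K τ v hk] at h1
      rw [fill_ne K τ v hk1] at h2
      exact ⟨h1, h2⟩

lemma del_up {τ : V d → ℤ} (hc : IsConfig τ) (K : ℤ) {v : Base d} {k : ℤ}
    (h1 : delK K τ (v, k) = -1) (h2 : delK K τ (v, k + 1) = 1) :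
    τ (v, k) = -1 ∧ τ (v, k + 1) = 1 := by
  by_cases hk : k = K + 1
  · rw [show ((v, k) : V d) = (v, K + 1) by rw [hk], del_at] at h1
    rw [del_ne K τ v (show k + 1 ≠ K + 1 by omega)] at h2
    have := hc (v, K); have := hc (v, K + 1)
    rw [show ((v, k) : V d) = (v, K + 1) by rw [hk]]
    rw [show k + 1 = K + 1 + 1 by omega] at h2 ⊢
    exact ⟨by omega, h2⟩
  · by_cases hk1 : k + 1 = K + 1
    · have hkK : k = K := by omega
      rw [del_ne K τ v hk] at h1
      rw [show ((v, k + 1) : V d) = (v, K + 1) by rw [hk1], del_at] at h2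
      rw [show ((v, k) : V d) = (v, K) by rw [hkK]] at h1
      have := hc (v, K); have := hc (v, K + 1)
      refine ⟨by rw [show ((v, k) : V d) = (v, K) by rw [hkK]]; exact h1, ?_⟩
      rw [show ((v, k + 1) : V d) = (v, K + 1) by rw [hk1]]
      omega
    · rw [del_ne K τ v hk] at h1
      rw [del_ne K τ v hk1] at h2
      exact ⟨h1, h2⟩

end DFAux
namespace DFAux
open DF

variable {d : ℕ}

/-! ### Level-slice counting and the submodular inequality -/

noncomputable def SC (Λ : Finset (Base d)) (τ : V d → ℤ) (K : ℤ) : ℕ :=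
  {p : Base d × Base d | p ∈ Pairs Λ ∧ τ (p.1, K) ≠ τ (p.2, K)}.ncard

lemma OD_lev (Λ : Finset (Base d)) (τ : V d → ℤ) (K : ℤ) :
    OD Λ τ ∩ {x : Base d × Base d × ℤ | x.2.2 = K} =
      (fun p : Base d × Base d => (p.1, p.2, K)) ''
        {p : Base d × Base d | p ∈ Pairs Λ ∧ τ (p.1, K) ≠ τ (p.2, K)} := by
  ext ⟨u, w, k⟩
  simp only [Set.mem_inter_iff, Set.mem_setOf_eq, Set.mem_image]
  constructor
  · rintro ⟨⟨hp, hne⟩, hk⟩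
    dsimp only at hp hne hk
    subst hk
    exact ⟨(u, w), ⟨hp, hne⟩, rfl⟩
  · rintro ⟨⟨a, b⟩, ⟨hp, hne⟩, heq⟩
    cases heq
    exact ⟨⟨hp, hne⟩, rfl⟩

lemma SC_eq (Λ : Finset (Base d)) (τ : V d → ℤ) (K : ℤ) :
    (OD Λ τ ∩ {x : Base d × Base d × ℤ | x.2.2 = K}).ncard = SC Λ τ K := by
  rw [OD_lev]
  apply Set.ncard_image_of_injOn
  intro p _ q _ h
  have h' : ((p.1, p.2, K) : Base d × Base d × ℤ) = (q.1, q.2, K) := h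
  have h1 : p.1 = q.1 := congrArg (fun z : Base d × Base d × ℤ => z.1) h'
  have h2 : p.2 = q.2 := congrArg (fun z : Base d × Base d × ℤ => z.2.1) h'
  exact Prod.ext h1 h2

lemma NN_split (Λ : Finset (Base d)) {τ : V d → ℤ} (hτ : Interfacial τ) (K : ℤ) :
    NN Λ τ = SC Λ τ K + (OD Λ τ \ {x : Base d × Base d × ℤ | x.2.2 = K}).ncard := by
  rw [← SC_eq]
  exact (Set.ncard_inter_add_ncard_diff_eq_ncard _ _ (OD_finite Λ hτ)).symm

lemma OD_off_fill (Λ : Finset (Base d)) (τ : V d → ℤ) (K : ℤ) :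
    OD Λ (fillK K τ) \ {x : Base d × Base d × ℤ | x.2.2 = K} =
      OD Λ τ \ {x : Base d × Base d × ℤ | x.2.2 = K} := by
  ext ⟨u, w, k⟩
  simp only [Set.mem_diff, Set.mem_setOf_eq]
  constructor
  · rintro ⟨⟨hp, hne⟩, hk⟩
    dsimp only at hp hne hk
    rw [fill_ne K τ u hk, fill_ne K τ w hk] at hne
    exact ⟨⟨hp, hne⟩, hk⟩
  · rintro ⟨⟨hp, hne⟩, hk⟩
    dsimp only at hp hne hk
    refine ⟨⟨hp, ?_⟩, hk⟩
    show fillK K τ (u, k) ≠ fillK K τ (w, k)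
    rw [fill_ne K τ u hk, fill_ne K τ w hk]
    exact hne

lemma OD_off_del (Λ : Finset (Base d)) (τ : V d → ℤ) (K : ℤ) :
    OD Λ (delK K τ) \ {x : Base d × Base d × ℤ | x.2.2 = K + 1} =
      OD Λ τ \ {x : Base d × Base d × ℤ | x.2.2 = K + 1} := by
  ext ⟨u, w, k⟩
  simp only [Set.mem_diff, Set.mem_setOf_eq]
  constructor
  · rintro ⟨⟨hp, hne⟩, hk⟩
    dsimp only at hp hne hk
    rw [del_ne K τ u hk, del_ne K τ w hk] at hne
    exact ⟨⟨hp, hne⟩, hk⟩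
  · rintro ⟨⟨hp, hne⟩, hk⟩
    dsimp only at hp hne hk
    refine ⟨⟨hp, ?_⟩, hk⟩
    show delK K τ (u, k) ≠ delK K τ (w, k)
    rw [del_ne K τ u hk, del_ne K τ w hk]
    exact hne

lemma spin_key (a b c e : ℤ) (ha : a = 1 ∨ a = -1) (hb : b = 1 ∨ b = -1)
    (hc : c = 1 ∨ c = -1) (he : e = 1 ∨ e = -1) :
    ((if min a b ≠ min c e then 1 else 0) + (if max a b ≠ max c e then 1 else 0) : ℕ) ≤
      (if a ≠ c then 1 else 0) + (if b ≠ e then 1 else 0) := by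
  rcases ha with rfl | rfl <;> rcases hb with rfl | rfl <;> rcases hc with rfl | rfl <;>
    rcases he with rfl | rfl <;> decide

lemma key_ineq (Λ : Finset (Base d)) {τ : V d → ℤ} (hc : IsConfig τ) (K : ℤ) :
    SC Λ (fillK K τ) K + SC Λ (delK K τ) (K + 1) ≤ SC Λ τ K + SC Λ τ (K + 1) := by
  classical
  have hs : ∀ (g : V d → ℤ) (J : ℤ),
      SC Λ g J = ((pairs_finite Λ).toFinset.filter
        (fun p => g (p.1, J) ≠ g (p.2, J))).card := by
    intro g J
    rw [SC, ← Set.ncard_coe_finset]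
    congr 1
    ext p
    simp only [Finset.coe_filter, Set.Finite.mem_toFinset, Set.mem_setOf_eq]
  rw [hs, hs, hs, hs, Finset.card_filter, Finset.card_filter, Finset.card_filter,
    Finset.card_filter, ← Finset.sum_add_distrib, ← Finset.sum_add_distrib]
  apply Finset.sum_le_sum
  intro p _
  rw [fill_at K τ p.1, fill_at K τ p.2, del_at K τ p.1, del_at K τ p.2]
  exact spin_key _ _ _ _ (hc (p.1, K)) (hc (p.1, K + 1)) (hc (p.2, K)) (hc (p.2, K + 1))

/-! ### The hole set -/

def HSet (Λ : Finset (Base d)) (τ : V d → ℤ) : Set (V d) :=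
  {x : V d | x.1 ∈ Λ ∧ τ x = 1 ∧ ∃ j, x.2 < j ∧ τ (x.1, j) = -1}

lemma HSet_finite (Λ : Finset (Base d)) {τ : V d → ℤ} (hτ : Interfacial τ) :
    (HSet Λ τ).Finite := by
  have hcol : ∀ v : Base d, {k : ℤ | τ (v, k) = 1 ∧ ∃ j, k < j ∧ τ (v, j) = -1}.Finite := by
    intro v
    obtain ⟨⟨K1, h1⟩, ⟨K2, h2⟩⟩ := hτ v
    apply Set.Finite.subset (Set.finite_Icc K1 K2)
    rintro k ⟨hk1, j, hj1, hj2⟩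
    simp only [Set.mem_Icc]
    constructor
    · by_contra h
      have := h1 k (by omega)
      omega
    · by_contra h
      have := h2 j (by omega)
      omega
  apply Set.Finite.subset (Set.Finite.biUnion Λ.finite_toSet
    (fun v _ => (Set.finite_singleton v).prod (hcol v)))
  rintro ⟨v, k⟩ ⟨hv, h1, j, hj1, hj2⟩
  exact Set.mem_biUnion hv ⟨rfl, h1, j, hj1, hj2⟩

lemma HS_fill_ssubset (Λ : Finset (Base d)) {τ : V d → ℤ} (hc : IsConfig τ) (K : ℤ)
    {v₀ : Base d} (h0 : v₀ ∈ Λ) (hd1 : τ (v₀, K) = 1) (hd2 : τ (v₀, K + 1) = -1) :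
    HSet Λ (fillK K τ) ⊂ HSet Λ τ := by
  rw [Set.ssubset_def]
  constructor
  · rintro ⟨v, k⟩ ⟨hv, h1, j, hj, h2⟩
    dsimp only at hv h1 hj h2
    refine ⟨hv, ?_, ?_⟩
    · by_cases hk : k = K
      · rw [show ((v, k) : V d) = (v, K) by rw [hk], fill_at] at h1
        rw [show ((v, k) : V d) = (v, K) by rw [hk]]
        have := hc (v, K); have := hc (v, K + 1)
        omega
      · rw [fill_ne K τ v hk] at h1
        exact h1
    · by_cases hjK : j = K
      · rw [show ((v, j) : V d) = (v, K) by rw [hjK], fill_at] at h2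
        rcases hc (v, K) with hA | hA
        · rcases hc (v, K + 1) with hB | hB
          · rw [hA, hB] at h2; norm_num at h2
          · exact ⟨K + 1, by omega, hB⟩
        · exact ⟨K, by omega, hA⟩
      · rw [fill_ne K τ v hjK] at h2
        exact ⟨j, hj, h2⟩
  · intro hsub
    have hmem : ((v₀, K) : V d) ∈ HSet Λ τ := ⟨h0, hd1, K + 1, by omega, hd2⟩
    obtain ⟨_, hval, _⟩ := hsub hmem
    rw [fill_at K τ v₀, hd1, hd2] at hval
    norm_num at hval

lemma HS_fill_mem (Λ : Finset (Base d)) {τ : V d → ℤ} (K : ℤ)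
    {v₀ : Base d} (h0 : v₀ ∈ Λ) (hd1 : τ (v₀, K) = 1) (hd2 : τ (v₀, K + 1) = -1) :
    ((v₀, K) : V d) ∈ HSet Λ τ := ⟨h0, hd1, K + 1, by omega, hd2⟩

lemma HS_del_card (Λ : Finset (Base d)) {τ : V d → ℤ} (hτ : Interfacial τ)
    (hc : IsConfig τ) (K : ℤ) :
    (HSet Λ (delK K τ)).ncard ≤ (HSet Λ τ).ncard + Λ.card := by
  have h1 : HSet Λ (delK K τ) ⊆ HSet Λ τ ∪ ((Λ : Set (Base d)) ×ˢ ({K + 1} : Set ℤ)) := by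
    rintro ⟨v, k⟩ ⟨hv, hval, j, hj, h2⟩
    dsimp only at hv hval hj h2
    by_cases hk : k = K + 1
    · right
      exact ⟨hv, by rw [Set.mem_singleton_iff]; exact hk⟩
    · left
      rw [del_ne K τ v hk] at hval
      refine ⟨hv, hval, ?_⟩
      show ∃ j, k < j ∧ τ (v, j) = -1
      by_cases hjK : j = K + 1
      · rw [show ((v, j) : V d) = (v, K + 1) by rw [hjK], del_at] at h2
        have := hc (v, K); have := hc (v, K + 1)
        exact ⟨K + 1, by omega, by omega⟩
      · rw [del_ne K τ v hjK] at h2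
        exact ⟨j, hj, h2⟩
  have h2 : ((Λ : Set (Base d)) ×ˢ ({K + 1} : Set ℤ)) =
      (fun v : Base d => ((v, K + 1) : V d)) '' (Λ : Set (Base d)) := by
    ext ⟨a, b⟩
    simp only [Set.mem_prod, Set.mem_singleton_iff, Set.mem_image, Finset.mem_coe]
    constructor
    · rintro ⟨ha, rfl⟩
      exact ⟨a, ha, rfl⟩
    · rintro ⟨v, hv, heq⟩
      cases heq
      exact ⟨hv, rfl⟩
  calc (HSet Λ (delK K τ)).ncard
      ≤ (HSet Λ τ ∪ ((Λ : Set (Base d)) ×ˢ ({K + 1} : Set ℤ))).ncard :=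
        Set.ncard_le_ncard h1
          ((HSet_finite Λ hτ).union ((Λ.finite_toSet).prod (Set.finite_singleton _)))
    _ ≤ (HSet Λ τ).ncard + ((Λ : Set (Base d)) ×ˢ ({K + 1} : Set ℤ)).ncard :=
        Set.ncard_union_le _ _
    _ = (HSet Λ τ).ncard + Λ.card := by
        rw [h2, Set.ncard_image_of_injective _
          (fun a b h => congrArg Prod.fst h), Set.ncard_coe_finset]

end DFAux
namespace DFAux
open DF

variable {d : ℕ}

lemma process (Λ : Finset (Base d)) (σ ρ : V d → ℤ)
    (hρmono : ∀ v, MonoC fun k => ρ (v, k)) :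
    ∀ n : ℕ, ∀ τ : V d → ℤ, IsConfig τ → (∀ x : V d, x.1 ∉ Λ → τ x = ρ x) → Interfacial τ →
      (∀ v k, τ (v, k) = -1 → τ (v, k + 1) = 1 → σ (v, k) = -1 ∧ σ (v, k + 1) = 1) →
      NN Λ τ * (Λ.card + 1) + (HSet Λ τ).ncard ≤ n →
      ∃ τ' : V d → ℤ, IsConfig τ' ∧ (∀ x : V d, x.1 ∉ Λ → τ' x = ρ x) ∧ Interfacial τ' ∧
        (∀ v, MonoC fun k => τ' (v, k)) ∧
        (∀ v k, τ' (v, k) = -1 → τ' (v, k + 1) = 1 → σ (v, k) = -1 ∧ σ (v, k + 1) = 1) ∧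
        NN Λ τ' ≤ NN Λ τ := by
  intro n
  induction n with
  | zero =>
    intro τ h1 h2 h3 h4 h5
    refine ⟨τ, h1, h2, h3, ?_, h4, le_rfl⟩
    have hfin := HSet_finite Λ h3
    have hempty : HSet Λ τ = ∅ := (Set.ncard_eq_zero hfin).mp (by omega)
    intro v
    by_cases hv : v ∈ Λ
    · intro k hk
      have hk' : τ (v, k) = 1 := hk
      show τ (v, k + 1) = 1
      by_contra hk1
      have hk1' : τ (v, k + 1) = -1 := (h1 (v, k + 1)).resolve_left hk1
      have hmem : ((v, k) : V d) ∈ HSet Λ τ := ⟨hv, hk', k + 1, by omega, hk1'⟩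
      rw [hempty] at hmem
      exact hmem
    · exact mono_transfer (fun j => h2 (v, j) hv) (hρmono v)
  | succ n ih =>
    intro τ h1 h2 h3 h4 h5
    by_cases hmono : ∀ v k, τ (v, k) = 1 → τ (v, k + 1) = 1
    · exact ⟨τ, h1, h2, h3, fun v k hk => hmono v k hk, h4, le_rfl⟩
    · push_neg at hmono
      obtain ⟨v₀, K, hd1, hd2'⟩ := hmono
      have hd2 : τ (v₀, K + 1) = -1 := (h1 (v₀, K + 1)).resolve_left hd2'
      have hv₀Λ : v₀ ∈ Λ := by
        by_contra hn
        have := mono_transfer (fun j => h2 (v₀, j) hn) (hρmono v₀) K hd1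
        have h' : τ (v₀, K + 1) = 1 := this
        omega
      have hfill_int := fill_interfacial h3 h1 K
      have hdel_int := del_interfacial h3 h1 K
      have hsum : NN Λ (fillK K τ) + NN Λ (delK K τ) ≤ NN Λ τ + NN Λ τ := by
        have e1 := NN_split Λ hfill_int K
        have e2 := NN_split Λ h3 K
        have e3 := NN_split Λ hdel_int (K + 1)
        have e4 := NN_split Λ h3 (K + 1)
        rw [OD_off_fill] at e1
        rw [OD_off_del] at e3
        have hk := key_ineq Λ h1 K
        omega
      by_cases hfill : NN Λ (fillK K τ) ≤ NN Λ τ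
      · have hHS : (HSet Λ (fillK K τ)).ncard < (HSet Λ τ).ncard :=
          Set.ncard_lt_ncard (HS_fill_ssubset Λ h1 K hv₀Λ hd1 hd2) (HSet_finite Λ h3)
        have hμ : NN Λ (fillK K τ) * (Λ.card + 1) + (HSet Λ (fillK K τ)).ncard ≤ n := by
          have hmul := Nat.mul_le_mul_right (Λ.card + 1) hfill
          omega
        obtain ⟨τ', a1, a2, a3, a4, a5, a6⟩ := ih (fillK K τ) (fill_config h1 K)
          (fill_outside h1 K h2 hρmono) hfill_int
          (fun v k u1 u2 => h4 v k (fill_up h1 K u1 u2).1 (fill_up h1 K u1 u2).2) hμ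
        exact ⟨τ', a1, a2, a3, a4, a5, a6.trans hfill⟩
      · have hdel : NN Λ (delK K τ) + 1 ≤ NN Λ τ := by omega
        have hHS := HS_del_card Λ h3 h1 K
        have hμ : NN Λ (delK K τ) * (Λ.card + 1) + (HSet Λ (delK K τ)).ncard ≤ n := by
          have hmul := Nat.mul_le_mul_right (Λ.card + 1) hdel
          rw [add_mul, one_mul] at hmul
          omega
        obtain ⟨τ', a1, a2, a3, a4, a5, a6⟩ := ih (delK K τ) (del_config h1 K)
          (del_outside h1 K h2 hρmono) hdel_int
          (fun v k u1 u2 => h4 v k (del_up h1 K u1 u2).1 (del_up h1 K u1 u2).2) hμ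
        exact ⟨τ', a1, a2, a3, a4, a5, a6.trans (by omega)⟩

end DFAux

/-- For every interfacial `σ ∈ Ω^{Λ×ℤ,ρ}` (with `ρ` having no
overhangs) there is a configuration `σ' ∈ Ω^{Λ×ℤ,ρ}` with no overhangs whose upward
sign changes are upward sign changes of `σ`, and whose number of perpendicular
disagreement edges meeting `Λ×ℤ` (a finite number) is at most that of `σ`. -/
theorem no_overhangs_with_perpendicular_count
    (d : ℕ) (hd : 1 ≤ d) (Λ : Finset (Base d))
    (ρ : V d → ℤ) (hρc : IsConfig ρ) (hρ : NoOverhangs ρ)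
    (σ : V d → ℤ) (hσc : IsConfig σ) (hσb : ∀ x : V d, x.1 ∉ Λ → σ x = ρ x)
    (hσi : Interfacial σ) :
    ∃ σ' : V d → ℤ, IsConfig σ' ∧ (∀ x : V d, x.1 ∉ Λ → σ' x = ρ x) ∧
      NoOverhangs σ' ∧
      (∀ v : Base d, ∀ k : ℤ, σ' (v, k) = -1 → σ' (v, k + 1) = 1 →
        σ (v, k) = -1 ∧ σ (v, k + 1) = 1) ∧
      (perpDis Λ σ').Finite ∧ (perpDis Λ σ).Finite ∧
      (perpDis Λ σ').ncard ≤ (perpDis Λ σ).ncard := by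
  classical
  have hρmono : ∀ v, DFAux.MonoC fun k => ρ (v, k) := DFAux.noOverhangs_mono hρc hρ
  obtain ⟨τ', a1, a2, a3, a4, a5, a6⟩ :=
    DFAux.process Λ σ ρ hρmono (DFAux.NN Λ σ * (Λ.card + 1) + (DFAux.HSet Λ σ).ncard)
      σ hσc hσb hσi (fun v k u1 u2 => ⟨u1, u2⟩) le_rfl
  refine ⟨τ', a1, a2, ⟨a3, fun v => DFAux.step_exists_unique (fun k => a1 (v, k))
    (a3 v).1 (a3 v).2 (a4 v)⟩, fun v k => a5 v k, DFAux.perpDis_finite Λ a3,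
    DFAux.perpDis_finite Λ hσi, ?_⟩
  rw [DFAux.perpDis_ncard, DFAux.perpDis_ncard]
  exact a6
end

section
/- Let d ≥ 1 and let A be a nonempty finite subset of ℤ^d. Then |∂A| ≥ 2d·|A|^{1−1/d}. Moreover, for every v ∈ ℤ^d and every positive integer N, letting B = v + {0,1,…,N−1}^d, it holds that |∂A ∩ (B×B)| ≥ (2/(3N))·min{|A∩B|, |B∖A|}. -/
namespace DF

/-- Edges of the base lattice `ℤ^d`: unordered pairs at ℓ¹-distance 1. -/
def IsBaseEdge {d : ℕ} (e : Sym2 (Base d)) : Prop :=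
  ∃ u v : Base d, baseAdj u v ∧ e = s(u, v)

/-- `|τ u − τ v|` over an unordered pair. -/
def pairAbsDiff {d : ℕ} (τ : Base d → ℤ) : Sym2 (Base d) → ℤ :=
  Sym2.lift ⟨fun u v => |τ u - τ v|, fun _ _ => abs_sub_comm _ _⟩

/-- A shift: a finitely supported `τ : ℤ^d → ℤ`. -/
def IsShift {d : ℕ} (τ : Base d → ℤ) : Prop := {v | τ v ≠ 0}.Finite

/-- Total variation of a shift: the sum of `|τ u − τ v|` over all edges. -/
noncomputable def TV {d : ℕ} (τ : Base d → ℤ) : ℤ :=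
  ∑ᶠ e ∈ {e : Sym2 (Base d) | IsBaseEdge e}, pairAbsDiff τ e

/-- Total variation of `τ` restricted to edges with both endpoints in `A`. -/
noncomputable def TVon {d : ℕ} (τ : Base d → ℤ) (A : Set (Base d)) : ℤ :=
  ∑ᶠ e ∈ {e : Sym2 (Base d) | IsBaseEdge e ∧ ∀ x ∈ e, x ∈ A}, pairAbsDiff τ e

/-- The discrete cube `Q_N(c) = c + {0,1,…,N−1}^d` as a finset. -/
noncomputable def cubeFinset {d : ℕ} (N : ℕ) (c : Base d) : Finset (Base d) :=
  Fintype.piFinset fun i => Finset.Ico (c i) (c i + (N : ℤ))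

/-- The base point `N·⌊u/N⌋` of the cube of side `N` containing `u`. -/
def cubePt {d : ℕ} (N : ℕ) (u : Base d) : Base d := fun i => N * Int.fdiv (u i) N

/-- The average `τ^rough_N(u)` of `τ` over the cube of the partition `𝒫_N`
containing `u`. -/
noncomputable def roughAvg {d : ℕ} (N : ℕ) (τ : Base d → ℤ) (u : Base d) : ℝ :=
  (∑ w ∈ cubeFinset N (cubePt N u), (τ w : ℝ)) / (N : ℝ) ^ d

/-- The integer nearest to `a`, with the convention `[k + 1/2] = k`. -/
noncomputable def nearestInt (a : ℝ) : ℤ := ⌈a - 1 / 2⌉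

/-- The coarse graining `τ_N`. -/
noncomputable def coarse {d : ℕ} (N : ℕ) (τ : Base d → ℤ) (u : Base d) : ℤ :=
  nearestInt (roughAvg N τ u)

end DF

namespace DF

/-- The edge boundary of `A`: ordered pairs `(u,v)` with `u ∈ A`, `v ∉ A` adjacent. -/
def edgeBoundary {d : ℕ} (A : Set (Base d)) : Set (Base d × Base d) :=
  {p | p.1 ∈ A ∧ p.2 ∉ A ∧ baseAdj p.1 p.2}

/-- The discrete box `v + {0,1,…,N−1}^d` as a set. -/
def box {d : ℕ} (v : Base d) (N : ℕ) : Set (Base d) :=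
  {x | ∀ i, v i ≤ x i ∧ x i < v i + (N : ℤ)}

end DF

open DF

namespace DF

lemma baseAdj_update {d : ℕ} (u : Base d) (i : Fin d) (e : ℤ) (he : |e| = 1) :
    baseAdj u (Function.update u i (u i + e)) := by
  unfold baseAdj dist1
  rw [Finset.sum_eq_single i]
  · simp [he, abs_sub_comm]
  · intro j _ hj
    simp [Function.update_of_ne hj]
  · simp

lemma baseAdj_iff {d : ℕ} (u v : Base d) :
    baseAdj u v ↔ ∃ i, v = Function.update u i (u i + 1) ∨
      v = Function.update u i (u i - 1) := by
  constructor
  · intro h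
    unfold baseAdj dist1 at h
    have hnn : ∀ j : Fin d, 0 ≤ |u j - v j| := fun j => abs_nonneg _
    have hex : ∃ i : Fin d, |u i - v i| ≠ 0 := by
      by_contra hc
      push_neg at hc
      simp only [hc, Finset.sum_const_zero] at h
      exact one_ne_zero h.symm
    obtain ⟨i, hi⟩ := hex
    have h1 : 1 ≤ |u i - v i| := lt_of_le_of_ne (hnn i) (Ne.symm hi)
    have hsplit : |u i - v i| + ∑ j ∈ Finset.univ.erase i, |u j - v j| = 1 := by
      rw [← h, ← Finset.add_sum_erase _ _ (Finset.mem_univ i)]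
    have hrest : ∑ j ∈ Finset.univ.erase i, |u j - v j| = 0 := by
      have : 0 ≤ ∑ j ∈ Finset.univ.erase i, |u j - v j| :=
        Finset.sum_nonneg fun j _ => hnn j
      omega
    have hz : ∀ j ∈ Finset.univ.erase i, |u j - v j| = 0 := by
      intro j hj
      have := (Finset.sum_eq_zero_iff_of_nonneg (fun j _ => hnn j)).mp hrest j hj
      exact this
    have heq : ∀ j, j ≠ i → v j = u j := by
      intro j hj
      have := hz j (Finset.mem_erase.mpr ⟨hj, Finset.mem_univ j⟩)
      have := abs_eq_zero.mp this
      omega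
    have hii : |u i - v i| = 1 := by omega
    refine ⟨i, ?_⟩
    rcases abs_eq (by norm_num : (0:ℤ) ≤ 1) |>.mp hii with h' | h'
    · right; funext j
      by_cases hj : j = i
      · subst hj; simp; omega
      · simp [Function.update_of_ne hj, heq j hj]
    · left; funext j
      by_cases hj : j = i
      · subst hj; simp; omega
      · simp [Function.update_of_ne hj, heq j hj]
  · rintro ⟨i, h | h⟩ <;> subst h
    · exact baseAdj_update u i 1 (by norm_num)
    · exact baseAdj_update u i (-1) (by norm_num)

/-- If a predicate on `ℕ` holds somewhere and fails somewhere below `N`,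
then it flips between two consecutive values below `N`. -/
lemma exists_flip {P : ℕ → Prop} {a b N : ℕ} (ha : a < N) (hb : b < N)
    (hPa : P a) (hPb : ¬ P b) :
    ∃ s, s + 1 < N ∧ ((P s ∧ ¬ P (s+1)) ∨ (¬ P s ∧ P (s+1))) := by
  by_contra hc
  classical
  have hc : ∀ s, s + 1 < N → ¬ ((P s ∧ ¬ P (s+1)) ∨ (¬ P s ∧ P (s+1))) := by
    intro s hs h
    exact hc ⟨s, hs, h⟩
  have hconst : ∀ x, x < N → (P x ↔ P 0) := by
    intro x
    induction x with
    | zero => intro _; rfl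
    | succ n ih =>
      intro hx
      have hn : n < N := by omega
      have h1 := hc n hx
      have h2 := ih hn
      constructor
      · intro hPn1
        by_cases hPn : P n
        · exact h2.mp hPn
        · exact (h1 (Or.inr ⟨hPn, hPn1⟩)).elim
      · intro h0
        have hPn : P n := h2.mpr h0
        by_contra hPn1
        exact h1 (Or.inl ⟨hPn, hPn1⟩)
  have := (hconst a ha).mp hPa
  exact hPb ((hconst b hb).mpr this)

/-- Numeric core lemma for the box isoperimetric inequality. -/
lemma numeric_core {n M : ℕ} (a b : ℕ → ℕ) (mix : ℕ)
    (hM : ∀ s < n, a s + b s = M)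
    (hmix : ∀ s < n, ∀ t < n, a s ≤ a t + mix)
    (hab : ∑ s ∈ Finset.range n, a s ≤ ∑ s ∈ Finset.range n, b s) :
    2 * (∑ s ∈ Finset.range n, a s) ≤
      2 * ∑ s ∈ Finset.range n, min (a s) (b s) + 3 * n * mix := by
  classical
  have key : 2 * ∑ s ∈ Finset.range n, (a s - b s) ≤ 3 * n * mix := by
    by_cases hcase : ∀ s < n, a s ≤ b s
    · have : ∑ s ∈ Finset.range n, (a s - b s) = 0 := by
        apply Finset.sum_eq_zero
        intro s hs
        have := hcase s (Finset.mem_range.mp hs)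
        omega
      omega
    · push_neg at hcase
      obtain ⟨sp, hsp, hsp'⟩ := hcase
      have hn0 : 0 < n := by omega
      -- there is s with a s < b s
      have hexm : ∃ sm < n, a sm < b sm := by
        by_contra hc
        push_neg at hc
        have hlt : ∑ s ∈ Finset.range n, b s < ∑ s ∈ Finset.range n, a s := by
          apply Finset.sum_lt_sum
          · intro s hs; exact hc s (Finset.mem_range.mp hs)
          · exact ⟨sp, Finset.mem_range.mpr hsp, by omega⟩
        omega
      obtain ⟨sm, hsm, hsm'⟩ := hexm
      obtain ⟨smax, hsmax, hmax⟩ := Finset.exists_max_image (Finset.range n) a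
        ⟨0, Finset.mem_range.mpr hn0⟩
      obtain ⟨smin, hsmin, hmin⟩ := Finset.exists_min_image (Finset.range n) a
        ⟨0, Finset.mem_range.mpr hn0⟩
      rw [Finset.mem_range] at hsmax hsmin
      have h1 : ∑ s ∈ Finset.range n, (a s - b s) ≤ n * (a smax - b smax) := by
        calc ∑ s ∈ Finset.range n, (a s - b s)
            ≤ ∑ _s ∈ Finset.range n, (a smax - b smax) := by
              apply Finset.sum_le_sum
              intro s hs
              have h2 := hmax s hs
              have h3 := hM s (Finset.mem_range.mp hs)
              have h4 := hM smax hsmax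
              omega
          _ = n * (a smax - b smax) := by
              rw [Finset.sum_const, Finset.card_range, smul_eq_mul]
      have h2 : ∑ s ∈ Finset.range n, (a s - b s) ≤ n * (b smin - a smin) := by
        have hident : ∑ s ∈ Finset.range n, a s + ∑ s ∈ Finset.range n, (b s - a s)
            = ∑ s ∈ Finset.range n, b s + ∑ s ∈ Finset.range n, (a s - b s) := by
          rw [← Finset.sum_add_distrib, ← Finset.sum_add_distrib]
          apply Finset.sum_congr rfl
          intro s _; omega
        have hba : ∑ s ∈ Finset.range n, (b s - a s) ≤ n * (b smin - a smin) := by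
          calc ∑ s ∈ Finset.range n, (b s - a s)
              ≤ ∑ _s ∈ Finset.range n, (b smin - a smin) := by
                apply Finset.sum_le_sum
                intro s hs
                have h2' := hmin s hs
                have h3 := hM s (Finset.mem_range.mp hs)
                have h4 := hM smin hsmin
                omega
            _ = n * (b smin - a smin) := by
                rw [Finset.sum_const, Finset.card_range, smul_eq_mul]
        omega
      -- a smax ≥ b smax  and a smin < b smin
      have hMmax := hM smax hsmax
      have hMmin := hM smin hsmin
      have hMsp := hM sp hsp
      have hMsm := hM sm hsm
      have hmax_sp := hmax sp (Finset.mem_range.mpr hsp)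
      have hmin_sm := hmin sm (Finset.mem_range.mpr hsm)
      have hgap : (a smax - b smax) + (b smin - a smin) ≤ 2 * mix := by
        have := hmix smax hsmax smin hsmin
        omega
      calc 2 * ∑ s ∈ Finset.range n, (a s - b s)
          ≤ n * (a smax - b smax) + n * (b smin - a smin) := by omega
        _ = n * ((a smax - b smax) + (b smin - a smin)) := by ring
        _ ≤ n * (2 * mix) := Nat.mul_le_mul_left n hgap
        _ ≤ 3 * n * mix := by ring_nf; omega
  have hsplit : ∑ s ∈ Finset.range n, a s
      = ∑ s ∈ Finset.range n, min (a s) (b s) + ∑ s ∈ Finset.range n, (a s - b s) := by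
    rw [← Finset.sum_add_distrib]
    apply Finset.sum_congr rfl
    intro s _; omega
  omega


open Finset

variable {d : ℕ}

/-- `k`-dimensional sub-box. -/
noncomputable def SB (N k : ℕ) (c : Base d) : Finset (Base d) :=
  Fintype.piFinset fun j => if (j : ℕ) < k then Finset.Ico (c j) (c j + (N:ℤ)) else {c j}

lemma mem_SB {N k : ℕ} {c x : Base d} :
    x ∈ SB N k c ↔ ∀ j : Fin d,
      ((j:ℕ) < k → c j ≤ x j ∧ x j < c j + (N:ℤ)) ∧ (k ≤ (j:ℕ) → x j = c j) := by
  simp only [SB, Fintype.mem_piFinset]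
  constructor
  · intro h j
    have hj' := h j
    by_cases hj : (j:ℕ) < k
    · simp [hj] at hj'
      exact ⟨fun _ => hj', fun hk => absurd hj (by omega)⟩
    · simp [hj] at hj'
      exact ⟨fun hk => absurd hk hj, fun _ => hj'⟩
  · intro h j
    by_cases hj : (j:ℕ) < k
    · simp [hj]; exact (h j).1 hj
    · simp [hj]; exact (h j).2 (by omega)

lemma SB_card {N k : ℕ} (c : Base d) :
    (SB N k c).card = ∏ j : Fin d, if (j:ℕ) < k then N else 1 := by
  rw [SB, Fintype.card_piFinset]
  apply Finset.prod_congr rfl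
  intro j _
  by_cases hj : (j:ℕ) < k <;> simp [hj]

open scoped Classical in
noncomputable def aF (A : Set (Base d)) (N k : ℕ) (c : Base d) : Finset (Base d) :=
  (SB N k c).filter (fun x => x ∈ A)

open scoped Classical in
noncomputable def bF (A : Set (Base d)) (N k : ℕ) (c : Base d) : Finset (Base d) :=
  (SB N k c).filter (fun x => x ∉ A)

open scoped Classical in
noncomputable def EF (A : Set (Base d)) (N k : ℕ) (c : Base d) : Finset (Base d × Base d) :=
  ((SB N k c) ×ˢ (SB N k c)).filter (fun p => p ∈ edgeBoundary A)

open scoped Classical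

lemma aF_card_add_bF_card (A : Set (Base d)) (N k : ℕ) (c : Base d) :
    (aF A N k c).card + (bF A N k c).card = (SB N k c).card := by
  classical
  rw [aF, bF]
  rw [Finset.card_filter_add_card_filter_not]

/-- The key induction for the local isoperimetric inequality. -/
lemma key_box (A : Set (Base d)) (N : ℕ) (hN : 0 < N) :
    ∀ k, ∀ c : Base d,
      2 * min (aF A N k c).card (bF A N k c).card ≤ 3 * N * (EF A N k c).card := by
  intro k
  induction k with
  | zero =>
    intro c
    have hsb : SB N 0 c = {c} := by
      ext x
      simp only [mem_SB, Finset.mem_singleton]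
      constructor
      · intro h; funext j; exact (h j).2 (by omega)
      · intro h j; subst h; exact ⟨fun h' => absurd h' (by omega), fun _ => rfl⟩
    have := aF_card_add_bF_card A N 0 c
    rw [hsb] at this
    simp only [Finset.card_singleton] at this
    omega
  | succ k ih =>
    intro c
    by_cases hk : k < d
    case neg =>
      -- the box does not grow
      have hsb : SB N (k+1) c = SB N k c := by
        ext x
        simp only [mem_SB]
        constructor
        · intro h j
          exact ⟨fun hj => (h j).1 (by omega), fun hj => (h j).2 (by omega)⟩
        · intro h j
          refine ⟨fun hj => (h j).1 (by omega), fun hj => (h j).2 (by omega)⟩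
      rw [aF, bF, EF, hsb, ← aF, ← bF, ← EF]
      exact ih c
    case pos =>
    set i : Fin d := ⟨k, hk⟩ with hi
    have hival : (i:ℕ) = k := rfl
    set cs : ℕ → Base d := fun s => Function.update c i (c i + (s:ℤ)) with hcs
    -- basic membership facts
    have hcs_eval : ∀ s, ∀ j, j ≠ i → cs s j = c j := by
      intro s j hj; simp [hcs, Function.update_of_ne hj]
    have hcs_i : ∀ s, cs s i = c i + (s:ℤ) := by intro s; simp [hcs]
    have hSB_i : ∀ x ∈ SB N k c, x i = c i := by
      intro x hx
      exact (mem_SB.mp hx i).2 (by omega)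
    have hF1 : ∀ s, s < N → ∀ x ∈ SB N k (cs s), x ∈ SB N (k+1) c := by
      intro s hs x hx
      rw [mem_SB] at hx ⊢
      intro j
      constructor
      · intro hj
        by_cases hj' : (j:ℕ) < k
        · have := (hx j).1 hj'
          rwa [hcs_eval s j (by intro h; subst h; omega)] at this
        · have hji : j = i := by
            apply Fin.ext; omega
          have hx2 : x j = cs s j := (hx j).2 (by omega)
          rw [hji] at hx2 ⊢
          rw [hx2, hcs_i]
          constructor
          · omega
          · have : (s:ℤ) < (N:ℤ) := by exact_mod_cast hs
            omega
      · intro hj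
        have hji : j ≠ i := by intro h; subst h; omega
        have := (hx j).2 (by omega)
        rw [this, hcs_eval s j hji]
    have hF3 : ∀ s, ∀ x ∈ SB N k (cs s), x i = c i + (s:ℤ) := by
      intro s x hx
      rw [(mem_SB.mp hx i).2 (by omega), hcs_i]
    have hF2 : ∀ x ∈ SB N (k+1) c, ∃ s < N, x ∈ SB N k (cs s) := by
      intro x hx
      rw [mem_SB] at hx
      have hxi := (hx i).1 (by omega)
      refine ⟨(x i - c i).toNat, by omega, ?_⟩
      rw [mem_SB]
      intro j
      constructor
      · intro hj
        have hji : j ≠ i := by intro h; subst h; omega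
        rw [hcs_eval _ j hji]
        exact (hx j).1 (by omega)
      · intro hj
        by_cases hji : j = i
        · subst hji
          rw [hcs_i]
          omega
        · rw [hcs_eval _ j hji]
          exact (hx j).2 (by omega)
    -- slab decomposition of SB (k+1)
    have hSBdec : SB N (k+1) c = (Finset.range N).biUnion (fun s => SB N k (cs s)) := by
      ext x
      simp only [Finset.mem_biUnion, Finset.mem_range]
      constructor
      · intro hx; exact hF2 x hx
      · rintro ⟨s, hs, hx⟩; exact hF1 s hs x hx
    have hdisj : ∀ s ∈ Finset.range N, ∀ t ∈ Finset.range N, s ≠ t →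
        Disjoint (SB N k (cs s)) (SB N k (cs t)) := by
      intro s _ t _ hst
      rw [Finset.disjoint_left]
      intro x hxs hxt
      have h1 := hF3 s x hxs
      have h2 := hF3 t x hxt
      rw [h1] at h2
      have : (s:ℤ) = (t:ℤ) := by omega
      exact hst (by exact_mod_cast this)
    -- counting a and b
    have haDec : (aF A N (k+1) c).card = ∑ s ∈ Finset.range N, (aF A N k (cs s)).card := by
      rw [aF, hSBdec, Finset.filter_biUnion, Finset.card_biUnion]
      · rfl
      · intro s hs t ht hst
        exact Finset.disjoint_filter_filter (hdisj s hs t ht hst)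
    have hbDec : (bF A N (k+1) c).card = ∑ s ∈ Finset.range N, (bF A N k (cs s)).card := by
      rw [bF, hSBdec, Finset.filter_biUnion, Finset.card_biUnion]
      · rfl
      · intro s hs t ht hst
        exact Finset.disjoint_filter_filter (hdisj s hs t ht hst)
    -- full and mixed columns
    set colA : Finset (Base d) :=
      (SB N k c).filter (fun w => ∀ s < N, Function.update w i (c i + (s:ℤ)) ∈ A) with hcolA
    set colO : Finset (Base d) :=
      (SB N k c).filter (fun w => ∀ s < N, Function.update w i (c i + (s:ℤ)) ∉ A) with hcolO
    set mixF : Finset (Base d) :=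
      (SB N k c).filter (fun w => (∃ s < N, Function.update w i (c i + (s:ℤ)) ∈ A)
        ∧ (∃ s < N, Function.update w i (c i + (s:ℤ)) ∉ A)) with hmixF
    -- column points are in the big box / in slabs
    have hupd_mem : ∀ w ∈ SB N k c, ∀ s, Function.update w i (c i + (s:ℤ)) ∈ SB N k (cs s) := by
      intro w hw s
      rw [mem_SB] at hw ⊢
      intro j
      constructor
      · intro hj
        have hji : j ≠ i := by intro h; subst h; omega
        rw [Function.update_of_ne hji, hcs_eval s j hji]
        exact (hw j).1 hj
      · intro hj
        by_cases hji : j = i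
        · subst hji; rw [Function.update_self, hcs_i]
        · rw [Function.update_of_ne hji, hcs_eval s j hji]
          exact (hw j).2 hj
    have hupd_recover : ∀ w ∈ SB N k c, ∀ t : ℤ,
        Function.update (Function.update w i t) i (c i) = w := by
      intro w hw t
      rw [Function.update_idem, ← hSB_i w hw, Function.update_eq_self]
    -- colA.card ≤ a_s for all s < N
    have hcolA_le : ∀ s, s < N → colA.card ≤ (aF A N k (cs s)).card := by
      intro s hs
      apply Finset.card_le_card_of_injOn (fun w => Function.update w i (c i + (s:ℤ)))
      · intro w hw
        rw [Finset.mem_coe, hcolA, Finset.mem_filter] at hw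
        rw [Finset.mem_coe, aF, Finset.mem_filter]
        exact ⟨hupd_mem w hw.1 s, hw.2 s hs⟩
      · intro w hw w' hw' heq
        rw [Finset.mem_coe, hcolA, Finset.mem_filter] at hw hw'
        have := congrArg (fun x => Function.update x i (c i)) heq
        simpa [hupd_recover w hw.1, hupd_recover w' hw'.1] using this
    have hcolO_le : ∀ s, s < N → colO.card ≤ (bF A N k (cs s)).card := by
      intro s hs
      apply Finset.card_le_card_of_injOn (fun w => Function.update w i (c i + (s:ℤ)))
      · intro w hw
        rw [Finset.mem_coe, hcolO, Finset.mem_filter] at hw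
        rw [Finset.mem_coe, bF, Finset.mem_filter]
        exact ⟨hupd_mem w hw.1 s, hw.2 s hs⟩
      · intro w hw w' hw' heq
        rw [Finset.mem_coe, hcolO, Finset.mem_filter] at hw hw'
        have := congrArg (fun x => Function.update x i (c i)) heq
        simpa [hupd_recover w hw.1, hupd_recover w' hw'.1] using this
    -- cover
    have hcover : (SB N k c).card ≤ colA.card + colO.card + mixF.card := by
      have hsub : SB N k c ⊆ colA ∪ colO ∪ mixF := by
        intro w hw
        by_cases h1 : ∀ s < N, Function.update w i (c i + (s:ℤ)) ∈ A
        · exact Finset.mem_union_left _ (Finset.mem_union_left _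
            (Finset.mem_filter.mpr ⟨hw, h1⟩))
        by_cases h2 : ∀ s < N, Function.update w i (c i + (s:ℤ)) ∉ A
        · exact Finset.mem_union_left _ (Finset.mem_union_right _
            (Finset.mem_filter.mpr ⟨hw, h2⟩))
        push_neg at h1 h2
        obtain ⟨s1, hs1, hs1'⟩ := h1
        obtain ⟨s2, hs2, hs2'⟩ := h2
        exact Finset.mem_union_right _ (Finset.mem_filter.mpr
          ⟨hw, ⟨s2, hs2, hs2'⟩, ⟨s1, hs1, hs1'⟩⟩)
      calc (SB N k c).card ≤ (colA ∪ colO ∪ mixF).card := Finset.card_le_card hsub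
        _ ≤ (colA ∪ colO).card + mixF.card := Finset.card_union_le _ _
        _ ≤ colA.card + colO.card + mixF.card := by
            have := Finset.card_union_le colA colO
            omega
    -- edges: same-slab vs cross
    have hEdec : ∑ s ∈ Finset.range N, (EF A N k (cs s)).card + mixF.card
        ≤ (EF A N (k+1) c).card := by
      classical
      set Esame := (EF A N (k+1) c).filter (fun p => p.1 i = p.2 i) with hEsame
      set Ecross := (EF A N (k+1) c).filter (fun p => ¬ (p.1 i = p.2 i)) with hEcross
      have hsplit : Esame.card + Ecross.card = (EF A N (k+1) c).card := by
        rw [hEsame, hEcross, Finset.card_filter_add_card_filter_not]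
      have hsame : ∑ s ∈ Finset.range N, (EF A N k (cs s)).card ≤ Esame.card := by
        rw [← Finset.card_biUnion]
        · apply Finset.card_le_card
          intro p hp
          rw [Finset.mem_biUnion] at hp
          obtain ⟨s, hs, hp⟩ := hp
          rw [Finset.mem_range] at hs
          rw [EF, Finset.mem_filter, Finset.mem_product] at hp
          rw [hEsame, Finset.mem_filter, EF, Finset.mem_filter, Finset.mem_product]
          refine ⟨⟨⟨hF1 s hs _ hp.1.1, hF1 s hs _ hp.1.2⟩, hp.2⟩, ?_⟩
          rw [hF3 s _ hp.1.1, hF3 s _ hp.1.2]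
        · intro s hs t ht hst
          rw [Function.onFun, Finset.disjoint_left]
          intro p hps hpt
          rw [EF, Finset.mem_filter, Finset.mem_product] at hps hpt
          have h1 := hF3 s _ hps.1.1
          have h2 := hF3 t _ hpt.1.1
          rw [h1] at h2
          have : (s:ℤ) = (t:ℤ) := by omega
          exact hst (by exact_mod_cast this)
      have hcross : mixF.card ≤ Ecross.card := by
        have hstep : ∀ w ∈ mixF, ∃ p : Base d × Base d,
            p ∈ Ecross ∧ Function.update p.1 i (c i) = w := by
          intro w hw
          rw [hmixF, Finset.mem_filter] at hw
          obtain ⟨hwSB, ⟨sa, hsa, hsa'⟩, sb, hsb, hsb'⟩ := hw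
          obtain ⟨s, hs1, hflip⟩ := exists_flip (P := fun s =>
            Function.update w i (c i + (s:ℤ)) ∈ A) hsa hsb hsa' hsb'
          set u : ℕ → Base d := fun s => Function.update w i (c i + (s:ℤ)) with hu
          have humem : ∀ t, t < N → u t ∈ SB N (k+1) c := by
            intro t ht
            exact hF1 t ht _ (hupd_mem w hwSB t)
          have hadj1 : baseAdj (u s) (u (s+1)) := by
            have : u (s+1) = Function.update (u s) i (u s i + 1) := by
              rw [hu]
              simp only [Function.update_idem, Function.update_self]
              congr 1
              push_cast; ring
            rw [this]
            exact baseAdj_update (u s) i 1 (by norm_num)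
          have hadj2 : baseAdj (u (s+1)) (u s) := by
            have : u s = Function.update (u (s+1)) i (u (s+1) i - 1) := by
              rw [hu]
              simp only [Function.update_idem, Function.update_self]
              congr 1
              push_cast; ring
            rw [this]
            exact baseAdj_update (u (s+1)) i (-1) (by norm_num)
          have hui : ∀ t, u t i = c i + (t:ℤ) := by
            intro t; rw [hu]; simp
          have hne : ¬ (u s i = u (s+1) i) := by
            rw [hui, hui]; push_cast; omega
          have hrec : ∀ t, Function.update (u t) i (c i) = w := by
            intro t; exact hupd_recover w hwSB _
          rcases hflip with ⟨hps, hps1⟩ | ⟨hps, hps1⟩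
          · refine ⟨(u s, u (s+1)), ?_, hrec s⟩
            rw [hEcross, Finset.mem_filter, EF, Finset.mem_filter, Finset.mem_product]
            exact ⟨⟨⟨humem s (by omega), humem (s+1) hs1⟩, hps, hps1, hadj1⟩, hne⟩
          · refine ⟨(u (s+1), u s), ?_, hrec (s+1)⟩
            rw [hEcross, Finset.mem_filter, EF, Finset.mem_filter, Finset.mem_product]
            refine ⟨⟨⟨humem (s+1) hs1, humem s (by omega)⟩, hps1, hps, hadj2⟩, ?_⟩
            show ¬ (u (s+1) i = u s i)
            rw [hui, hui]; push_cast; omega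
        apply Finset.card_le_card_of_injOn
          (fun w => if h : w ∈ mixF then Classical.choose (hstep w h) else default)
        · intro w hw
          rw [Finset.mem_coe] at hw
          simp only [dif_pos hw]
          exact (Classical.choose_spec (hstep w hw)).1
        · intro w hw w' hw' heq
          simp only [Finset.mem_coe] at hw hw'
          simp only [dif_pos hw, dif_pos hw'] at heq
          have h1 := (Classical.choose_spec (hstep w hw)).2
          have h2 := (Classical.choose_spec (hstep w' hw')).2
          rw [← h1, ← h2, heq]
      omega
    -- cards of slabs
    have hM : ∀ s, (SB N k (cs s)).card = (SB N k c).card := by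
      intro s; rw [SB_card, SB_card]
    set M := (SB N k c).card with hMdef
    have habM : ∀ s, s < N → (aF A N k (cs s)).card + (bF A N k (cs s)).card = M := by
      intro s _
      rw [aF_card_add_bF_card, hM]
    have hmixhyp : ∀ s, s < N → ∀ t, t < N →
        (aF A N k (cs s)).card ≤ (aF A N k (cs t)).card + mixF.card := by
      intro s hs t ht
      have h1 := hcolA_le t ht
      have h2 := hcolO_le s hs
      have h3 := habM s hs
      have h4 := habM t ht
      omega
    -- apply numeric lemma and IH
    have hnum : 2 * min ((aF A N (k+1) c).card) ((bF A N (k+1) c).card) ≤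
        2 * ∑ s ∈ Finset.range N, min (aF A N k (cs s)).card (bF A N k (cs s)).card
          + 3 * N * mixF.card := by
      rw [haDec, hbDec]
      rcases le_total (∑ s ∈ Finset.range N, (aF A N k (cs s)).card)
        (∑ s ∈ Finset.range N, (bF A N k (cs s)).card) with h | h
      · rw [min_eq_left h]
        exact numeric_core _ _ _ habM hmixhyp h
      · rw [min_eq_right h]
        have := numeric_core (fun s => (bF A N k (cs s)).card)
          (fun s => (aF A N k (cs s)).card) mixF.card
          (fun s hs => by rw [Nat.add_comm]; exact habM s hs)
          (fun s hs t ht => by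
            show (bF A N k (cs s)).card ≤ (bF A N k (cs t)).card + mixF.card
            have h1 := habM s hs
            have h2 := habM t ht
            have := hmixhyp t ht s hs
            omega) h
        calc 2 * ∑ s ∈ Finset.range N, (bF A N k (cs s)).card
            ≤ 2 * ∑ s ∈ Finset.range N, min ((bF A N k (cs s)).card) ((aF A N k (cs s)).card)
              + 3 * N * mixF.card := this
          _ = 2 * ∑ s ∈ Finset.range N, min ((aF A N k (cs s)).card) ((bF A N k (cs s)).card)
              + 3 * N * mixF.card := by
              congr 2
              apply Finset.sum_congr rfl
              intro s _
              rw [Nat.min_comm]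
    have hIH : ∑ s ∈ Finset.range N, 2 * min ((aF A N k (cs s)).card) ((bF A N k (cs s)).card)
        ≤ ∑ s ∈ Finset.range N, 3 * N * (EF A N k (cs s)).card :=
      Finset.sum_le_sum (fun s _ => ih (cs s))
    rw [← Finset.mul_sum] at hIH
    rw [← Finset.mul_sum] at hIH
    calc 2 * min ((aF A N (k+1) c).card) ((bF A N (k+1) c).card)
        ≤ 2 * ∑ s ∈ Finset.range N, min (aF A N k (cs s)).card (bF A N k (cs s)).card
          + 3 * N * mixF.card := hnum
      _ ≤ 3 * N * (∑ s ∈ Finset.range N, (EF A N k (cs s)).card) + 3 * N * mixF.card := by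
          omega
      _ = 3 * N * (∑ s ∈ Finset.range N, (EF A N k (cs s)).card + mixF.card) := by ring
      _ ≤ 3 * N * (EF A N (k+1) c).card := Nat.mul_le_mul_left _ hEdec


end DF

open Finset
open scoped NNReal

/-- Generalized Hölder inequality (equal exponents), power form, in `ℝ≥0`. -/
lemma holder_pow {κ ι : Type*} [DecidableEq ι] (T : Finset κ) :
    ∀ (s : Finset ι) (f : ι → κ → ℝ≥0),
      (∑ t ∈ T, ∏ i ∈ s, f i t) ^ s.card ≤ ∏ i ∈ s, ∑ t ∈ T, (f i t) ^ s.card := by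
  intro s
  induction s using Finset.induction_on with
  | empty => intro f; simp
  | @insert j s₀ hj ih =>
    intro f
    rcases Nat.eq_zero_or_pos s₀.card with hm | hm
    · rw [Finset.card_eq_zero] at hm
      subst hm
      simp
    · set m := s₀.card with hmdef
      have hmR : (0:ℝ) < m := by exact_mod_cast hm
      set p : ℝ := (m:ℝ) + 1 with hp
      set q : ℝ := ((m:ℝ) + 1) / m with hq
      have hp0 : p ≠ 0 := by rw [hp]; positivity
      have hpq : p.HolderConjugate q := by
        rw [Real.holderConjugate_iff_eq_conjExponent (by rw [hp]; linarith)]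
        rw [hp, hq]; congr 1; ring
      have hcard : (insert j s₀).card = m + 1 := by
        rw [Finset.card_insert_of_notMem hj, hmdef]
      rw [hcard]
      have hprod : ∀ t, ∏ i ∈ insert j s₀, f i t = f j t * ∏ i ∈ s₀, f i t :=
        fun t => Finset.prod_insert hj
      rw [Finset.prod_insert hj]
      simp only [hprod]
      set g : κ → ℝ≥0 := fun t => ∏ i ∈ s₀, f i t with hg
      have holder := NNReal.inner_le_Lp_mul_Lq T (f j) g hpq
      set h : ι → κ → ℝ≥0 := fun i t => f i t ^ q with hh
      set P : ℝ≥0 := ∑ t ∈ T, ∏ i ∈ s₀, h i t with hP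
      set a : ℝ≥0 := ∑ t ∈ T, f j t ^ (m+1 : ℕ) with ha
      set R : ℝ≥0 := ∏ i ∈ s₀, ∑ t ∈ T, f i t ^ (m+1 : ℕ) with hR
      have hgq : ∑ t ∈ T, g t ^ q = P := by
        rw [hP]
        apply Finset.sum_congr rfl
        intro t _
        show (∏ i ∈ s₀, f i t) ^ q = ∏ i ∈ s₀, f i t ^ q
        exact (NNReal.finset_prod_rpow s₀ (fun i => f i t) q).symm
      have hfp : ∑ t ∈ T, f j t ^ p = a := by
        rw [ha]
        apply Finset.sum_congr rfl
        intro t _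
        rw [← NNReal.rpow_natCast (f j t) (m+1)]
        congr 1
        rw [hp]; push_cast; ring
      have hhm : ∀ i t, h i t ^ m = f i t ^ (m+1 : ℕ) := by
        intro i t
        rw [hh]
        rw [← NNReal.rpow_natCast (f i t ^ q) m, ← NNReal.rpow_mul,
          ← NNReal.rpow_natCast (f i t) (m+1)]
        congr 1
        rw [hq]
        push_cast
        field_simp
      have hIH' : P ^ m ≤ R := by
        rw [hP, hR]
        refine (ih h).trans ?_
        apply le_of_eq
        apply Finset.prod_congr rfl
        intro i _
        apply Finset.sum_congr rfl
        intro t _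
        exact hhm i t
      rw [hgq, hfp] at holder
      calc (∑ t ∈ T, f j t * g t) ^ (m+1)
          ≤ (a ^ (1/p) * P ^ (1/q)) ^ (m+1) := pow_le_pow_left₀ zero_le holder (m+1)
        _ = a * P ^ m := by
            rw [mul_pow]
            congr 1
            · rw [← NNReal.rpow_natCast (a ^ (1/p)) (m+1), ← NNReal.rpow_mul]
              rw [show 1/p * ((m+1 : ℕ):ℝ) = 1 by rw [hp]; push_cast; field_simp]
              exact NNReal.rpow_one a
            · rw [← NNReal.rpow_natCast (P ^ (1/q)) (m+1), ← NNReal.rpow_mul]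
              rw [show 1/q * ((m+1 : ℕ):ℝ) = (m:ℝ) by rw [hq]; push_cast; field_simp]
              exact NNReal.rpow_natCast P m
        _ ≤ a * R := mul_le_mul_right hIH' a

lemma pow_root_le {m : ℕ} (hm : 0 < m) {X Y : ℝ≥0} (h : X ^ m ≤ Y) :
    X ≤ Y ^ (1/(m:ℝ)) := by
  have h2 := NNReal.rpow_le_rpow (z := 1/(m:ℝ)) h (by positivity)
  rwa [← NNReal.rpow_natCast X m, ← NNReal.rpow_mul,
    show (m:ℝ) * (1/(m:ℝ)) = 1 by field_simp, NNReal.rpow_one] at h2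

/-- Discrete Loomis–Whitney inequality. -/
lemma loomis_whitney {ι : Type*} [Fintype ι] [DecidableEq ι] :
    ∀ (s : Finset ι) (A : Finset (ι → ℤ)), A.Nonempty →
      (∀ x ∈ A, ∀ y ∈ A, ∀ i, i ∉ s → x i = y i) →
      ((A.card : ℝ≥0)) ^ (s.card - 1) ≤
        ∏ i ∈ s, ((A.image fun x => Function.update x i 0).card : ℝ≥0) := by
  intro s
  induction s using Finset.induction_on with
  | empty => intro A hA hvar; simp
  | @insert j s₀ hj ih =>
    intro A hA hvar
    classical
    set m := s₀.card with hmdef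
    have hcard : (insert j s₀).card - 1 = m := by
      rw [Finset.card_insert_of_notMem hj]; omega
    rw [hcard, Finset.prod_insert hj]
    set Pj : ℕ := (A.image fun x => Function.update x j 0).card with hPj
    have hPj1 : 1 ≤ Pj := Finset.Nonempty.card_pos (hA.image _)
    rcases Nat.eq_zero_or_pos m with hm | hm
    · rw [hm, pow_zero]
      have h1 : (1:ℝ≥0) ≤ (Pj:ℝ≥0) := by exact_mod_cast hPj1
      calc (1:ℝ≥0) ≤ (Pj:ℝ≥0) := h1
        _ = (Pj:ℝ≥0) * 1 := by ring
        _ ≤ _ := by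
            apply mul_le_mul_right
            apply Finset.one_le_prod'
            intro i hi
            have : i ∈ insert j s₀ := Finset.mem_insert_of_mem hi
            have hne : (A.image fun x => Function.update x i 0).Nonempty := hA.image _
            exact_mod_cast Finset.Nonempty.card_pos hne
    -- main case m ≥ 1
    set T : Finset ℤ := A.image (fun x => x j) with hT
    set At : ℤ → Finset (ι → ℤ) := fun t => A.filter (fun x => x j = t) with hAt
    have hfib : A.card = ∑ t ∈ T, (At t).card := by
      apply Finset.card_eq_sum_card_fiberwise
      intro x hx
      exact Finset.mem_image_of_mem _ hx
    have hAtne : ∀ t ∈ T, (At t).Nonempty := by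
      intro t ht
      rw [hT] at ht
      obtain ⟨x, hx, hxt⟩ := Finset.mem_image.mp ht
      exact ⟨x, Finset.mem_filter.mpr ⟨hx, hxt⟩⟩
    have hAtvar : ∀ t, ∀ x ∈ At t, ∀ y ∈ At t, ∀ i, i ∉ s₀ → x i = y i := by
      intro t x hx y hy i hi
      rw [hAt, Finset.mem_filter] at hx hy
      by_cases hij : i = j
      · subst hij; rw [hx.2, hy.2]
      · exact hvar x hx.1 y hy.1 i (by simp [hij, hi])
    have hfiber_le : ∀ t, (At t).card ≤ Pj := by
      intro t
      apply Finset.card_le_card_of_injOn (fun x => Function.update x j 0)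
      · intro x hx
        exact Finset.mem_image_of_mem _ (Finset.mem_of_mem_filter x hx)
      · intro x hx y hy heq
        simp only [Finset.mem_coe, hAt, Finset.mem_filter] at hx hy
        funext i
        by_cases hij : i = j
        · subst hij; rw [hx.2, hy.2]
        · have := congrFun heq i
          simpa [Function.update_of_ne hij] using this
    have hproj_le : ∀ i ∈ s₀, ∑ t ∈ T, ((At t).image fun x => Function.update x i 0).card
        ≤ (A.image fun x => Function.update x i 0).card := by
      intro i hi
      have hij : i ≠ j := by rintro rfl; exact hj hi
      rw [← Finset.card_biUnion]
      · apply Finset.card_le_card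
        intro u hu
        rw [Finset.mem_biUnion] at hu
        obtain ⟨t, _, hu⟩ := hu
        obtain ⟨x, hx, hxu⟩ := Finset.mem_image.mp hu
        exact Finset.mem_image.mpr ⟨x, Finset.mem_of_mem_filter x hx, hxu⟩
      · intro t1 _ t2 _ hne
        rw [Function.onFun, Finset.disjoint_left]
        intro u hu1 hu2
        obtain ⟨x, hx, hxu⟩ := Finset.mem_image.mp hu1
        obtain ⟨y, hy, hyu⟩ := Finset.mem_image.mp hu2
        rw [hAt, Finset.mem_filter] at hx hy
        apply hne
        rw [← hx.2, ← hy.2]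
        have : Function.update x i 0 j = Function.update y i 0 j := by rw [hxu, hyu]
        simpa [Function.update_of_ne (Ne.symm hij)] using this
    -- now the analytic computation
    set r : ℝ := 1/(m:ℝ) with hr
    have hr0 : 0 ≤ r := by positivity
    have hmne : (m:ℝ) ≠ 0 := by exact_mod_cast hm.ne'
    set F : ι → ℤ → ℝ≥0 := fun i t => (((At t).image fun x => Function.update x i 0).card : ℝ≥0) ^ r
      with hF
    have hstep1 : (A.card : ℝ≥0) ≤ (Pj : ℝ≥0) ^ r * ∑ t ∈ T, ∏ i ∈ s₀, F i t := by
      rw [hfib]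
      push_cast
      rw [Finset.mul_sum]
      apply Finset.sum_le_sum
      intro t ht
      have hAtpos : (0:ℝ≥0) < ((At t).card : ℝ≥0) := by
        exact_mod_cast Finset.Nonempty.card_pos (hAtne t ht)
      have hsplit : ((At t).card : ℝ≥0)
          = ((At t).card : ℝ≥0) ^ r * ((((At t).card : ℝ≥0) ^ (m - 1 : ℕ)) : ℝ≥0) ^ r := by
        rw [← NNReal.rpow_natCast (((At t).card : ℝ≥0)) (m-1), ← NNReal.rpow_mul,
          ← NNReal.rpow_add hAtpos.ne',
          show r + ((m-1 : ℕ):ℝ) * r = 1 from by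
            rw [hr, Nat.cast_sub hm]; push_cast; field_simp; ring,
          NNReal.rpow_one]
      rw [hsplit]
      have h1 : ((At t).card : ℝ≥0) ^ r ≤ (Pj : ℝ≥0) ^ r := by
        apply NNReal.rpow_le_rpow _ hr0
        exact_mod_cast hfiber_le t
      have h2 : ((((At t).card : ℝ≥0) ^ (m - 1 : ℕ)) : ℝ≥0) ^ r ≤ ∏ i ∈ s₀, F i t := by
        have hIH := ih (At t) (hAtne t ht) (hAtvar t)
        have : (((At t).card : ℝ≥0) ^ (m - 1 : ℕ)) ^ r
            ≤ (∏ i ∈ s₀, (((At t).image fun x => Function.update x i 0).card : ℝ≥0)) ^ r :=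
          NNReal.rpow_le_rpow hIH hr0
        refine this.trans (le_of_eq ?_)
        exact (NNReal.finset_prod_rpow s₀
          (fun i => (((At t).image fun x => Function.update x i 0).card : ℝ≥0)) r).symm
      exact mul_le_mul' h1 h2
    have hstep2 : ∑ t ∈ T, ∏ i ∈ s₀, F i t
        ≤ (∏ i ∈ s₀, ((A.image fun x => Function.update x i 0).card : ℝ≥0)) ^ r := by
      have hhold := holder_pow T s₀ F
      have hFm : ∀ i t, F i t ^ m = (((At t).image fun x => Function.update x i 0).card : ℝ≥0) := by
        intro i t
        rw [hF, ← NNReal.rpow_natCast _ m, ← NNReal.rpow_mul,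
          show r * (m:ℝ) = 1 from by rw [hr]; field_simp,
          NNReal.rpow_one]
      rw [← hmdef] at hhold
      simp only [hFm] at hhold
      have hle : ∏ i ∈ s₀, ∑ t ∈ T, (((At t).image fun x => Function.update x i 0).card : ℝ≥0)
          ≤ ∏ i ∈ s₀, ((A.image fun x => Function.update x i 0).card : ℝ≥0) := by
        apply Finset.prod_le_prod' 
        intro i hi
        have := hproj_le i hi
        push_cast
        exact_mod_cast this
      exact pow_root_le hm (hhold.trans hle)
    set Z : ℝ≥0 := ∏ i ∈ s₀, ((A.image fun x => Function.update x i 0).card : ℝ≥0) with hZ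
    have hfinal : (A.card : ℝ≥0) ≤ ((Pj:ℝ≥0) * Z) ^ r := by
      rw [NNReal.mul_rpow]
      calc (A.card : ℝ≥0) ≤ (Pj : ℝ≥0) ^ r * ∑ t ∈ T, ∏ i ∈ s₀, F i t := hstep1
        _ ≤ (Pj : ℝ≥0) ^ r * Z ^ r := mul_le_mul_right hstep2 _
    calc (A.card : ℝ≥0) ^ m ≤ (((Pj:ℝ≥0) * Z) ^ r) ^ m :=
          pow_le_pow_left₀ zero_le hfinal m
      _ = (Pj:ℝ≥0) * Z := by
          rw [← NNReal.rpow_natCast (((Pj:ℝ≥0) * Z) ^ r) m, ← NNReal.rpow_mul,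
            show r * (m:ℝ) = 1 from by rw [hr]; field_simp,
            NNReal.rpow_one]

namespace DF

variable {d : ℕ}

open scoped Classical

/-- Neighbours of points of `s`. -/
noncomputable def nbrs (s : Finset (Base d)) : Finset (Base d) :=
  s.biUnion fun x => Finset.univ.image fun q : Fin d × Bool =>
    Function.update x q.1 (x q.1 + (if q.2 then 1 else -1))

noncomputable def EBfin (A : Set (Base d)) (s : Finset (Base d)) : Finset (Base d × Base d) :=
  (s ×ˢ nbrs s).filter (fun p => p ∈ edgeBoundary A)

lemma EB_coe (A : Set (Base d)) (hA : A.Finite) :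
    edgeBoundary A = ↑(EBfin A hA.toFinset) := by
  ext p
  simp only [EBfin, Finset.coe_filter, Set.mem_setOf_eq, Finset.mem_product]
  constructor
  · intro hp
    refine ⟨⟨?_, ?_⟩, hp⟩
    · simpa using hp.1
    · obtain ⟨i, hi | hi⟩ := (baseAdj_iff p.1 p.2).mp hp.2.2
      · refine Finset.mem_biUnion.mpr ⟨p.1, by simpa using hp.1, ?_⟩
        refine Finset.mem_image.mpr ⟨(i, true), Finset.mem_univ _, ?_⟩
        simp [hi]
      · refine Finset.mem_biUnion.mpr ⟨p.1, by simpa using hp.1, ?_⟩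
        refine Finset.mem_image.mpr ⟨(i, false), Finset.mem_univ _, ?_⟩
        simp [hi, sub_eq_add_neg]
  · exact fun hp => hp.2

/-- Key counting: twice the sum of projection sizes bounds the boundary. -/
lemma proj_le_boundary (A : Set (Base d)) (s : Finset (Base d))
    (hcoe : ↑s = A) (i : Fin d) :
    2 * (s.image fun x => Function.update x i 0).card ≤
      ((EBfin A s).filter (fun p => p.2 = Function.update p.1 i (p.1 i + 1) ∨
        p.2 = Function.update p.1 i (p.1 i - 1))).card := by
  classical
  set P := s.image fun x => Function.update x i 0 with hP
  set Ei := (EBfin A s).filter (fun p => p.2 = Function.update p.1 i (p.1 i + 1) ∨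
        p.2 = Function.update p.1 i (p.1 i - 1)) with hEi
  have hstep : ∀ z ∈ P ×ˢ (Finset.univ : Finset Bool), ∃ p : Base d × Base d,
      p ∈ Ei ∧ Function.update p.1 i 0 = z.1 ∧
        (z.2 = true → p.2 = Function.update p.1 i (p.1 i + 1)) ∧
        (z.2 = false → p.2 = Function.update p.1 i (p.1 i - 1)) := by
    rintro ⟨q, b⟩ hz
    rw [Finset.mem_product] at hz
    obtain ⟨hq, -⟩ := hz
    set fib := s.filter (fun x => Function.update x i 0 = q) with hfib
    have hfibne : fib.Nonempty := by
      obtain ⟨x, hx, hxq⟩ := Finset.mem_image.mp hq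
      exact ⟨x, Finset.mem_filter.mpr ⟨hx, hxq⟩⟩
    cases b
    · -- min, step -1
      obtain ⟨x, hx, hxmin⟩ := Finset.exists_min_image fib (fun y => y i) hfibne
      rw [hfib, Finset.mem_filter] at hx
      set y := Function.update x i (x i - 1) with hy
      have hyA : y ∉ A := by
        intro hyA
        have hys : y ∈ s := by rw [← hcoe] at hyA; simpa using hyA
        have hyfib : y ∈ fib := by
          rw [hfib, Finset.mem_filter]
          refine ⟨hys, ?_⟩
          rw [hy, Function.update_idem, ← hx.2]
        have := hxmin y hyfib
        rw [hy] at this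
        simp at this
      have hpEB : (x, y) ∈ EBfin A s := by
        rw [EBfin, Finset.mem_filter, Finset.mem_product]
        refine ⟨⟨hx.1, ?_⟩, ?_, hyA, ?_⟩
        · refine Finset.mem_biUnion.mpr ⟨x, hx.1, ?_⟩
          refine Finset.mem_image.mpr ⟨(i, false), Finset.mem_univ _, ?_⟩
          simp [hy, sub_eq_add_neg]
        · rw [← hcoe]; simpa using hx.1
        · rw [hy, sub_eq_add_neg]
          exact baseAdj_update x i (-1) (by norm_num)
      refine ⟨(x, y), ?_, ?_, by simp, fun _ => rfl⟩
      · rw [hEi, Finset.mem_filter]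
        exact ⟨hpEB, Or.inr rfl⟩
      · exact hx.2
    · -- max, step +1
      obtain ⟨x, hx, hxmax⟩ := Finset.exists_max_image fib (fun y => y i) hfibne
      rw [hfib, Finset.mem_filter] at hx
      set y := Function.update x i (x i + 1) with hy
      have hyA : y ∉ A := by
        intro hyA
        have hys : y ∈ s := by rw [← hcoe] at hyA; simpa using hyA
        have hyfib : y ∈ fib := by
          rw [hfib, Finset.mem_filter]
          refine ⟨hys, ?_⟩
          rw [hy, Function.update_idem, ← hx.2]
        have := hxmax y hyfib
        rw [hy] at this
        simp at this
      have hpEB : (x, y) ∈ EBfin A s := by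
        rw [EBfin, Finset.mem_filter, Finset.mem_product]
        refine ⟨⟨hx.1, ?_⟩, ?_, hyA, ?_⟩
        · refine Finset.mem_biUnion.mpr ⟨x, hx.1, ?_⟩
          refine Finset.mem_image.mpr ⟨(i, true), Finset.mem_univ _, ?_⟩
          simp [hy]
        · rw [← hcoe]; simpa using hx.1
        · rw [hy]
          exact baseAdj_update x i 1 (by norm_num)
      refine ⟨(x, y), ?_, ?_, fun _ => rfl, by simp⟩
      · rw [hEi, Finset.mem_filter]
        exact ⟨hpEB, Or.inl rfl⟩
      · exact hx.2
  have hcount : (P ×ˢ (Finset.univ : Finset Bool)).card ≤ Ei.card := by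
    apply Finset.card_le_card_of_injOn
      (fun z => if h : z ∈ P ×ˢ (Finset.univ : Finset Bool) then
        Classical.choose (hstep z h) else default)
    · intro z hz
      simp only [Finset.mem_coe] at hz
      simp only [dif_pos hz]
      exact (Classical.choose_spec (hstep z hz)).1
    · intro z hz z' hz' heq
      simp only [Finset.mem_coe] at hz hz'
      simp only [dif_pos hz, dif_pos hz'] at heq
      obtain ⟨-, hq, ht, hf⟩ := Classical.choose_spec (hstep z hz)
      obtain ⟨-, hq', ht', hf'⟩ := Classical.choose_spec (hstep z' hz')
      set p := Classical.choose (hstep z hz) with hp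
      set p' := Classical.choose (hstep z' hz') with hp'
      have hpp : p = p' := heq
      have hbeq : z.2 = z'.2 := by
        cases hb : z.2 <;> cases hb' : z'.2
        · rfl
        · exfalso
          have h1 := hf hb
          have h2 := ht' hb'
          rw [hpp, h2] at h1
          have := congrFun h1 i
          simp only [Function.update_self] at this
          omega
        · exfalso
          have h1 := ht hb
          have h2 := hf' hb'
          rw [hpp, h2] at h1
          have := congrFun h1 i
          simp only [Function.update_self] at this
          omega
        · rfl
      have hqeq : z.1 = z'.1 := by rw [← hq, ← hq', hpp]
      exact Prod.ext hqeq hbeq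
  calc 2 * P.card = (P ×ˢ (Finset.univ : Finset Bool)).card := by
        rw [Finset.card_product]
        simp [Nat.mul_comm]
    _ ≤ Ei.card := hcount



lemma sum_proj_le_boundary (A : Set (Base d)) (s : Finset (Base d)) (hcoe : ↑s = A) :
    2 * ∑ i : Fin d, (s.image fun x => Function.update x i 0).card ≤ (EBfin A s).card := by
  classical
  set Ei : Fin d → Finset (Base d × Base d) := fun i =>
    (EBfin A s).filter (fun p => p.2 = Function.update p.1 i (p.1 i + 1) ∨
      p.2 = Function.update p.1 i (p.1 i - 1)) with hEid
  have hdisj : ∀ i ∈ (Finset.univ : Finset (Fin d)), ∀ j ∈ (Finset.univ : Finset (Fin d)),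
      i ≠ j → Disjoint (Ei i) (Ei j) := by
    intro i _ j _ hij
    rw [Finset.disjoint_left]
    intro p hpi hpj
    rw [hEid, Finset.mem_filter] at hpi hpj
    have h1 := hpi.2
    have h2 := hpj.2
    have hne : p.2 i ≠ p.1 i := by
      rcases h1 with h | h <;> rw [h] <;> simp <;> omega
    have heq : p.2 i = p.1 i := by
      rcases h2 with h | h <;> rw [h] <;> rw [Function.update_of_ne hij]
    exact hne heq
  calc 2 * ∑ i : Fin d, (s.image fun x => Function.update x i 0).card
      = ∑ i : Fin d, 2 * (s.image fun x => Function.update x i 0).card := by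
        rw [Finset.mul_sum]
    _ ≤ ∑ i : Fin d, (Ei i).card :=
        Finset.sum_le_sum fun i _ => proj_le_boundary A s hcoe i
    _ = (Finset.univ.biUnion Ei).card := (Finset.card_biUnion hdisj).symm
    _ ≤ (EBfin A s).card := by
        apply Finset.card_le_card
        intro p hp
        rw [Finset.mem_biUnion] at hp
        obtain ⟨i, _, hp⟩ := hp
        exact Finset.mem_of_mem_filter p hp

lemma part1 {d : ℕ} (hd : 1 ≤ d) (A : Set (Base d)) (hA : A.Finite) (hA0 : A.Nonempty) :
    (2 * (d : ℝ)) * (A.ncard : ℝ) ^ (1 - 1 / (d : ℝ)) ≤ ((edgeBoundary A).ncard : ℝ) := by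
  classical
  set s := hA.toFinset with hs
  have hcoe : ↑s = A := hA.coe_toFinset
  have hsne : s.Nonempty := by
    rwa [← Finset.coe_nonempty, hcoe]
  set n := s.card with hn
  have hncard : A.ncard = n := by
    rw [← hcoe, Set.ncard_coe_finset]
  have hEB : (edgeBoundary A).ncard = (EBfin A s).card := by
    rw [EB_coe A hA, Set.ncard_coe_finset]
  set P : Fin d → ℕ := fun i => (s.image fun x => Function.update x i 0).card with hPdef
  -- Loomis–Whitney
  have hLW : ((n : ℝ≥0)) ^ (d - 1) ≤ ∏ i : Fin d, (P i : ℝ≥0) := by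
    have := loomis_whitney (Finset.univ : Finset (Fin d)) s hsne
      (fun x _ y _ i hi => absurd (Finset.mem_univ i) hi)
    simpa [Finset.card_univ] using this
  -- counting
  have hcount : 2 * ∑ i : Fin d, P i ≤ (EBfin A s).card := sum_proj_le_boundary A s hcoe
  -- positivity
  have hd0 : (d:ℝ) ≠ 0 := by positivity
  have hdNN : ((d:ℝ≥0)) ≠ 0 := by
    have : d ≠ 0 := by omega
    exact_mod_cast this
  -- chain in ℝ≥0
  have hchain : (2 * (d:ℝ≥0)) * (n : ℝ≥0) ^ ((1:ℝ) - 1/(d:ℝ)) ≤ ((EBfin A s).card : ℝ≥0) := by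
    have h1 : (n : ℝ≥0) ^ ((1:ℝ) - 1/(d:ℝ)) = ((n:ℝ≥0) ^ (d - 1 : ℕ)) ^ (1/(d:ℝ)) := by
      rw [← NNReal.rpow_natCast ((n:ℝ≥0)) (d-1), ← NNReal.rpow_mul]
      congr 1
      rw [Nat.cast_sub hd]
      push_cast
      field_simp
    have h2 : ((n:ℝ≥0) ^ (d - 1 : ℕ)) ^ (1/(d:ℝ)) ≤ (∏ i : Fin d, (P i : ℝ≥0)) ^ (1/(d:ℝ)) :=
      NNReal.rpow_le_rpow hLW (by positivity)
    have h3 : (∏ i : Fin d, (P i : ℝ≥0)) ^ (1/(d:ℝ)) ≤ (d:ℝ≥0)⁻¹ * ∑ i : Fin d, (P i : ℝ≥0) := by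
      have hw : ∑ _i : Fin d, ((d:ℝ≥0))⁻¹ = 1 := by
        rw [Finset.sum_const, Finset.card_univ, Fintype.card_fin, nsmul_eq_mul]
        rw [mul_inv_cancel₀]
        exact_mod_cast hdNN
      have := NNReal.geom_mean_le_arith_mean_weighted Finset.univ
        (fun _ => ((d:ℝ≥0))⁻¹) (fun i => (P i : ℝ≥0)) hw
      calc (∏ i : Fin d, (P i : ℝ≥0)) ^ (1/(d:ℝ))
          = ∏ i : Fin d, ((P i : ℝ≥0)) ^ ((((d:ℝ≥0))⁻¹ : ℝ≥0) : ℝ) := by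
            rw [← NNReal.finset_prod_rpow]
            congr 1
            push_cast
            rw [one_div]
        _ ≤ ∑ i : Fin d, ((d:ℝ≥0))⁻¹ * (P i : ℝ≥0) := this
        _ = (d:ℝ≥0)⁻¹ * ∑ i : Fin d, (P i : ℝ≥0) := by rw [← Finset.mul_sum]
    calc (2 * (d:ℝ≥0)) * (n : ℝ≥0) ^ ((1:ℝ) - 1/(d:ℝ))
        ≤ (2 * (d:ℝ≥0)) * ((d:ℝ≥0)⁻¹ * ∑ i : Fin d, (P i : ℝ≥0)) := by
          apply mul_le_mul_right
          rw [h1]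
          exact h2.trans (h3.trans_eq' rfl)
      _ = 2 * ((d:ℝ≥0) * (d:ℝ≥0)⁻¹) * ∑ i : Fin d, (P i : ℝ≥0) := by ring
      _ = 2 * ∑ i : Fin d, (P i : ℝ≥0) := by
          rw [mul_inv_cancel₀ (by exact_mod_cast hdNN), mul_one]
      _ ≤ ((EBfin A s).card : ℝ≥0) := by
          have : ((2 * ∑ i : Fin d, P i : ℕ) : ℝ≥0) ≤ (((EBfin A s).card : ℕ) : ℝ≥0) := by
            exact_mod_cast hcount
          push_cast at this
          exact this
  -- cast down to ℝ
  have := NNReal.coe_le_coe.mpr hchain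
  push_cast [NNReal.coe_rpow] at this
  rw [hncard, hEB]
  push_cast
  convert this using 2


lemma box_coe {d : ℕ} (v : Base d) (N : ℕ) : box v N = ↑(SB N d v) := by
  ext x
  simp only [box, Set.mem_setOf_eq, Finset.mem_coe, mem_SB]
  constructor
  · intro h j
    exact ⟨fun _ => h j, fun hj => absurd j.isLt (by omega)⟩
  · intro h i
    exact (h i).1 i.isLt

lemma part2 {d : ℕ} (A : Set (Base d)) (v : Base d) (N : ℕ) (hN : 0 < N) :
    (2 / (3 * (N : ℝ))) *
        min ((A ∩ box v N).ncard : ℝ) (((box v N) \ A).ncard : ℝ) ≤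
      (({p ∈ edgeBoundary A | p.1 ∈ box v N ∧ p.2 ∈ box v N}).ncard : ℝ) := by
  classical
  have hb := box_coe v N
  have ha : A ∩ box v N = ↑(aF A N d v) := by
    ext x
    simp only [Set.mem_inter_iff, hb, Finset.mem_coe, aF, Finset.mem_filter]
    try tauto
  have hbd : (box v N) \ A = ↑(bF A N d v) := by
    ext x
    simp only [Set.mem_diff, hb, Finset.mem_coe, bF, Finset.mem_filter]
    try tauto
  have he : {p ∈ edgeBoundary A | p.1 ∈ box v N ∧ p.2 ∈ box v N} = ↑(EF A N d v) := by
    ext p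
    simp only [Set.mem_setOf_eq, hb, Finset.mem_coe, EF, Finset.mem_filter,
      Finset.mem_product]
    try tauto
  rw [ha, hbd, he, Set.ncard_coe_finset, Set.ncard_coe_finset, Set.ncard_coe_finset]
  have hkey := key_box A N hN d v
  have hcast : ((2 * min (aF A N d v).card (bF A N d v).card : ℕ) : ℝ)
      ≤ ((3 * N * (EF A N d v).card : ℕ) : ℝ) := Nat.cast_le.mpr hkey
  push_cast [Nat.cast_min] at hcast
  rw [div_mul_eq_mul_div, div_le_iff₀ (by positivity : (0:ℝ) < 3 * (N:ℝ))]
  calc 2 * min ((aF A N d v).card : ℝ) ((bF A N d v).card : ℝ)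
      ≤ 3 * (N:ℝ) * ((EF A N d v).card : ℝ) := hcast
    _ = ((EF A N d v).card : ℝ) * (3 * (N:ℝ)) := by ring

end DF

/-- **Isoperimetric inequality on `ℤ^d`.** For every nonempty finite
`A ⊂ ℤ^d`, `|∂A| ≥ 2d |A|^{1−1/d}`; moreover for every cube `B` of side `N`,
`|∂A ∩ (B×B)| ≥ (2/(3N)) min{|A∩B|, |B∖A|}`. -/
theorem isoperimetric_inequality_on_Zd
    (d : ℕ) (hd : 1 ≤ d) (A : Set (Base d)) (hA : A.Finite) (hA0 : A.Nonempty) :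
    (2 * (d : ℝ)) * (A.ncard : ℝ) ^ (1 - 1 / (d : ℝ)) ≤ ((edgeBoundary A).ncard : ℝ) ∧
    ∀ (v : Base d) (N : ℕ), 0 < N →
      (2 / (3 * (N : ℝ))) *
          min ((A ∩ box v N).ncard : ℝ) (((box v N) \ A).ncard : ℝ) ≤
        (({p ∈ edgeBoundary A | p.1 ∈ box v N ∧ p.2 ∈ box v N}).ncard : ℝ) := by
  constructor
  · exact part1 hd A hA hA0
  · intro v N hN
    exact part2 A v N hN
end

section
/- Let d ≥ 2. For every shift τ : ℤ^d → ℤ, TV(τ) ≥ 2d·(Σ_{u∈ℤ^d} |τ(u)|)^{1−1/d}. -/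
open DF

open DF Finset
open scoped ENNReal NNReal

namespace DFAux

variable {d : ℕ}

/-- `i`-th unit vector. -/
def ei (d : ℕ) (i : Fin d) : Base d := fun j => if j = i then 1 else 0

lemma ei_apply_self (i : Fin d) : ei d i i = 1 := by simp [ei]

lemma baseAdj_add_ei (u : Base d) (i : Fin d) : baseAdj u (u + ei d i) := by
  unfold baseAdj dist1
  have : ∀ j, |u j - (u + ei d i) j| = if j = i then 1 else 0 := by
    intro j
    by_cases h : j = i <;> simp [ei, h, Pi.add_apply]
  simp only [this]
  simp

/-- level function -/
def lvl (a t : ℤ) : ℤ := if t < a then 1 else 0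

lemma lvl_mem (a t : ℤ) : lvl a t = 0 ∨ lvl a t = 1 := by
  unfold lvl; split <;> simp

lemma abs_lvl_sub (a b t : ℤ) :
    |lvl a t - lvl b t| = if lvl a t = lvl b t then 0 else 1 := by
  rcases lvl_mem a t with h1 | h1 <;> rcases lvl_mem b t with h2 | h2 <;>
    rw [h1, h2] <;> norm_num

lemma coarea_aux {M a b : ℤ} (ha : |a| ≤ M) (hb : |b| ≤ M) (hba : b ≤ a) :
    ∑ t ∈ Finset.Ico (-M) M, |lvl a t - lvl b t| = a - b := by
  have habs := abs_le.mp ha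
  have hbabs := abs_le.mp hb
  have hterm : ∀ t, |lvl a t - lvl b t| = if t ∈ Finset.Ico b a then 1 else 0 := by
    intro t
    simp only [Finset.mem_Ico, lvl]
    by_cases h1 : t < a <;> by_cases h2 : t < b <;> simp [h1, h2] <;> omega
  simp only [hterm]
  rw [Finset.sum_ite_mem, Finset.inter_comm, Finset.sum_const]
  have : Finset.Ico b a ∩ Finset.Ico (-M) M = Finset.Ico b a := by
    apply Finset.inter_eq_left.mpr
    intro t ht
    simp only [Finset.mem_Ico] at *
    omega
  rw [this, Int.card_Ico]
  simp
  omega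

lemma coarea_pair {M a b : ℤ} (ha : |a| ≤ M) (hb : |b| ≤ M) :
    ∑ t ∈ Finset.Ico (-M) M, |lvl a t - lvl b t| = |a - b| := by
  rcases le_total b a with h | h
  · rw [coarea_aux ha hb h, abs_of_nonneg (by omega)]
  · have := coarea_aux hb ha h
    calc ∑ t ∈ Finset.Ico (-M) M, |lvl a t - lvl b t|
        = ∑ t ∈ Finset.Ico (-M) M, |lvl b t - lvl a t| := by
          apply Finset.sum_congr rfl; intro t _; rw [abs_sub_comm]
      _ = b - a := this
      _ = |a - b| := by rw [abs_sub_comm, abs_of_nonneg (by omega)]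

/-- Classification of adjacency. -/
lemma adj_class {u v : Base d} (h : baseAdj u v) :
    ∃ i, v = u + ei d i ∨ u = v + ei d i := by
  unfold baseAdj dist1 at h
  have hex : ∃ i, |u i - v i| ≠ 0 := by
    by_contra hc
    push_neg at hc
    rw [Finset.sum_eq_zero (fun i _ => hc i)] at h
    omega
  obtain ⟨i, hi⟩ := hex
  have hsplit : |u i - v i| + ∑ j ∈ Finset.univ.erase i, |u j - v j| = 1 := by
    rw [Finset.add_sum_erase Finset.univ (fun j => |u j - v j|) (Finset.mem_univ i)]
    exact h
  have h1 : (1:ℤ) ≤ |u i - v i| := by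
    have := abs_nonneg (u i - v i); omega
  have h2 : (0:ℤ) ≤ ∑ j ∈ Finset.univ.erase i, |u j - v j| :=
    Finset.sum_nonneg fun j _ => abs_nonneg _
  have hrest : ∑ j ∈ Finset.univ.erase i, |u j - v j| = 0 := by omega
  have heq : ∀ j ∈ Finset.univ.erase i, u j = v j := by
    intro j hj
    have := (Finset.sum_eq_zero_iff_of_nonneg (fun j _ => abs_nonneg (u j - v j))).mp hrest j hj
    have := abs_eq_zero.mp this
    omega
  have hi1 : |u i - v i| = 1 := by omega
  have heq' : ∀ j, j ≠ i → u j = v j := by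
    intro j hj; exact heq j (Finset.mem_erase.mpr ⟨hj, Finset.mem_univ j⟩)
  use i
  rcases abs_eq (by norm_num : (0:ℤ) ≤ 1) |>.mp hi1 with hc | hc
  · right
    funext j
    by_cases hj : j = i
    · subst hj; simp [ei, Pi.add_apply]; omega
    · simp [ei, hj, Pi.add_apply, heq' j hj]
  · left
    funext j
    by_cases hj : j = i
    · subst hj; simp [ei, Pi.add_apply]; omega
    · simp [ei, hj, Pi.add_apply, (heq' j hj).symm]

/-- Projection: zero out coordinates outside `s`. -/
def pr (s : Finset (Fin d)) (u : Base d) : Base d := fun j => if j ∈ s then u j else 0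

lemma pr_pr (s t : Finset (Fin d)) (u : Base d) : pr s (pr t u) = pr (s ∩ t) u := by
  funext j
  by_cases h1 : j ∈ s <;> by_cases h2 : j ∈ t <;> simp [pr, h1, h2]

lemma pr_apply_of_mem {s : Finset (Fin d)} {j : Fin d} (h : j ∈ s) (u : Base d) :
    pr s u j = u j := by simp [pr, h]

lemma pr_apply_of_not_mem {s : Finset (Fin d)} {j : Fin d} (h : j ∉ s) (u : Base d) :
    pr s u j = 0 := by simp [pr, h]

open MeasureTheory in
/-- Finite multi-factor Hölder inequality with equal exponents, in `ℝ≥0∞`. -/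
lemma holder_finset {ι : Type*} (s : Finset ι) (hs : s.Nonempty) (T : Finset ℤ)
    (g : ι → ℤ → ℝ≥0∞) :
    ∑ t ∈ T, ∏ j ∈ s, (g j t) ^ (1 / (s.card : ℝ)) ≤
      ∏ j ∈ s, (∑ t ∈ T, g j t) ^ (1 / (s.card : ℝ)) := by
  classical
  have hcard : (0:ℝ) < s.card := by exact_mod_cast hs.card_pos
  set f : ι → ℤ → ℝ≥0∞ := fun j t => if t ∈ T then g j t else 0 with hf
  have key := ENNReal.lintegral_prod_norm_pow_le (μ := Measure.count (α := ℤ)) s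
    (f := f) (fun i _ => (measurable_of_countable _).aemeasurable)
    (p := fun _ => 1 / (s.card : ℝ))
    (by rw [Finset.sum_const, nsmul_eq_mul]; field_simp)
    (fun i _ => by positivity)
  rw [lintegral_count] at key
  have hL : ∑' t : ℤ, ∏ j ∈ s, (f j t) ^ (1 / (s.card : ℝ)) =
      ∑ t ∈ T, ∏ j ∈ s, (g j t) ^ (1 / (s.card : ℝ)) := by
    rw [tsum_eq_sum (s := T)]
    · exact Finset.sum_congr rfl fun t ht => Finset.prod_congr rfl fun j _ => by
        simp [hf, ht]
    · intro t ht
      apply Finset.prod_eq_zero hs.choose_spec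
      simp only [hf, if_neg ht]
      exact ENNReal.zero_rpow_of_pos (by positivity)
  rw [hL] at key
  refine key.trans (le_of_eq (Finset.prod_congr rfl fun j _ => ?_))
  congr 1
  rw [lintegral_count, tsum_eq_sum (s := T)]
  · exact Finset.sum_congr rfl fun t ht => by simp [hf, ht]
  · intro t ht; simp [hf, ht]

/-- Discrete Loomis–Whitney inequality. -/
lemma loomis_whitney (s : Finset (Fin d)) (A : Finset (Base d)) (hA : A.Nonempty)
    (hcoord : ∀ u ∈ A, ∀ j, j ∉ s → u j = 0) :
    A.card ^ (s.card - 1) ≤ ∏ j ∈ s, (A.image (pr (s.erase j))).card := by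
  classical
  induction s using Finset.induction generalizing A with
  | empty => simp
  | @insert i s his ih =>
    have hins : (insert i s).card - 1 = s.card := by
      rw [Finset.card_insert_of_notMem his]; omega
    rw [hins]
    rcases s.eq_empty_or_nonempty with hse | hs
    · subst hse
      simp only [Finset.card_empty, pow_zero]
      rw [Finset.prod_insert (by simp), Finset.prod_empty, mul_one]
      exact (hA.image _).card_pos
    set k := s.card with hk
    have hkpos : 0 < k := hs.card_pos
    set T : Finset ℤ := A.image (fun u => u i) with hT
    set At : ℤ → Finset (Base d) := fun t => A.filter (fun u => u i = t) with hAt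
    set P : ℕ := (A.image (pr s)).card with hP
    set Q : Fin d → ℕ := fun j => (A.image (pr ((insert i s).erase j))).card with hQ
    set c : Fin d → ℤ → ℕ := fun j t => ((At t).image (pr (s.erase j))).card with hc
    -- injectivity of `pr s` on slices
    have hprs_inj : ∀ t : ℤ, Set.InjOn (pr s) (At t) := by
      intro t u hu v hv huv
      simp only [hAt, Finset.coe_filter, Set.mem_setOf_eq] at hu hv
      funext j
      by_cases hjs : j ∈ s
      · have := congrFun huv j
        rwa [pr_apply_of_mem hjs, pr_apply_of_mem hjs] at this
      · by_cases hji : j = i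
        · subst hji; rw [hu.2, hv.2]
        · have hni : j ∉ insert i s := by simp [hji, hjs]
          rw [hcoord u hu.1 j hni, hcoord v hv.1 j hni]
    have hAt_card : ∀ t : ℤ, ((At t).image (pr s)).card = (At t).card := fun t =>
      Finset.card_image_of_injOn (hprs_inj t)
    -- slice bound by projection deleting i
    have hAtP : ∀ t : ℤ, (At t).card ≤ P := by
      intro t
      rw [← hAt_card t]
      exact Finset.card_le_card (Finset.image_subset_image (Finset.filter_subset _ _))
    -- induction hypothesis applied to slices
    have hIH : ∀ t ∈ T, (At t).card ^ (k - 1) ≤ ∏ j ∈ s, c j t := by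
      intro t ht
      obtain ⟨u, hu, hui⟩ := Finset.mem_image.mp ht
      have hAtne : (At t).Nonempty := ⟨u, Finset.mem_filter.mpr ⟨hu, hui⟩⟩
      have h1 := ih ((At t).image (pr s)) (hAtne.image _) ?_
      · rw [hAt_card t] at h1
        refine h1.trans (le_of_eq (Finset.prod_congr rfl fun j hj => ?_))
        rw [Finset.image_image]
        congr 1
        have : pr (s.erase j) ∘ pr s = pr (s.erase j) := by
          funext u
          rw [Function.comp_apply, pr_pr,
            show s.erase j ∩ s = s.erase j from
              Finset.inter_eq_left.mpr (Finset.erase_subset _ _)]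
        rw [this]
      · intro u hu j hjs
        obtain ⟨v, _, hv⟩ := Finset.mem_image.mp hu
        rw [← hv]
        exact pr_apply_of_not_mem hjs v
    -- identify c with projections keeping i
    have hc_eq : ∀ j ∈ s, ∀ t : ℤ, c j t = ((At t).image (pr (insert i (s.erase j)))).card := by
      intro j hj t
      have hji : j ≠ i := fun h => his (h ▸ hj)
      have hjE : j ∉ insert i (s.erase j) := by simp [hji]
      have hstep : (At t).image (pr (s.erase j)) =
          ((At t).image (pr (insert i (s.erase j)))).image (pr (s.erase j)) := by
        rw [Finset.image_image]
        congr 1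
        funext u
        rw [Function.comp_apply, pr_pr,
          show s.erase j ∩ insert i (s.erase j) = s.erase j from
            Finset.inter_eq_left.mpr (Finset.subset_insert _ _)]
      have hinj : Set.InjOn (pr (s.erase j)) ((At t).image (pr (insert i (s.erase j)))) := by
        intro x hx y hy hxy
        simp only [Finset.coe_image, Set.mem_image] at hx hy
        obtain ⟨a, ha, rfl⟩ := hx
        obtain ⟨b, hb, rfl⟩ := hy
        simp only [Finset.mem_coe, hAt, Finset.mem_filter] at ha hb
        funext j'
        by_cases h1 : j' ∈ s.erase j
        · have := congrFun hxy j'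
          rwa [pr_apply_of_mem h1, pr_apply_of_mem h1] at this
        · by_cases h2 : j' = i
          · subst h2
            rw [pr_apply_of_mem (Finset.mem_insert_self _ _),
              pr_apply_of_mem (Finset.mem_insert_self _ _), ha.2, hb.2]
          · have hnE : j' ∉ insert i (s.erase j) := by simp [h1, h2]
            rw [pr_apply_of_not_mem hnE, pr_apply_of_not_mem hnE]
      show ((At t).image (pr (s.erase j))).card = _
      rw [hstep, Finset.card_image_of_injOn hinj]
    -- sum of slice projections bounded by full projection
    have hsum_c : ∀ j ∈ s, ∑ t ∈ T, c j t ≤ Q j := by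
      intro j hj
      have hji : i ≠ j := fun h => his (h ▸ hj)
      have hE : (insert i s).erase j = insert i (s.erase j) :=
        Finset.erase_insert_of_ne hji
      calc ∑ t ∈ T, c j t = ∑ t ∈ T, ((At t).image (pr (insert i (s.erase j)))).card := by
            exact Finset.sum_congr rfl fun t _ => hc_eq j hj t
        _ = (T.biUnion (fun t => (At t).image (pr (insert i (s.erase j))))).card := by
            rw [Finset.card_biUnion]
            intro t1 h1 t2 h2 hne
            simp only [Finset.disjoint_left]
            intro x hx1 hx2
            obtain ⟨a, ha, rfl⟩ := Finset.mem_image.mp hx1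
            obtain ⟨b, hb, hba⟩ := Finset.mem_image.mp hx2
            simp only [hAt, Finset.mem_filter] at ha hb
            have h1' : pr (insert i (s.erase j)) a i = t1 := by
              rw [pr_apply_of_mem (Finset.mem_insert_self _ _)]; exact ha.2
            have h2' : pr (insert i (s.erase j)) a i = t2 := by
              rw [← hba, pr_apply_of_mem (Finset.mem_insert_self _ _)]; exact hb.2
            exact hne (h1' ▸ h2')
        _ ≤ Q j := by
            show _ ≤ (A.image (pr ((insert i s).erase j))).card
            rw [hE]
            apply Finset.card_le_card
            intro x hx
            obtain ⟨t, _, hx2⟩ := Finset.mem_biUnion.mp hx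
            obtain ⟨a, ha, rfl⟩ := Finset.mem_image.mp hx2
            exact Finset.mem_image_of_mem _ (Finset.filter_subset _ _ ha)
    have hcard_sum : A.card = ∑ t ∈ T, (At t).card :=
      Finset.card_eq_sum_card_fiberwise fun u hu => Finset.mem_image_of_mem _ hu
    -- now the ℝ≥0∞ chain
    set α : ℝ := 1 / (k : ℝ) with hα
    have hα_pos : 0 < α := by positivity
    have hkα : (k : ℝ) * α = 1 := by
      rw [hα]; field_simp
    have key : ∀ t ∈ T, ((At t).card : ℝ≥0∞) ≤
        (P : ℝ≥0∞) ^ α * ∏ j ∈ s, (c j t : ℝ≥0∞) ^ α := by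
      intro t ht
      have hnat : (At t).card ^ k ≤ P * ∏ j ∈ s, c j t := by
        have hsplit : (At t).card ^ k = (At t).card * (At t).card ^ (k - 1) := by
          conv_lhs => rw [show k = 1 + (k - 1) by omega]
          rw [pow_add, pow_one]
        rw [hsplit]
        exact Nat.mul_le_mul (hAtP t) (hIH t ht)
      have hcast : (((At t).card : ℝ≥0∞)) ^ (k : ℝ) ≤
          ((P : ℝ≥0∞) * ∏ j ∈ s, (c j t : ℝ≥0∞)) := by
        rw [ENNReal.rpow_natCast]
        exact_mod_cast (Nat.cast_le (α := ℝ≥0∞)).mpr hnat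
      have := ENNReal.rpow_le_rpow hcast hα_pos.le
      rwa [← ENNReal.rpow_mul, hkα, ENNReal.rpow_one,
        ENNReal.mul_rpow_of_nonneg _ _ hα_pos.le,
        ← ENNReal.prod_rpow_of_nonneg hα_pos.le] at this
    have chain : (A.card : ℝ≥0∞) ≤ (P : ℝ≥0∞) ^ α * ∏ j ∈ s, (Q j : ℝ≥0∞) ^ α := by
      calc (A.card : ℝ≥0∞) = ∑ t ∈ T, ((At t).card : ℝ≥0∞) := by
            rw [hcard_sum]; push_cast; rfl
        _ ≤ ∑ t ∈ T, (P : ℝ≥0∞) ^ α * ∏ j ∈ s, (c j t : ℝ≥0∞) ^ α :=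
            Finset.sum_le_sum key
        _ = (P : ℝ≥0∞) ^ α * ∑ t ∈ T, ∏ j ∈ s, (c j t : ℝ≥0∞) ^ α := by
            rw [Finset.mul_sum]
        _ ≤ (P : ℝ≥0∞) ^ α * ∏ j ∈ s, (∑ t ∈ T, (c j t : ℝ≥0∞)) ^ α := by
            gcongr
            exact holder_finset s hs T (fun j t => (c j t : ℝ≥0∞))
        _ ≤ (P : ℝ≥0∞) ^ α * ∏ j ∈ s, (Q j : ℝ≥0∞) ^ α := by
            refine mul_le_mul_of_nonneg_left (Finset.prod_le_prod' fun j hj => ENNReal.rpow_le_rpow ?_ hα_pos.le) zero_le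
            calc ∑ t ∈ T, (c j t : ℝ≥0∞) = ((∑ t ∈ T, c j t : ℕ) : ℝ≥0∞) := by push_cast; rfl
              _ ≤ (Q j : ℝ≥0∞) := Nat.cast_le.mpr (hsum_c j hj)
    -- raise to the k-th power
    have final : ((A.card ^ k : ℕ) : ℝ≥0∞) ≤ ((P * ∏ j ∈ s, Q j : ℕ) : ℝ≥0∞) := by
      have := ENNReal.rpow_le_rpow chain (by positivity : (0:ℝ) ≤ (k:ℝ))
      rw [ENNReal.mul_rpow_of_nonneg _ _ (by positivity : (0:ℝ) ≤ (k:ℝ)),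
        ← ENNReal.rpow_mul, ← ENNReal.prod_rpow_of_nonneg (by positivity : (0:ℝ) ≤ (k:ℝ))]
        at this
      push_cast
      rw [← ENNReal.rpow_natCast (A.card : ℝ≥0∞) k]
      refine this.trans (le_of_eq ?_)
      rw [mul_comm α (k:ℝ), hkα, ENNReal.rpow_one]
      refine congrArg (fun x => (P : ℝ≥0∞) * x) ?_
      refine Finset.prod_congr rfl fun j _ => ?_
      rw [← ENNReal.rpow_mul, mul_comm α (k:ℝ), hkα, ENNReal.rpow_one]
    have hfinal : A.card ^ k ≤ P * ∏ j ∈ s, Q j := Nat.cast_le.mp final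
    rw [Finset.prod_insert his]
    have hQi : Q i = P := by
      show (A.image (pr ((insert i s).erase i))).card = _
      rw [Finset.erase_insert his]
    calc A.card ^ k ≤ P * ∏ j ∈ s, Q j := hfinal
      _ = (A.image (pr ((insert i s).erase i))).card * ∏ j ∈ s, Q j := by rw [← hQi]
      _ = _ := rfl

/-- Isoperimetry via AM-GM + Loomis-Whitney. -/
lemma iso (hd : 2 ≤ d) (A : Finset (Base d)) :
    2 * (d : ℝ) * (A.card : ℝ) ^ (1 - 1 / (d : ℝ)) ≤
      ∑ i : Fin d, 2 * ((A.image (pr (Finset.univ.erase i))).card : ℝ) := by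
  have hd0 : (0:ℝ) < d := by positivity
  have hp : (0:ℝ) < 1 - 1 / d := by
    rw [sub_pos, div_lt_one hd0]
    exact_mod_cast lt_of_lt_of_le one_lt_two hd
  rcases A.eq_empty_or_nonempty with rfl | hA
  · rw [Finset.card_empty]
    push_cast
    rw [Real.zero_rpow hp.ne', mul_zero]
    exact Finset.sum_nonneg fun i _ => by positivity
  have hlw := loomis_whitney Finset.univ A hA (by simp)
  rw [Finset.card_univ, Fintype.card_fin] at hlw
  set C : Fin d → ℝ := fun i => ((A.image (pr (Finset.univ.erase i))).card : ℝ) with hC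
  have hCnn : ∀ i, 0 ≤ C i := fun i => Nat.cast_nonneg _
  have hamgm := Real.geom_mean_le_arith_mean_weighted Finset.univ (fun _ => 1 / (d:ℝ)) C
    (fun i _ => by positivity)
    (by rw [Finset.sum_const, Finset.card_univ, Fintype.card_fin, nsmul_eq_mul]; field_simp)
    (fun i _ => hCnn i)
  have hstep1 : (A.card : ℝ) ^ (1 - 1 / (d:ℝ)) ≤ (∏ i : Fin d, C i) ^ (1 / (d:ℝ)) := by
    have h1 : ((A.card : ℝ) ^ (d - 1 : ℕ)) ≤ ∏ i : Fin d, C i := by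
      rw [hC]
      have h := (Nat.cast_le (α := ℝ)).mpr hlw
      push_cast at h
      exact h
    have h2 := Real.rpow_le_rpow (by positivity) h1 (by positivity : (0:ℝ) ≤ 1 / d)
    calc (A.card : ℝ) ^ (1 - 1 / (d:ℝ))
        = ((A.card : ℝ) ^ (d - 1 : ℕ)) ^ (1 / (d:ℝ)) := by
          rw [← Real.rpow_natCast ((A.card : ℝ)) (d-1), ← Real.rpow_mul (Nat.cast_nonneg _)]
          congr 1
          have : ((d - 1 : ℕ) : ℝ) = (d:ℝ) - 1 := by
            push_cast [Nat.cast_sub (by omega : 1 ≤ d)]; ring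
          rw [this]
          field_simp
      _ ≤ (∏ i : Fin d, C i) ^ (1 / (d:ℝ)) := h2
  have hstep2 : (∏ i : Fin d, C i) ^ (1 / (d:ℝ)) ≤ (1 / (d:ℝ)) * ∑ i : Fin d, C i := by
    calc (∏ i : Fin d, C i) ^ (1 / (d:ℝ))
        = ∏ i : Fin d, C i ^ (1 / (d:ℝ)) := by
          rw [← Real.finset_prod_rpow _ _ (fun i _ => hCnn i)]
      _ ≤ ∑ i : Fin d, (1 / (d:ℝ)) * C i := hamgm
      _ = (1 / (d:ℝ)) * ∑ i : Fin d, C i := by rw [Finset.mul_sum]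
  calc 2 * (d : ℝ) * (A.card : ℝ) ^ (1 - 1 / (d:ℝ))
      ≤ 2 * (d : ℝ) * ((1 / (d:ℝ)) * ∑ i : Fin d, C i) := by
        have := hstep1.trans hstep2
        nlinarith [hd0]
    _ = ∑ i : Fin d, 2 * C i := by
        rw [Finset.mul_sum, Finset.mul_sum]
        refine Finset.sum_congr rfl fun i _ => ?_
        field_simp

lemma pr_add_ei (i : Fin d) (u : Base d) :
    pr (Finset.univ.erase i) (u + ei d i) = pr (Finset.univ.erase i) u := by
  funext j
  by_cases hj : j ∈ Finset.univ.erase i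
  · have hji : j ≠ i := (Finset.mem_erase.mp hj).1
    rw [pr_apply_of_mem hj, pr_apply_of_mem hj]
    simp [ei, hji, Pi.add_apply]
  · rw [pr_apply_of_not_mem hj, pr_apply_of_not_mem hj]

lemma pr_sub_ei (i : Fin d) (u : Base d) :
    pr (Finset.univ.erase i) (u - ei d i) = pr (Finset.univ.erase i) u := by
  have := pr_add_ei i (u - ei d i)
  rw [sub_add_cancel] at this
  exact this.symm

/-- boundary counting in one direction -/
lemma dir_bound (i : Fin d) (A B : Finset (Base d)) (hAB : A ⊆ B)
    (hnbr : ∀ u ∈ A, u - ei d i ∈ B) :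
    2 * (((A.image (pr (Finset.univ.erase i))).card : ℤ)) ≤
      ∑ u ∈ B, |(if u ∈ A then (1:ℤ) else 0) - (if u + ei d i ∈ A then (1:ℤ) else 0)| := by
  classical
  set pj := pr (Finset.univ.erase i) with hpj
  set χ : Base d → ℤ := fun u => if u ∈ A then (1:ℤ) else 0 with hχ
  set g : Base d → ℤ := fun u => |χ u - χ (u + ei d i)| with hg
  set W := A.image pj with hW
  set N := B.filter (fun u => g u = 1) with hN
  have hg01 : ∀ u, g u = 0 ∨ g u = 1 := by
    intro u
    rw [hg, hχ]
    by_cases h1 : u ∈ A <;> by_cases h2 : u + ei d i ∈ A <;> simp [h1, h2]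
  have hsum1 : (N.card : ℤ) ≤ ∑ u ∈ B, g u := by
    calc (N.card : ℤ) = ∑ u ∈ N, g u := by
          rw [Finset.sum_congr rfl (fun u hu => (Finset.mem_filter.mp hu).2),
            Finset.sum_const]
          simp [mul_comm]
          rfl
      _ ≤ ∑ u ∈ B, g u := by
          apply Finset.sum_le_sum_of_subset_of_nonneg (Finset.filter_subset _ _)
          intro u _ _
          rcases hg01 u with h | h <;> rw [h] <;> norm_num
  have hmain : 2 * W.card ≤ N.card := by
    set N' := N.filter (fun u => pj u ∈ W) with hN'
    have hfib : N'.card = ∑ w ∈ W, (N'.filter (fun u => pj u = w)).card :=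
      Finset.card_eq_sum_card_fiberwise fun x hx => (Finset.mem_filter.mp hx).2
    have htwo : ∀ w ∈ W, 2 ≤ (N'.filter (fun u => pj u = w)).card := by
      intro w hw
      obtain ⟨a, haA, hapj⟩ := Finset.mem_image.mp hw
      set Col := A.filter (fun u => pj u = w) with hCol
      have hColne : Col.Nonempty := ⟨a, Finset.mem_filter.mpr ⟨haA, hapj⟩⟩
      obtain ⟨um, humC, hmax⟩ := Col.exists_max_image (fun u => u i) hColne
      obtain ⟨un, hunC, hmin⟩ := Col.exists_min_image (fun u => u i) hColne
      have humA : um ∈ A := (Finset.mem_filter.mp humC).1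
      have humw : pj um = w := (Finset.mem_filter.mp humC).2
      have hunA : un ∈ A := (Finset.mem_filter.mp hunC).1
      have hunw : pj un = w := (Finset.mem_filter.mp hunC).2
      have hum_out : um + ei d i ∉ A := by
        intro hin
        have hmem : um + ei d i ∈ Col := Finset.mem_filter.mpr
          ⟨hin, by rw [hpj] at *; rw [pr_add_ei, humw]⟩
        have := hmax _ hmem
        simp [ei, Pi.add_apply] at this
      have hun_out : un - ei d i ∉ A := by
        intro hin
        have hmem : un - ei d i ∈ Col := Finset.mem_filter.mpr
          ⟨hin, by rw [hpj] at *; rw [pr_sub_ei, hunw]⟩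
        have := hmin _ hmem
        simp [ei, Pi.sub_apply] at this
      have hx2e : un - ei d i + ei d i = un := sub_add_cancel _ _
      have hx1N : um ∈ N'.filter (fun u => pj u = w) := by
        refine Finset.mem_filter.mpr ⟨Finset.mem_filter.mpr ⟨Finset.mem_filter.mpr ⟨hAB humA, ?_⟩, ?_⟩, humw⟩
        · rw [hg, hχ]; simp [humA, hum_out]
        · rw [humw]; exact hw
      have hx2w : pj (un - ei d i) = w := by rw [hpj, pr_sub_ei, ← hpj, hunw]
      have hx2N : un - ei d i ∈ N'.filter (fun u => pj u = w) := by
        refine Finset.mem_filter.mpr ⟨Finset.mem_filter.mpr ⟨Finset.mem_filter.mpr ⟨hnbr un hunA, ?_⟩, ?_⟩, hx2w⟩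
        · rw [hg, hχ]; simp [hun_out, hx2e, hunA]
        · rw [hx2w]; exact hw
      have hne : um ≠ un - ei d i := by
        intro h
        exact hun_out (h ▸ humA)
      exact Finset.one_lt_card.mpr ⟨um, hx1N, un - ei d i, hx2N, hne⟩
    calc 2 * W.card = ∑ w ∈ W, 2 := by rw [Finset.sum_const]; ring
      _ ≤ ∑ w ∈ W, (N'.filter (fun u => pj u = w)).card := Finset.sum_le_sum htwo
      _ = N'.card := hfib.symm
      _ ≤ N.card := Finset.card_le_card (Finset.filter_subset _ _)
  calc 2 * ((A.image pj).card : ℤ) ≤ (N.card : ℤ) := by exact_mod_cast hmain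
    _ ≤ ∑ u ∈ B, g u := hsum1

/-- superadditivity of concave power over finite sums -/
lemma rpow_sum_le {p : ℝ} (hp0 : 0 < p) (hp1 : p ≤ 1) (T : Finset ℤ) (g : ℤ → ℕ) :
    ((∑ t ∈ T, g t : ℕ) : ℝ) ^ p ≤ ∑ t ∈ T, ((g t : ℝ)) ^ p := by
  have key : ∀ (T : Finset ℤ) (f : ℤ → ℝ≥0), (∑ t ∈ T, f t) ^ p ≤ ∑ t ∈ T, (f t) ^ p := by
    intro T f
    induction T using Finset.induction with
    | empty => simp [NNReal.zero_rpow hp0.ne']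
    | @insert a T ha ih =>
      rw [Finset.sum_insert ha, Finset.sum_insert ha]
      exact (NNReal.rpow_add_le_add_rpow _ _ hp0.le hp1).trans (by gcongr)
  have h := key T (fun t => (g t : ℝ≥0))
  have := NNReal.coe_le_coe.mpr h
  push_cast [NNReal.coe_rpow] at this ⊢
  convert this using 2 <;> norm_num

lemma phi_inj : Function.Injective (fun p : Base d × Fin d => s(p.1, p.1 + ei d p.2)) := by
  rintro ⟨u, i⟩ ⟨v, j⟩ h
  simp only [Sym2.eq_iff] at h
  rcases h with ⟨h1, h2⟩ | ⟨h1, h2⟩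
  · subst h1
    have := congrFun h2 i
    simp only [Pi.add_apply, ei, if_pos rfl] at this
    have hij : i = j := by
      by_cases hij : i = j
      · exact hij
      · simp [Ne.symm hij] at this
        omega
    rw [hij]
  · exfalso
    have hv : v = u + ei d i := h2.symm
    rw [hv] at h1
    have := congrFun h1 i
    simp only [Pi.add_apply, ei, if_pos rfl] at this
    by_cases hij : i = j
    · subst hij; simp at this; omega
    · simp [Ne.symm hij] at this; omega

lemma pairAbsDiff_mk (τ : Base d → ℤ) (u v : Base d) :
    pairAbsDiff τ s(u, v) = |τ u - τ v| := rfl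

end DFAux

open DFAux

/-- **Functional isoperimetric inequality on `ℤ^d`.** For every shift
`τ : ℤ^d → ℤ`, `TV(τ) ≥ 2d (Σ_u |τ(u)|)^{1−1/d}`. -/
theorem functional_isoperimetric_inequality
    (d : ℕ) (hd : 2 ≤ d) (τ : Base d → ℤ) (hτ : IsShift τ) :
    (2 * (d : ℝ)) * (∑ᶠ u : Base d, (|τ u| : ℝ)) ^ (1 - 1 / (d : ℝ)) ≤ (TV τ : ℝ) := by
  classical
  set p : ℝ := 1 - 1 / (d : ℝ) with hp
  have hd0 : (0:ℝ) < d := by positivity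
  have hp0 : 0 < p := by
    rw [hp, sub_pos, div_lt_one hd0]
    exact_mod_cast lt_of_lt_of_le one_lt_two hd
  have hp1 : p ≤ 1 := by
    rw [hp]
    have : 0 ≤ 1 / (d:ℝ) := by positivity
    linarith
  set S : Finset (Base d) := hτ.toFinset with hS
  have hSmem : ∀ u, u ∈ S ↔ τ u ≠ 0 := fun u => hτ.mem_toFinset
  set M : ℤ := ∑ u ∈ S, |τ u| with hM
  have hM0 : 0 ≤ M := Finset.sum_nonneg fun u _ => abs_nonneg _
  have hMb : ∀ u, |τ u| ≤ M := by
    intro u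
    by_cases hu : u ∈ S
    · exact Finset.single_le_sum (fun v _ => abs_nonneg (τ v)) hu
    · have : τ u = 0 := by
        by_contra h
        exact hu ((hSmem u).mpr h)
      rw [this]; simpa using hM0
  set B : Finset (Base d) :=
    S.biUnion (fun u => Fintype.piFinset fun j => Finset.Icc (u j - 1) (u j + 1)) with hB
  have hballmem : ∀ v u : Base d, u ∈ S → (∀ j, |v j - u j| ≤ 1) → v ∈ B := by
    intro v u hu hvu
    rw [hB]
    refine Finset.mem_biUnion.mpr ⟨u, hu, ?_⟩
    rw [Fintype.mem_piFinset]
    intro j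
    rw [Finset.mem_Icc]
    have := abs_le.mp (hvu j)
    omega
  have hSB : S ⊆ B := by
    intro u hu
    exact hballmem u u hu (fun j => by simp)
  have hplus : ∀ u, τ u ≠ 0 → ∀ i, u + ei d i ∈ B := by
    intro u hu i
    refine hballmem _ u ((hSmem u).mpr hu) (fun j => ?_)
    simp only [Pi.add_apply, ei]
    split <;> simp
  have hminus : ∀ u, τ u ≠ 0 → ∀ i, u - ei d i ∈ B := by
    intro u hu i
    refine hballmem _ u ((hSmem u).mpr hu) (fun j => ?_)
    simp only [Pi.sub_apply, ei]
    split <;> simp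
  have hback : ∀ u : Base d, ∀ i, τ (u + ei d i) ≠ 0 → u ∈ B := by
    intro u i hu
    refine hballmem u (u + ei d i) ((hSmem _).mpr hu) (fun j => ?_)
    simp only [Pi.add_apply, ei]
    split <;> simp
  -- TV equals the directed sum
  have hTV : TV τ = ∑ q ∈ B ×ˢ (Finset.univ : Finset (Fin d)), |τ q.1 - τ (q.1 + ei d q.2)| := by
    unfold TV
    set φ : Base d × Fin d → Sym2 (Base d) := fun q => s(q.1, q.1 + ei d q.2) with hφ
    set Efin := (B ×ˢ (Finset.univ : Finset (Fin d))).image φ with hEfin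
    have hEedge : ∀ e ∈ Efin, IsBaseEdge e := by
      intro e he
      obtain ⟨q, _, rfl⟩ := Finset.mem_image.mp he
      exact ⟨q.1, q.1 + ei d q.2, baseAdj_add_ei q.1 q.2, rfl⟩
    have heq : {e : Sym2 (Base d) | IsBaseEdge e} ∩ Function.support (pairAbsDiff τ)
        = ↑Efin ∩ Function.support (pairAbsDiff τ) := by
      ext e
      simp only [Set.mem_inter_iff, Set.mem_setOf_eq, Function.mem_support, Finset.mem_coe]
      constructor
      · rintro ⟨⟨u, v, hadj, rfl⟩, hne⟩
        refine ⟨?_, hne⟩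
        rw [pairAbsDiff_mk] at hne
        have hne' : τ u ≠ 0 ∨ τ v ≠ 0 := by
          by_contra hc
          push_neg at hc
          rw [hc.1, hc.2] at hne
          simp at hne
        obtain ⟨i, hi | hi⟩ := adj_class hadj
        · subst hi
          refine Finset.mem_image.mpr ⟨(u, i), Finset.mem_product.mpr ⟨?_, Finset.mem_univ _⟩, rfl⟩
          rcases hne' with h | h
          · exact hSB ((hSmem u).mpr h)
          · exact hback u i h
        · subst hi
          refine Finset.mem_image.mpr ⟨(v, i), Finset.mem_product.mpr ⟨?_, Finset.mem_univ _⟩, ?_⟩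
          · rcases hne' with h | h
            · exact hback v i h
            · exact hSB ((hSmem v).mpr h)
          · exact Sym2.eq_swap
      · rintro ⟨he, hne⟩
        exact ⟨hEedge e he, hne⟩
    rw [finsum_mem_eq_sum_of_inter_support_eq (pairAbsDiff τ) heq]
    rw [Finset.sum_image (fun x _ y _ h => phi_inj h)]
    rfl
  -- level sets
  set A : ℤ → Finset (Base d) := fun t => S.filter (fun u => lvl (τ u) t ≠ lvl 0 t) with hA
  have hAmem : ∀ t (u : Base d), u ∈ A t ↔ lvl (τ u) t ≠ lvl 0 t := by
    intro t u
    rw [hA]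
    simp only [Finset.mem_filter]
    constructor
    · exact And.right
    · intro h
      refine ⟨(hSmem u).mpr ?_, h⟩
      intro h0
      rw [h0] at h
      exact h rfl
  have hAS : ∀ t, A t ⊆ S := fun t => Finset.filter_subset _ _
  -- coarea for the directed sum
  have hDTV : ∑ q ∈ B ×ˢ (Finset.univ : Finset (Fin d)), |τ q.1 - τ (q.1 + ei d q.2)|
      = ∑ t ∈ Finset.Ico (-M) M, ∑ q ∈ B ×ˢ (Finset.univ : Finset (Fin d)),
          |lvl (τ q.1) t - lvl (τ (q.1 + ei d q.2)) t| := by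
    rw [Finset.sum_comm]
    exact Finset.sum_congr rfl fun q _ => (coarea_pair (hMb _) (hMb _)).symm
  -- per-level isoperimetric bound
  have hbt : ∀ t : ℤ, 2 * (d:ℝ) * (((A t).card : ℝ)) ^ p ≤
      ((∑ q ∈ B ×ˢ (Finset.univ : Finset (Fin d)),
        |lvl (τ q.1) t - lvl (τ (q.1 + ei d q.2)) t| : ℤ) : ℝ) := by
    intro t
    have hlvlχ : ∀ u v : Base d, |lvl (τ u) t - lvl (τ v) t| =
        |(if u ∈ A t then (1:ℤ) else 0) - (if v ∈ A t then (1:ℤ) else 0)| := by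
      intro u v
      have h1 : (if u ∈ A t then (1:ℤ) else 0) = (if lvl (τ u) t ≠ lvl 0 t then 1 else 0) := by
        simp only [hAmem]
      have h2 : (if v ∈ A t then (1:ℤ) else 0) = (if lvl (τ v) t ≠ lvl 0 t then 1 else 0) := by
        simp only [hAmem]
      rw [h1, h2]
      rcases lvl_mem (τ u) t with ha | ha <;> rcases lvl_mem (τ v) t with hb | hb <;>
        rcases lvl_mem 0 t with h0 | h0 <;> rw [ha, hb, h0] <;> norm_num
    have hdir : ∀ i : Fin d, 2 * (((A t).image (pr (Finset.univ.erase i))).card : ℤ) ≤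
        ∑ u ∈ B, |(if u ∈ A t then (1:ℤ) else 0) - (if u + ei d i ∈ A t then (1:ℤ) else 0)| := by
      intro i
      refine dir_bound i (A t) B (fun u hu => hSB (hAS t hu)) (fun u hu => ?_)
      exact hminus u ((hSmem u).mp (hAS t hu)) i
    have hsum_eq : ∑ q ∈ B ×ˢ (Finset.univ : Finset (Fin d)),
        |lvl (τ q.1) t - lvl (τ (q.1 + ei d q.2)) t|
        = ∑ i : Fin d, ∑ u ∈ B,
          |(if u ∈ A t then (1:ℤ) else 0) - (if u + ei d i ∈ A t then (1:ℤ) else 0)| := by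
      rw [Finset.sum_product]
      rw [Finset.sum_comm]
      exact Finset.sum_congr rfl fun i _ => Finset.sum_congr rfl fun u _ => hlvlχ u _
    have hZ : ∑ i : Fin d, 2 * (((A t).image (pr (Finset.univ.erase i))).card : ℤ) ≤
        ∑ q ∈ B ×ˢ (Finset.univ : Finset (Fin d)),
          |lvl (τ q.1) t - lvl (τ (q.1 + ei d q.2)) t| := by
      rw [hsum_eq]
      exact Finset.sum_le_sum fun i _ => hdir i
    have hiso := iso hd (A t)
    calc 2 * (d:ℝ) * (((A t).card : ℝ)) ^ p
        ≤ ∑ i : Fin d, 2 * (((A t).image (pr (Finset.univ.erase i))).card : ℝ) := hiso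
      _ = ((∑ i : Fin d, 2 * (((A t).image (pr (Finset.univ.erase i))).card : ℤ) : ℤ) : ℝ) := by
          push_cast; ring
      _ ≤ _ := by exact_mod_cast hZ
  -- coarea for the mass
  have hmass : ∑ᶠ u : Base d, (|τ u| : ℝ) = ((M : ℤ) : ℝ) := by
    rw [hM]
    have hsupp : (Function.support fun u : Base d => (|τ u| : ℝ)) ⊆ ↑S := by
      intro u hu
      simp only [Function.mem_support] at hu
      refine (hSmem u).mpr fun h0 => hu ?_
      rw [h0]; simp
    rw [finsum_eq_sum_of_support_subset _ hsupp]
    push_cast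
    rfl
  have hcoarea2 : M = ∑ t ∈ Finset.Ico (-M) M, ((A t).card : ℤ) := by
    have h0M : |(0:ℤ)| ≤ M := by simpa using hM0
    calc M = ∑ u ∈ S, |τ u| := hM
      _ = ∑ u ∈ S, ∑ t ∈ Finset.Ico (-M) M, |lvl (τ u) t - lvl 0 t| := by
          refine Finset.sum_congr rfl fun u _ => ?_
          rw [coarea_pair (hMb u) h0M]
          simp
      _ = ∑ t ∈ Finset.Ico (-M) M, ∑ u ∈ S, |lvl (τ u) t - lvl 0 t| := Finset.sum_comm
      _ = ∑ t ∈ Finset.Ico (-M) M, ((A t).card : ℤ) := by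
          refine Finset.sum_congr rfl fun t _ => ?_
          have hpt : ∀ u, |lvl (τ u) t - lvl 0 t| =
              if lvl (τ u) t ≠ lvl 0 t then (1:ℤ) else 0 := by
            intro u
            rw [abs_lvl_sub]
            by_cases h : lvl (τ u) t = lvl 0 t <;> simp [h]
          rw [Finset.sum_congr rfl fun u _ => hpt u, Finset.sum_boole]
  -- final superadditivity step
  have hsuper : (((M : ℤ)) : ℝ) ^ p ≤ ∑ t ∈ Finset.Ico (-M) M, (((A t).card : ℝ)) ^ p := by
    have : (((∑ t ∈ Finset.Ico (-M) M, (A t).card : ℕ)) : ℝ) ^ p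
        ≤ ∑ t ∈ Finset.Ico (-M) M, (((A t).card : ℝ)) ^ p :=
      rpow_sum_le hp0 hp1 _ _
    have hMeq : ((M : ℤ) : ℝ) = ((∑ t ∈ Finset.Ico (-M) M, (A t).card : ℕ) : ℝ) := by
      have h := congrArg (fun z : ℤ => (z : ℝ)) hcoarea2
      push_cast at h ⊢
      exact h
    rw [hMeq]
    exact this
  -- assemble
  rw [hmass, hTV, hDTV]
  calc 2 * (d:ℝ) * ((M : ℤ) : ℝ) ^ p
      ≤ 2 * (d:ℝ) * ∑ t ∈ Finset.Ico (-M) M, (((A t).card : ℝ)) ^ p := by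
        have h2d : (0:ℝ) ≤ 2 * d := by positivity
        exact mul_le_mul_of_nonneg_left hsuper h2d
    _ = ∑ t ∈ Finset.Ico (-M) M, 2 * (d:ℝ) * (((A t).card : ℝ)) ^ p := by
        rw [Finset.mul_sum]
    _ ≤ ∑ t ∈ Finset.Ico (-M) M, ((∑ q ∈ B ×ˢ (Finset.univ : Finset (Fin d)),
          |lvl (τ q.1) t - lvl (τ (q.1 + ei d q.2)) t| : ℤ) : ℝ) :=
        Finset.sum_le_sum fun t _ => hbt t
    _ = _ := by push_cast; rfl
end
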